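/- arXiv:2308.01397 — 7 statements merged into one kernel-verified Lean document; each statement's English description precedes it below -/
import Mathlib

section
/- For an n×n Hermitian matrix B (n ≥ 1, B ≠ 0), the rank of B equals the maximum cardinality |α| over all subsets α ⊆ {1,…,n} such that the principal submatrix B[α] (rows and columns indexed by α) has nonzero determinant. -/
open ComplexOrder

/-- The principal minor of `B` indexed by the subset `α`. -/
noncomputable def pminor {m : Type*} [DecidableEq m] [Fintype m] {R : Type*} [CommRing R]
    (B : Matrix m m R) (α : Finset m) : R :=
  (B.submatrix (fun i : α => (i : m)) (fun i : α => (i : m))).det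

open Matrix

private lemma aux_submatrix_rank_le {m l o R : Type*} [Fintype m] [Fintype l] [Fintype o]
    [DecidableEq m] [Field R] (A : Matrix m m R) (f : l → m) (g : o → m) :
    (A.submatrix f g).rank ≤ A.rank := by
  classical
  have h : A.submatrix f g =
      (1 : Matrix m m R).submatrix f _root_.id * A * (1 : Matrix m m R).submatrix _root_.id g := by
    ext i j
    simp [Matrix.mul_apply, Matrix.one_apply, Finset.sum_ite_eq, Finset.sum_ite_eq']
  rw [h]
  exact le_trans (Matrix.rank_mul_le_left _ _) (Matrix.rank_mul_le_right _ _)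

private lemma aux_herm_entry {n : ℕ} (B : Matrix (Fin n) (Fin n) ℂ) (hB : B.IsHermitian)
    (i j : Fin n) :
    B i j = ∑ k : {k : Fin n // hB.eigenvalues k ≠ 0},
      (hB.eigenvectorUnitary : Matrix (Fin n) (Fin n) ℂ) i k * (hB.eigenvalues k : ℂ) *
        (starRingEnd ℂ) ((hB.eigenvectorUnitary : Matrix (Fin n) (Fin n) ℂ) j k) := by
  classical
  set U : Matrix (Fin n) (Fin n) ℂ := ↑hB.eigenvectorUnitary with hU
  have h1 : B i j = ∑ k : Fin n, U i k * (hB.eigenvalues k : ℂ) * (starRingEnd ℂ) (U j k) := by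
    conv_lhs => rw [hB.spectral_theorem, Unitary.conjStarAlgAut_apply, Matrix.star_eq_conjTranspose, Matrix.mul_assoc]
    rw [Matrix.mul_apply]
    refine Finset.sum_congr rfl fun k _ => ?_
    rw [Matrix.diagonal_mul, Matrix.conjTranspose_apply]
    simp only [RCLike.ofReal_alg, Complex.coe_algebraMap, Complex.real_smul,
      Function.comp_apply, starRingEnd_apply]
    ring
  have h3 : (∑ k : Fin n, U i k * (hB.eigenvalues k : ℂ) * (starRingEnd ℂ) (U j k)) =
      ∑ k ∈ Finset.univ.filter (fun k => hB.eigenvalues k ≠ 0),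
        U i k * (hB.eigenvalues k : ℂ) * (starRingEnd ℂ) (U j k) := by
    refine (Finset.sum_subset (Finset.filter_subset _ _) fun x _ hx => ?_).symm
    simp only [Finset.mem_filter, Finset.mem_univ, true_and, not_not] at hx
    simp [hx]
  have h2 := Finset.sum_subtype (p := fun k => hB.eigenvalues k ≠ 0) (F := inferInstance)
    (Finset.univ.filter fun k => hB.eigenvalues k ≠ 0)
    (fun x => by simp) (fun k => U i k * (hB.eigenvalues k : ℂ) * (starRingEnd ℂ) (U j k))
  rw [h1, h3, h2]

/-- The rank of a nonzero Hermitian matrix equals the maximum order of a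
nonsingular principal submatrix. -/
theorem rank_eq_sSup_card_pminor_ne_zero {n : ℕ} (hn : 1 ≤ n)
    (B : Matrix (Fin n) (Fin n) ℂ) (hB : B.IsHermitian) (hB0 : B ≠ 0) :
    B.rank = sSup {k : ℕ | ∃ α : Finset (Fin n), α.card = k ∧ pminor B α ≠ 0} := by
  classical
  set d := hB.eigenvalues with hd
  set U : Matrix (Fin n) (Fin n) ℂ := ↑hB.eigenvectorUnitary with hU
  set r := B.rank with hr
  have hrK : r = Fintype.card {k : Fin n // d k ≠ 0} := hB.rank_eq_card_non_zero_eigs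
  set V : Matrix (Fin n) {k : Fin n // d k ≠ 0} ℂ := Matrix.of (fun i k => U i k.val) with hV
  set D : Matrix {k : Fin n // d k ≠ 0} {k : Fin n // d k ≠ 0} ℂ :=
    Matrix.diagonal (fun k => (d k.val : ℂ)) with hD
  have hfact : B = V * D * Vᴴ := by
    ext i j
    rw [aux_herm_entry B hB i j]
    show _ = (V * D * Vᴴ) i j
    rw [Matrix.mul_assoc, Matrix.mul_apply]
    refine Finset.sum_congr rfl fun k _ => ?_
    rw [hD, Matrix.diagonal_mul, Matrix.conjTranspose_apply]
    simp only [Matrix.of_apply, starRingEnd_apply, hV]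
    ring
  -- rank of V is r
  have hVrank : V.rank = r := by
    refine le_antisymm (le_trans V.rank_le_card_width (le_of_eq hrK.symm)) ?_
    have : B = V * (D * Vᴴ) := by rw [hfact, Matrix.mul_assoc]
    calc r = B.rank := hr
    _ = (V * (D * Vᴴ)).rank := by rw [← this]
    _ ≤ V.rank := Matrix.rank_mul_le_left _ _
  -- choose linearly independent rows
  have hspan : Module.finrank ℂ (Submodule.span ℂ (Set.range V)) = r := by
    rw [← hVrank, Matrix.rank_eq_finrank_span_row]
    rfl
  obtain ⟨b, hb_sub, hb_span, hb_li⟩ := exists_linearIndependent ℂ (Set.range V)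
  have hb_fin : b.Finite := (Set.finite_range V).subset hb_sub
  haveI : Fintype b := hb_fin.fintype
  have hb_card : b.toFinset.card = r := by
    rw [← finrank_span_set_eq_card hb_li, hb_span, hspan]
  choose idx hidx using fun v : b => (hb_sub v.2 : v.1 ∈ Set.range V)
  have hidx_inj : Function.Injective idx := by
    intro v w h
    apply Subtype.ext
    rw [← hidx v, ← hidx w, h]
  set α : Finset (Fin n) := Finset.univ.image idx with hα
  have hα_card : α.card = r := by
    rw [hα, Finset.card_image_of_injective _ hidx_inj, Finset.card_univ, ← hb_card,
      Set.toFinset_card]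
  -- the rows of V indexed by α are linearly independent
  have hmem : ∀ i : α, V (i : Fin n) ∈ b := by
    rintro ⟨i, hi⟩
    obtain ⟨v, _, hv⟩ := Finset.mem_image.mp hi
    simpa [← hv, hidx v] using v.2
  have hli : LinearIndependent ℂ (fun i : α => V (i : Fin n)) := by
    have hcomp : (fun i : α => V (i : Fin n)) =
        (Subtype.val : b → _) ∘ (fun i : α => (⟨V (i : Fin n), hmem i⟩ : b)) := rfl
    rw [hcomp]
    refine hb_li.comp _ ?_
    intro i j hij
    have h1 : V (i : Fin n) = V (j : Fin n) := by simpa using congrArg Subtype.val hij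
    obtain ⟨i, hi⟩ := i
    obtain ⟨j, hj⟩ := j
    obtain ⟨v, _, hv⟩ := Finset.mem_image.mp hi
    obtain ⟨w, _, hw⟩ := Finset.mem_image.mp hj
    have : v = w := by
      apply Subtype.ext
      rw [← hidx v, ← hidx w, hv, hw]
      exact h1
    simp only [Subtype.mk.injEq]
    rw [← hv, ← hw, this]
  -- equivalence between α and the nonzero eigenvalue index set
  have hcards : Fintype.card α = Fintype.card {k : Fin n // d k ≠ 0} := by
    rw [Fintype.card_coe, hα_card, hrK]
  let f : α ≃ {k : Fin n // d k ≠ 0} := Fintype.equivOfCardEq hcards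
  set W : Matrix α α ℂ := Matrix.of (fun i j => V (i : Fin n) (f j)) with hW
  have hWrows : LinearIndependent ℂ (fun i : α => W i) := by
    have h := hli.map' (LinearEquiv.funCongrLeft ℂ ℂ f).toLinearMap
      (LinearEquiv.funCongrLeft ℂ ℂ f).ker
    have he : (fun i : α => W i) =
        (⇑(LinearEquiv.funCongrLeft ℂ ℂ f).toLinearMap ∘ fun i : α => V (i : Fin n)) := by
      funext i j
      rfl
    rw [he]
    exact h
  have hWdet : W.det ≠ 0 := by
    have := (Matrix.isUnit_iff_isUnit_det W).mp (Matrix.linearIndependent_rows_iff_isUnit.mp hWrows)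
    exact this.ne_zero
  -- principal submatrix factorization
  have hsub : B.submatrix (fun i : α => (i : Fin n)) (fun i : α => (i : Fin n)) =
      W * Matrix.diagonal (fun k : α => (d (f k) : ℂ)) * Wᴴ := by
    ext i j
    simp only [Matrix.submatrix_apply]
    rw [aux_herm_entry B hB]
    rw [← Equiv.sum_comp f
      (fun k => U (i : Fin n) k * (d k : ℂ) * (starRingEnd ℂ) (U (j : Fin n) k))]
    show _ = (W * Matrix.diagonal (fun k : α => (d (f k) : ℂ)) * Wᴴ) i j
    rw [Matrix.mul_assoc, Matrix.mul_apply]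
    refine Finset.sum_congr rfl fun k _ => ?_
    rw [Matrix.diagonal_mul, Matrix.conjTranspose_apply]
    simp only [Matrix.of_apply, starRingEnd_apply, hW, hV]
    ring
  have hpm : pminor B α ≠ 0 := by
    unfold pminor
    rw [hsub, Matrix.det_mul, Matrix.det_mul, Matrix.det_diagonal, Matrix.det_conjTranspose]
    refine mul_ne_zero (mul_ne_zero hWdet ?_) ?_
    · exact Finset.prod_ne_zero_iff.mpr fun k _ => Complex.ofReal_ne_zero.mpr (f k).2
    · simpa using star_ne_zero.mpr hWdet
  -- upper bound
  have hub : ∀ k ∈ {k : ℕ | ∃ α : Finset (Fin n), α.card = k ∧ pminor B α ≠ 0}, k ≤ r := by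
    rintro k ⟨β, hβcard, hβ⟩
    have hUnit : IsUnit (B.submatrix (fun i : β => (i : Fin n)) (fun i : β => (i : Fin n))) :=
      (Matrix.isUnit_iff_isUnit_det _).mpr (isUnit_iff_ne_zero.mpr hβ)
    have h1 : (B.submatrix (fun i : β => (i : Fin n)) (fun i : β => (i : Fin n))).rank = k := by
      rw [Matrix.rank_of_isUnit _ hUnit, Fintype.card_coe, hβcard]
    rw [← h1]
    exact aux_submatrix_rank_le B _ _
  have hgreat : IsGreatest {k : ℕ | ∃ α : Finset (Fin n), α.card = k ∧ pminor B α ≠ 0} r :=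
    ⟨⟨α, hα_card, hpm⟩, hub⟩
  exact hgreat.csSup_eq.symm
end

section
/- Let B be an n×n complex Hermitian matrix and suppose every principal minor of B of order k and every principal minor of order k+1 is zero, for some k with 1 ≤ k ≤ n−1. Then for every j with k ≤ j ≤ n, every principal minor of B of order j is zero. -/
open ComplexOrder

open Finset Matrix in
lemma det_piecewise_single {m : Type*} [DecidableEq m] [Fintype m] {R : Type*} [CommRing R]
    (C : Matrix m m R) (s : Finset m) :
    (Matrix.of (s.piecewise (fun i => Pi.single i (1:R)) (fun i => C i))).det
      = pminor C sᶜ := by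
  classical
  set E : Matrix m m R := Matrix.of (s.piecewise (fun i => Pi.single i (1:R)) (fun i => C i))
    with hEdef
  let e : {i // i ∈ sᶜ} ⊕ {i // ¬ i ∈ sᶜ} ≃ m := Equiv.sumCompl _
  have hmem : ∀ (i : {i // i ∈ sᶜ}), (i:m) ∉ s := fun i => Finset.mem_compl.mp i.2
  have hmem' : ∀ (i : {i // ¬ i ∈ sᶜ}), (i:m) ∈ s := fun i => Finset.notMem_compl.mp i.2
  rw [← Matrix.det_submatrix_equiv_self e E]
  have hE : E.submatrix e e = Matrix.fromBlocks
      (C.submatrix (fun i : {i // i ∈ sᶜ} => (i : m)) (fun i : {i // i ∈ sᶜ} => (i : m)))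
      (C.submatrix (fun i : {i // i ∈ sᶜ} => (i : m)) (fun i : {i // ¬ i ∈ sᶜ} => (i : m)))
      0 1 := by
    ext (i | i) (j | j)
    · show E (i : m) (j : m) = C (i : m) (j : m)
      rw [hEdef, Matrix.of_apply, Finset.piecewise_eq_of_notMem _ _ _ (hmem i)]
    · show E (i : m) (j : m) = C (i : m) (j : m)
      rw [hEdef, Matrix.of_apply, Finset.piecewise_eq_of_notMem _ _ _ (hmem i)]
    · show E (i : m) (j : m) = 0
      rw [hEdef, Matrix.of_apply, Finset.piecewise_eq_of_mem _ _ _ (hmem' i)]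
      have : (j : m) ≠ (i : m) := fun h => i.2 (h ▸ j.2)
      simp [Pi.single_apply, this]
    · show E (i : m) (j : m) = (1 : Matrix _ _ R) i j
      rw [hEdef, Matrix.of_apply, Finset.piecewise_eq_of_mem _ _ _ (hmem' i)]
      simp [Pi.single_apply, Matrix.one_apply, Subtype.ext_iff, eq_comm]
  rw [hE, Matrix.det_fromBlocks_zero₂₁, Matrix.det_one, mul_one]
  rfl

open Finset Matrix in
lemma det_add_smul_one {m : Type*} [DecidableEq m] [Fintype m] {R : Type*} [CommRing R]
    (C : Matrix m m R) (x : R) :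
    (C + x • (1 : Matrix m m R)).det = ∑ s : Finset m, x ^ s.card * pminor C sᶜ := by
  classical
  have h1 : (fun i => (x • (1 : Matrix m m R)) i) = fun i => x • (Pi.single i (1:R) : m → R) := by
    funext i j
    simp [Matrix.one_apply, Pi.single_apply, eq_comm]
  have key : (C + x • (1 : Matrix m m R)).det
      = (Matrix.detRowAlternating ((fun i => (x • (1 : Matrix m m R)) i) + fun i => C i) : R) := by
    congr 1
    ext i j
    simp [Matrix.one_apply, add_comm]
  have hadd := ((Matrix.detRowAlternating : (m → R) [⋀^m]→ₗ[R] R).toMultilinearMap).map_add_univ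
    (fun i => (x • (1 : Matrix m m R)) i) (fun i => C i)
  rw [key]
  refine hadd.trans (Finset.sum_congr rfl fun s _ => ?_)
  have h2 : s.piecewise (fun i => (x • (1 : Matrix m m R)) i) (fun i => C i)
      = s.piecewise (fun i => x • (s.piecewise (fun i => Pi.single i (1:R)) (fun i => C i)) i)
          (s.piecewise (fun i => Pi.single i (1:R)) (fun i => C i)) := by
    funext i
    by_cases hi : i ∈ s
    · rw [Finset.piecewise_eq_of_mem _ _ _ hi, Finset.piecewise_eq_of_mem _ _ _ hi,
        Finset.piecewise_eq_of_mem _ _ _ hi]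
      exact congrFun h1 i
    · rw [Finset.piecewise_eq_of_notMem _ _ _ hi, Finset.piecewise_eq_of_notMem _ _ _ hi,
        Finset.piecewise_eq_of_notMem _ _ _ hi]
  rw [h2, MultilinearMap.map_piecewise_smul]
  rw [Finset.prod_const, smul_eq_mul]
  congr 1
  exact det_piecewise_single C s

open Finset in
lemma sq_sum_eq {ι : Type*} [DecidableEq ι] (s : Finset ι) (μ : ι → ℝ) :
    (∑ i ∈ s, μ i)^2 = ∑ i ∈ s, (μ i)^2 + 2 * ∑ t ∈ s.powersetCard 2, ∏ i ∈ t, μ i := by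
  classical
  induction s using Finset.induction_on with
  | empty =>
    rw [Finset.powersetCard_eq_empty.mpr (by simp)]
    simp
  | @insert a s ha ih =>
    rw [Finset.sum_insert ha, add_sq, ih, Finset.sum_insert ha,
      Finset.powersetCard_succ_insert ha, Finset.sum_union, Finset.sum_image, mul_add]
    · have h1 : ∑ t ∈ s.powersetCard 1, ∏ i ∈ insert a t, μ i = μ a * ∑ i ∈ s, μ i := by
        rw [Finset.powersetCard_one, Finset.sum_map, Finset.mul_sum]
        refine Finset.sum_congr rfl fun i hi => ?_
        have hai : a ∉ ({i} : Finset ι) := by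
          simp only [Finset.mem_singleton]
          rintro rfl; exact ha hi
        simp [Finset.prod_insert hai]
      rw [h1]; ring
    · intro t ht u hu htu
      have hta : a ∉ t := fun h => ha ((Finset.mem_powersetCard.mp ht).1 h)
      have hua : a ∉ u := fun h => ha ((Finset.mem_powersetCard.mp hu).1 h)
      rw [← Finset.erase_insert hta, ← Finset.erase_insert hua, htu]
    · refine Finset.disjoint_left.mpr fun t ht ht' => ?_
      obtain ⟨u, hu, rfl⟩ := Finset.mem_image.mp ht'
      exact ha ((Finset.mem_powersetCard.mp ht).1 (Finset.mem_insert_self a u))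

open Finset in
lemma real_aux {N : ℕ} (hN : 2 ≤ N) (lam : Fin N → ℝ)
    (h1 : ∑ t ∈ (Finset.univ : Finset (Fin N)).powersetCard (N-1), ∏ i ∈ t, lam i = 0)
    (h2 : ∑ t ∈ (Finset.univ : Finset (Fin N)).powersetCard (N-2), ∏ i ∈ t, lam i = 0) :
    ∏ i, lam i = 0 := by
  classical
  by_contra hne
  have hlam : ∀ i, lam i ≠ 0 := fun i hi =>
    hne (Finset.prod_eq_zero (Finset.mem_univ i) hi)
  set μ : Fin N → ℝ := fun i => (lam i)⁻¹ with hμ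
  have key : ∀ r : ℕ, r ≤ N →
      ∑ t ∈ (Finset.univ : Finset (Fin N)).powersetCard (N - r), ∏ i ∈ t, lam i
        = (∏ i, lam i) * ∑ t ∈ (Finset.univ : Finset (Fin N)).powersetCard r, ∏ i ∈ t, μ i := by
    intro r hr
    rw [Finset.mul_sum]
    refine Finset.sum_nbij' (fun t => tᶜ) (fun t => tᶜ) ?_ ?_ ?_ ?_ ?_
    · intro t ht
      rw [Finset.mem_powersetCard] at ht ⊢
      refine ⟨Finset.subset_univ _, ?_⟩
      rw [Finset.card_compl, ht.2, Fintype.card_fin]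
      omega
    · intro t ht
      rw [Finset.mem_powersetCard] at ht ⊢
      refine ⟨Finset.subset_univ _, ?_⟩
      rw [Finset.card_compl, ht.2, Fintype.card_fin]
    · intro t _; simp
    · intro t _; simp
    · intro t ht
      have hc : ∏ i ∈ tᶜ, lam i ≠ 0 := Finset.prod_ne_zero_iff.mpr fun i _ => hlam i
      have : ∏ i ∈ tᶜ, μ i = (∏ i ∈ tᶜ, lam i)⁻¹ := by
        rw [hμ, Finset.prod_inv_distrib]
      rw [this, ← Finset.prod_mul_prod_compl t lam, mul_assoc, mul_inv_cancel₀ hc, mul_one]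
  have e1 : ∑ i, μ i = 0 := by
    have h0 := (key 1 (by omega)).symm.trans h1
    have := (mul_eq_zero.mp h0).resolve_left hne
    rw [Finset.powersetCard_one, Finset.sum_map] at this
    simpa using this
  have e2 : ∑ t ∈ (Finset.univ : Finset (Fin N)).powersetCard 2, ∏ i ∈ t, μ i = 0 := by
    have h0 := (key 2 hN).symm.trans h2
    exact (mul_eq_zero.mp h0).resolve_left hne
  have hsq : ∑ i, (μ i)^2 = 0 := by
    have := sq_sum_eq (Finset.univ : Finset (Fin N)) μ
    rw [e1, e2] at this
    simpa using this.symm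
  have h0 : ∀ i ∈ (Finset.univ : Finset (Fin N)), (μ i)^2 = 0 :=
    (Finset.sum_eq_zero_iff_of_nonneg (fun i _ => sq_nonneg _)).mp hsq
  set i0 : Fin N := ⟨0, by omega⟩
  have hi0 : μ i0 = 0 := pow_eq_zero_iff (two_ne_zero) |>.mp (h0 i0 (Finset.mem_univ _))
  exact hlam i0 (inv_eq_zero.mp hi0)

open Polynomial Matrix in
lemma det_map_add_X_smul_one {N : ℕ} (C : Matrix (Fin N) (Fin N) ℂ) (hC : C.IsHermitian) :
    (C.map (Polynomial.C : ℂ → ℂ[X]) + (X : ℂ[X]) • 1).det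
      = ∏ i, ((X : ℂ[X]) + Polynomial.C ((hC.eigenvalues i : ℝ) : ℂ)) := by
  classical
  set U : Matrix (Fin N) (Fin N) ℂ := (hC.eigenvectorUnitary : Matrix (Fin N) (Fin N) ℂ) with hUdef
  have hmem := hC.eigenvectorUnitary.2
  rw [Matrix.mem_unitaryGroup_iff'] at hmem  -- star U * U = 1 ?
  have hmem' := hC.eigenvectorUnitary.2
  rw [Matrix.mem_unitaryGroup_iff] at hmem'  -- U * star U = 1 ?
  set d : Fin N → ℂ := fun i => ((hC.eigenvalues i : ℝ) : ℂ) with hd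
  have hspec : C = U * Matrix.diagonal d * star U := by
    have := hC.spectral_theorem
    rw [Unitary.conjStarAlgAut_apply] at this
    exact this
  set f : ℂ →+* ℂ[X] := (Polynomial.C : ℂ →+* ℂ[X])
  have key : C.map f + (X : ℂ[X]) • 1
      = U.map f * (Matrix.diagonal (fun i => f (d i)) + (X : ℂ[X]) • 1) * (star U).map f := by
    rw [mul_add, add_mul]
    congr 1
    · rw [hspec]
      rw [Matrix.map_mul, Matrix.map_mul, Matrix.diagonal_map (map_zero f)]
    · rw [Matrix.mul_smul, Matrix.mul_one, Matrix.smul_mul, ← Matrix.map_mul]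
      rw [show U * star U = 1 from hmem', Matrix.map_one f (map_zero f) (map_one f)]
  rw [key, Matrix.det_mul, Matrix.det_mul, mul_comm, ← mul_assoc, ← Matrix.det_mul, ← Matrix.map_mul]
  rw [show (star U) * U = 1 from hmem, Matrix.map_one f (map_zero f) (map_one f), Matrix.det_one,
    one_mul]
  rw [Matrix.smul_one_eq_diagonal, Matrix.diagonal_add, Matrix.det_diagonal]
  exact Finset.prod_congr rfl fun i _ => by rw [add_comm]

open Finset Matrix in
lemma det_submatrix_eq_pminor {m : Type*} [DecidableEq m] [Fintype m] {R : Type*} [CommRing R]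
    {β : Type*} [Fintype β] [DecidableEq β]
    (B : Matrix m m R) (f : β → m) (hf : Function.Injective f) :
    (B.submatrix f f).det = pminor B (Finset.univ.image f) := by
  classical
  set t : Finset m := Finset.univ.image f with ht
  let e : β ≃ {x // x ∈ t} :=
    Equiv.ofBijective (fun b => ⟨f b, Finset.mem_image_of_mem f (Finset.mem_univ b)⟩)
      ⟨fun a b h => hf (congrArg Subtype.val h), by
        rintro ⟨x, hx⟩
        obtain ⟨b, -, rfl⟩ := Finset.mem_image.mp hx
        exact ⟨b, rfl⟩⟩
  have : B.submatrix f f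
      = (B.submatrix (fun i : t => (i : m)) (fun i : t => (i : m))).submatrix e e := by
    ext i j
    rfl
  rw [this, Matrix.det_submatrix_equiv_self]
  rfl

open Finset Matrix in
lemma pminor_submatrix {m : Type*} [DecidableEq m] [Fintype m] {R : Type*} [CommRing R]
    {β : Type*} [Fintype β] [DecidableEq β]
    (B : Matrix m m R) (g : β → m) (hg : Function.Injective g) (t : Finset β) :
    pminor (B.submatrix g g) t = pminor B (t.image g) := by
  classical
  have h1 : pminor (B.submatrix g g) t
      = (B.submatrix (fun i : t => g i) (fun i : t => g i)).det := by
    rfl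
  rw [h1, det_submatrix_eq_pminor B _ (fun a b h => Subtype.ext (hg h) : Function.Injective
    (fun i : t => g i))]
  congr 1
  ext x
  simp [Finset.mem_image]

open Polynomial Finset Matrix in
lemma coeff_det_map {m : Type*} [DecidableEq m] [Fintype m] (C : Matrix m m ℂ) (r : ℕ) :
    ((C.map (Polynomial.C : ℂ → ℂ[X]) + (X : ℂ[X]) • 1).det).coeff r
      = ∑ s ∈ (Finset.univ : Finset m).powersetCard r, pminor C sᶜ := by
  classical
  rw [det_add_smul_one]
  have hp : ∀ s : Finset m, pminor (C.map (Polynomial.C : ℂ → ℂ[X])) sᶜ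
      = Polynomial.C (pminor C sᶜ) := by
    intro s
    unfold pminor
    rw [show (C.map (Polynomial.C : ℂ → ℂ[X])).submatrix
        (fun i : (sᶜ : Finset m) => (i : m)) (fun i : (sᶜ : Finset m) => (i : m))
      = ((C.submatrix (fun i : (sᶜ : Finset m) => (i : m))
          (fun i : (sᶜ : Finset m) => (i : m))).map (Polynomial.C : ℂ → ℂ[X])) from rfl]
    exact (RingHom.map_det (Polynomial.C : ℂ →+* ℂ[X]) _).symm
  rw [Polynomial.finset_sum_coeff]
  have : ∀ s : Finset m, ((X : ℂ[X]) ^ s.card * pminor (C.map (Polynomial.C : ℂ → ℂ[X])) sᶜ).coeff r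
      = if s.card = r then pminor C sᶜ else 0 := by
    intro s
    rw [hp, mul_comm, Polynomial.coeff_C_mul, Polynomial.coeff_X_pow, mul_ite, mul_one, mul_zero]
    exact if_congr eq_comm rfl rfl
  rw [Finset.sum_congr rfl fun s _ => this s, Finset.powersetCard_eq_filter,
    Finset.powerset_univ, ← Finset.sum_filter]

open Polynomial Finset Matrix

/-- The NN theorem: if all principal minors of orders `k` and `k+1` of a Hermitian matrix
vanish, then so do all principal minors of every order `j ≥ k`. -/
theorem pminor_eq_zero_of_NN {n : ℕ} (B : Matrix (Fin n) (Fin n) ℂ) (hB : B.IsHermitian)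
    (k : ℕ) (hk1 : 1 ≤ k) (hkn : k ≤ n - 1)
    (hk : ∀ α : Finset (Fin n), α.card = k → pminor B α = 0)
    (hk1' : ∀ α : Finset (Fin n), α.card = k + 1 → pminor B α = 0) :
    ∀ j, k ≤ j → j ≤ n → ∀ α : Finset (Fin n), α.card = j → pminor B α = 0 := by
  classical
  intro j
  induction j using Nat.strong_induction_on with
  | _ j ih =>
    intro hkj hjn α hα
    by_cases hj1 : j = k
    · exact hk α (by rw [hα, hj1])
    by_cases hj2 : j = k + 1
    · exact hk1' α (by rw [hα, hj2])
    have hj3 : k + 2 ≤ j := by omega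
    -- reindexing: g : Fin j → Fin n enumerates α
    have hcard : Fintype.card {x // x ∈ α} = j := by
      rw [Fintype.card_coe, hα]
    let e0 : Fin j ≃ {x // x ∈ α} := (Fintype.equivFinOfCardEq hcard).symm
    let g : Fin j → Fin n := fun i => (e0 i : Fin n)
    have hg : Function.Injective g := fun a b h => e0.injective (Subtype.ext h)
    have himg : Finset.univ.image g = α := by
      ext x
      simp only [Finset.mem_image, Finset.mem_univ, true_and]
      constructor
      · rintro ⟨i, rfl⟩; exact (e0 i).2
      · intro hx; exact ⟨e0.symm ⟨x, hx⟩, by simp [g]⟩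
    set C : Matrix (Fin j) (Fin j) ℂ := B.submatrix g g with hCdef
    have hC : C.IsHermitian := hB.submatrix g
    have hdet : pminor B α = C.det := by
      rw [hCdef, det_submatrix_eq_pminor B g hg, himg]
    -- principal minors of C of orders j-1 and j-2 vanish
    have hCminor : ∀ t : Finset (Fin j), t.card = j - 1 ∨ t.card = j - 2 → pminor C t = 0 := by
      intro t htc
      rw [hCdef, pminor_submatrix B g hg t]
      have hcardt : (t.image g).card = t.card := Finset.card_image_of_injective t hg
      rcases htc with h | h
      · exact ih (j-1) (by omega) (by omega) (by omega) _ (by rw [hcardt, h])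
      · exact ih (j-2) (by omega) (by omega) (by omega) _ (by rw [hcardt, h])
    -- the polynomial P
    set P : Polynomial ℂ := (C.map (Polynomial.C : ℂ → ℂ[X]) + (X : ℂ[X]) • 1).det with hPdef
    have hcoeff1 : P.coeff 1 = 0 := by
      rw [hPdef, coeff_det_map]
      refine Finset.sum_eq_zero fun s hs => ?_
      refine hCminor sᶜ (Or.inl ?_)
      rw [Finset.card_compl, (Finset.mem_powersetCard.mp hs).2, Fintype.card_fin]
    have hcoeff2 : P.coeff 2 = 0 := by
      rw [hPdef, coeff_det_map]
      refine Finset.sum_eq_zero fun s hs => ?_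
      refine hCminor sᶜ (Or.inr ?_)
      rw [Finset.card_compl, (Finset.mem_powersetCard.mp hs).2, Fintype.card_fin]
    -- eigenvalue side
    have hP : P = ∏ i, ((X : ℂ[X]) + Polynomial.C ((hC.eigenvalues i : ℝ) : ℂ)) :=
      det_map_add_X_smul_one C hC
    have hcard_univ : (Finset.univ : Finset (Fin j)).card = j := by
      rw [Finset.card_univ, Fintype.card_fin]
    have he1 : ∑ t ∈ (Finset.univ : Finset (Fin j)).powersetCard (j-1),
        ∏ i ∈ t, ((hC.eigenvalues i : ℝ) : ℂ) = 0 := by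
      have := Finset.prod_X_add_C_coeff (Finset.univ : Finset (Fin j))
        (fun i => ((hC.eigenvalues i : ℝ) : ℂ)) (k := 1) (by omega)
      rw [← hP, hcoeff1, hcard_univ] at this
      simpa using this.symm
    have he2 : ∑ t ∈ (Finset.univ : Finset (Fin j)).powersetCard (j-2),
        ∏ i ∈ t, ((hC.eigenvalues i : ℝ) : ℂ) = 0 := by
      have := Finset.prod_X_add_C_coeff (Finset.univ : Finset (Fin j))
        (fun i => ((hC.eigenvalues i : ℝ) : ℂ)) (k := 2) (by omega)
      rw [← hP, hcoeff2, hcard_univ] at this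
      simpa using this.symm
    -- convert to real statements
    have he1' : ∑ t ∈ (Finset.univ : Finset (Fin j)).powersetCard (j-1),
        ∏ i ∈ t, hC.eigenvalues i = 0 := by
      have : ((∑ t ∈ (Finset.univ : Finset (Fin j)).powersetCard (j-1),
          ∏ i ∈ t, hC.eigenvalues i : ℝ) : ℂ) = 0 := by
        push_cast
        exact he1
      exact_mod_cast this
    have he2' : ∑ t ∈ (Finset.univ : Finset (Fin j)).powersetCard (j-2),
        ∏ i ∈ t, hC.eigenvalues i = 0 := by
      have : ((∑ t ∈ (Finset.univ : Finset (Fin j)).powersetCard (j-2),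
          ∏ i ∈ t, hC.eigenvalues i : ℝ) : ℂ) = 0 := by
        push_cast
        exact he2
      exact_mod_cast this
    have hprod : ∏ i, hC.eigenvalues i = 0 := real_aux (by omega) _ he1' he2'
    rw [hdet, hC.det_eq_prod_eigenvalues]
    norm_cast
    rw [hprod]
    exact Complex.ofReal_zero
end

section
/- There is no n×n complex Hermitian matrix B and index k with 1 ≤ k ≤ n−1 such that: all principal minors of B of order k are nonzero (real and ≠ 0), with at least one positive and at least one negative, and all principal minors of B of order k+1 are zero. (The sequence A*N is forbidden.) -/
open ComplexOrder

open Matrix Finset in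
/-- Key lemma: a singular Hermitian matrix cannot have two "delete one index" principal
minors of strictly opposite signs. -/
lemma key_minor {m : Type*} [Fintype m] [DecidableEq m] (M : Matrix m m ℂ)
    (hM : M.IsHermitian) (hdet : M.det = 0) (a b : m)
    (ha : 0 < (M.submatrix (fun x : {x : m // x ≠ a} => (x : m))
        (fun x : {x : m // x ≠ a} => (x : m))).det)
    (hb : (M.submatrix (fun x : {x : m // x ≠ b} => (x : m))
        (fun x : {x : m // x ≠ b} => (x : m))).det < 0) : False := by
  classical
  have hprod := hM.det_eq_prod_eigenvalues
  rw [hdet] at hprod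
  obtain ⟨j, -, hj⟩ := Finset.prod_eq_zero_iff.1 hprod.symm
  have hjz : hM.eigenvalues j = 0 := by
    simpa using hj
  set U : Matrix m m ℂ := (hM.eigenvectorUnitary : Matrix m m ℂ) with hU
  set μ : m → ℝ := hM.eigenvalues with hμ
  have hMpq : ∀ p q, M p q = ∑ l, U p l * (μ l : ℂ) * (starRingEnd ℂ) (U q l) := by
    intro p q
    conv_lhs => rw [hM.spectral_theorem, Unitary.conjStarAlgAut_apply]
    rw [Matrix.mul_apply]
    refine Finset.sum_congr rfl fun l _ => ?_
    rw [Matrix.mul_diagonal, Matrix.star_apply, ← starRingEnd_apply]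
    rfl
  set C : ℝ := ∏ l ∈ Finset.univ.erase j, μ l with hC
  have main : ∀ c : m, ∃ r : ℝ, 0 ≤ r ∧
      (M.submatrix (fun x : {x : m // x ≠ c} => (x : m))
        (fun x : {x : m // x ≠ c} => (x : m))).det = (C : ℂ) * r := by
    intro c
    have hcard : Fintype.card {l : m // l ≠ j} = Fintype.card {x : m // x ≠ c} := by
      simp [Fintype.card_subtype_compl, Fintype.card_subtype_eq]
    let e : {l : m // l ≠ j} ≃ {x : m // x ≠ c} := Fintype.equivOfCardEq hcard
    let V : Matrix {x : m // x ≠ c} {x : m // x ≠ c} ℂ :=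
      fun p q => U (p : m) ((e.symm q : {l : m // l ≠ j}) : m)
    have hfact : ∀ p q : {x : m // x ≠ c},
        (M.submatrix (fun x : {x : m // x ≠ c} => (x : m))
          (fun x : {x : m // x ≠ c} => (x : m))) p q =
        (V * Matrix.diagonal (fun q => ((μ ((e.symm q : {l : m // l ≠ j}) : m) : ℝ) : ℂ)) * Vᴴ) p q := by
      intro p q
      rw [Matrix.submatrix_apply, hMpq]
      have hrhs : (V * Matrix.diagonal
            (fun q => ((μ ((e.symm q : {l : m // l ≠ j}) : m) : ℝ) : ℂ)) * Vᴴ) p q =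
          ∑ q' : {x : m // x ≠ c},
            (fun l : {l : m // l ≠ j} => U (p : m) (l : m) * ((μ (l : m) : ℝ) : ℂ) *
              (starRingEnd ℂ) (U (q : m) (l : m))) (e.symm q') := by
        rw [Matrix.mul_apply]
        refine Finset.sum_congr rfl fun q' _ => ?_
        rw [Matrix.mul_diagonal, Matrix.conjTranspose_apply, ← starRingEnd_apply]
      rw [hrhs, Equiv.sum_comp e.symm
        (fun l : {l : m // l ≠ j} => U (p : m) (l : m) * ((μ (l : m) : ℝ) : ℂ) *
          (starRingEnd ℂ) (U (q : m) (l : m)))]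
      rw [← Finset.sum_subtype (Finset.univ.erase j)
        (fun l => by simp [Finset.mem_erase] : ∀ l : m, l ∈ Finset.univ.erase j ↔ l ≠ j)
        (fun l : m => U (p : m) l * ((μ l : ℝ) : ℂ) * (starRingEnd ℂ) (U (q : m) l))]
      rw [Finset.sum_erase _ (by simp [hjz])]
    have hfact' : M.submatrix (fun x : {x : m // x ≠ c} => (x : m))
          (fun x : {x : m // x ≠ c} => (x : m)) =
        V * Matrix.diagonal (fun q => ((μ ((e.symm q : {l : m // l ≠ j}) : m) : ℝ) : ℂ)) * Vᴴ := by
      ext p q; exact hfact p q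
    refine ⟨Complex.normSq V.det, Complex.normSq_nonneg _, ?_⟩
    rw [hfact', Matrix.det_mul, Matrix.det_mul, Matrix.det_conjTranspose,
      Matrix.det_diagonal]
    have hCprod : (∏ q : {x : m // x ≠ c},
        ((μ ((e.symm q : {l : m // l ≠ j}) : m) : ℝ) : ℂ)) = (C : ℂ) := by
      rw [Equiv.prod_comp e.symm (fun l : {l : m // l ≠ j} => ((μ (l : m) : ℝ) : ℂ))]
      rw [← Finset.prod_subtype (Finset.univ.erase j)
        (fun l => by simp [Finset.mem_erase] : ∀ l : m, l ∈ Finset.univ.erase j ↔ l ≠ j)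
        (fun l : m => ((μ l : ℝ) : ℂ))]
      rw [hC]
      push_cast
      rfl
    rw [hCprod, mul_right_comm, ← starRingEnd_apply, Complex.mul_conj, mul_comm]
  obtain ⟨ra, hra, hda⟩ := main a
  obtain ⟨rb, hrb, hdb⟩ := main b
  rw [hda] at ha
  rw [hdb] at hb
  have ha' : (0 : ℝ) < C * ra := by
    have : (0 : ℂ) < ((C * ra : ℝ) : ℂ) := by push_cast; exact ha
    exact_mod_cast this
  have hb' : C * rb < 0 := by
    have : (((C * rb : ℝ) : ℂ)) < 0 := by push_cast; exact hb
    exact_mod_cast this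
  have h1 : 0 < C := by
    by_contra h
    push_neg at h
    exact absurd ha' (not_lt.2 (mul_nonpos_iff.2 (Or.inr ⟨h, hra⟩)))
  exact absurd hb' (not_lt.2 (mul_nonneg h1.le hrb))

open Matrix Finset in
lemma det_erase {n : ℕ} (B : Matrix (Fin n) (Fin n) ℂ) (γ : Finset (Fin n)) (a : Fin n)
    (ha : a ∈ γ) :
    ((B.submatrix (fun i : γ => (i : Fin n)) (fun i : γ => (i : Fin n))).submatrix
      (fun x : {x : γ // x ≠ ⟨a, ha⟩} => (x : γ))
      (fun x : {x : γ // x ≠ ⟨a, ha⟩} => (x : γ))).det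
    = pminor B (γ.erase a) := by
  rw [Matrix.submatrix_submatrix]
  unfold pminor
  let e : {x : γ // x ≠ (⟨a, ha⟩ : γ)} ≃ {y : Fin n // y ∈ γ.erase a} :=
    { toFun := fun x => ⟨x.1.1, Finset.mem_erase.2 ⟨fun h => x.2 (Subtype.ext h), x.1.2⟩⟩
      invFun := fun y => ⟨⟨y.1, Finset.mem_of_mem_erase y.2⟩,
        fun h => (Finset.mem_erase.1 y.2).1 (congrArg Subtype.val h)⟩
      left_inv := fun x => rfl
      right_inv := fun y => rfl }
  have hcomp : (fun i : γ => (i : Fin n)) ∘ (fun x : {x : γ // x ≠ (⟨a, ha⟩ : γ)} => (x : γ))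
      = (fun i : (γ.erase a : Finset (Fin n)) => (i : Fin n)) ∘ ⇑e := rfl
  rw [hcomp, ← Matrix.submatrix_submatrix, Matrix.det_submatrix_equiv_self]

/-- The sequence A*N is forbidden for Hermitian matrices. -/
theorem forbidden_AstarN {n : ℕ} (B : Matrix (Fin n) (Fin n) ℂ) (hB : B.IsHermitian)
    (k : ℕ) (hk1 : 1 ≤ k) (hkn : k ≤ n - 1)
    (hne : ∀ α : Finset (Fin n), α.card = k → pminor B α ≠ 0)
    (hpos : ∃ α : Finset (Fin n), α.card = k ∧ 0 < pminor B α)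
    (hneg : ∃ α : Finset (Fin n), α.card = k ∧ pminor B α < 0)
    (hN : ∀ α : Finset (Fin n), α.card = k + 1 → pminor B α = 0) :
    False := by
  classical
  -- principal minors of a Hermitian matrix are real
  have hreal : ∀ α : Finset (Fin n), ((pminor B α).re : ℂ) = pminor B α := by
    intro α
    have hsub : (B.submatrix (fun i : α => (i : Fin n)) (fun i : α => (i : Fin n))).IsHermitian :=
      hB.submatrix _
    have hstar : star ((B.submatrix (fun i : α => (i : Fin n)) (fun i : α => (i : Fin n))).det)
        = (B.submatrix (fun i : α => (i : Fin n)) (fun i : α => (i : Fin n))).det := by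
      conv_lhs => rw [← Matrix.det_conjTranspose, hsub]
    have : (starRingEnd ℂ) (pminor B α) = pminor B α := by
      rw [starRingEnd_apply]
      exact hstar
    exact Complex.conj_eq_iff_re.1 this
  -- trichotomy for minors of order k
  have htri : ∀ α : Finset (Fin n), α.card = k → 0 < pminor B α ∨ pminor B α < 0 := by
    intro α hα
    rcases lt_trichotomy ((pminor B α).re) 0 with h | h | h
    · right
      rw [← hreal α]
      exact_mod_cast h
    · exact absurd (by rw [← hreal α, h]; simp : pminor B α = 0) (hne α hα)
    · left
      rw [← hreal α]
      exact_mod_cast h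
  -- induction step
  have step : ∀ d : ℕ, ∀ α β : Finset (Fin n), α.card = k → β.card = k →
      0 < pminor B α → pminor B β < 0 → (α \ β).card ≤ d → False := by
    intro d
    induction d with
    | zero =>
      intro α β hα hβ hpα hpβ hd
      have hsub : α ⊆ β := by
        rw [← Finset.sdiff_eq_empty_iff_subset]
        exact Finset.card_eq_zero.1 (Nat.le_zero.1 hd)
      have : α = β := Finset.eq_of_subset_of_card_le hsub (by rw [hα, hβ])
      rw [this] at hpα
      exact absurd hpα (asymm hpβ)
    | succ d ih =>
      intro α β hα hβ hpα hpβ hd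
      by_cases hab : α = β
      · rw [hab] at hpα; exact absurd hpα (asymm hpβ)
      · have hAB : (α \ β).Nonempty := by
          rw [Finset.sdiff_nonempty]
          intro hsub
          exact hab (Finset.eq_of_subset_of_card_le hsub (by rw [hα, hβ]))
        have hBA : (β \ α).Nonempty := by
          rw [Finset.sdiff_nonempty]
          intro hsub
          exact hab (Finset.eq_of_subset_of_card_le hsub (by rw [hα, hβ])).symm
        obtain ⟨a, haAB⟩ := hAB
        obtain ⟨b, hbBA⟩ := hBA
        have haα : a ∈ α := (Finset.mem_sdiff.1 haAB).1
        have haβ : a ∉ β := (Finset.mem_sdiff.1 haAB).2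
        have hbβ : b ∈ β := (Finset.mem_sdiff.1 hbBA).1
        have hbα : b ∉ α := (Finset.mem_sdiff.1 hbBA).2
        have hne_ab : a ≠ b := fun h => hbα (h ▸ haα)
        set α' : Finset (Fin n) := insert b (α.erase a) with hα'
        have hcard' : α'.card = k := by
          rw [hα', Finset.card_insert_of_notMem (fun h => hbα (Finset.mem_of_mem_erase h)),
            Finset.card_erase_of_mem haα, hα]
          omega
        rcases htri α' hcard' with hpos' | hneg'
        · refine ih α' β hcard' hβ hpos' hpβ ?_
          have hss : α' \ β = (α \ β).erase a := by
            ext x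
            simp only [hα', Finset.mem_sdiff, Finset.mem_insert, Finset.mem_erase]
            constructor
            · rintro ⟨h1 | h1, h2⟩
              · exact absurd (h1 ▸ hbβ) h2
              · exact ⟨h1.1, h1.2, h2⟩
            · rintro ⟨h1, h2, h3⟩
              exact ⟨Or.inr ⟨h1, h2⟩, h3⟩
          rw [hss, Finset.card_erase_of_mem haAB]
          omega
        · -- apply the key lemma to γ = insert b α
          set γ : Finset (Fin n) := insert b α with hγ
          have hγcard : γ.card = k + 1 := by
            rw [hγ, Finset.card_insert_of_notMem hbα, hα]
          have hdetγ : pminor B γ = 0 := hN γ hγcard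
          have haγ : a ∈ γ := Finset.mem_insert_of_mem haα
          have hbγ : b ∈ γ := Finset.mem_insert_self b α
          have heb : γ.erase b = α := by rw [hγ, Finset.erase_insert hbα]
          have hea : γ.erase a = α' := by
            rw [hγ, hα', Finset.erase_insert_of_ne hne_ab.symm]
          refine key_minor (B.submatrix (fun i : γ => (i : Fin n)) (fun i : γ => (i : Fin n)))
            (hB.submatrix _) hdetγ ⟨b, hbγ⟩ ⟨a, haγ⟩ ?_ ?_
          · rw [det_erase B γ b hbγ, heb]
            exact hpα
          · rw [det_erase B γ a haγ, hea]
            exact hneg'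
  obtain ⟨α, hα, hpα⟩ := hpos
  obtain ⟨β, hβ, hpβ⟩ := hneg
  exact step (α \ β).card α β hα hβ hpα hpβ le_rfl
end

section
/- There is no n×n complex Hermitian matrix B and index k with 1 ≤ k ≤ n−1 such that: all principal minors of B of order k are zero, and all principal minors of B of order k+1 are nonzero with at least one positive and at least one negative. (The sequence NA* is forbidden.) -/
open ComplexOrder

open Matrix

variable {m : Type*} [Fintype m] [DecidableEq m] {K : Type*} [CommRing K]

/-- embedding `m ⊕ Unit → m ⊕ Bool` sending the extra point to `a`. -/
def gmap (a : Bool) : m ⊕ Unit → m ⊕ Bool := Sum.elim Sum.inl (fun _ => Sum.inr a)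

lemma dj_inv (M : Matrix (m ⊕ Bool) (m ⊕ Bool) K)
    [Invertible (M.submatrix Sum.inl Sum.inl)] :
    M.det * (M.submatrix Sum.inl Sum.inl).det =
      (M.submatrix (gmap false) (gmap false)).det * (M.submatrix (gmap true) (gmap true)).det
      - (M.submatrix (gmap false) (gmap true)).det * (M.submatrix (gmap true) (gmap false)).det := by
  set A := M.submatrix Sum.inl Sum.inl with hA
  set B := M.toBlocks₁₂
  set C := M.toBlocks₂₁
  set D := M.toBlocks₂₂
  have hAeq : M.toBlocks₁₁ = A := rfl
  have hM : M = fromBlocks A B C D := by rw [← hAeq]; exact (fromBlocks_toBlocks M).symm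
  set S : Matrix Bool Bool K := D - C * ⅟A * B with hS
  have hdetM : M.det = A.det * S.det := by
    rw [hM]; exact det_fromBlocks₁₁ A B C D
  have hN : ∀ a b : Bool, (M.submatrix (gmap a) (gmap b)).det = A.det * S a b := by
    intro a b
    have heq : M.submatrix (gmap a) (gmap b) =
        fromBlocks A (fun x _ => B x b) (fun _ y => C a y) (fun _ _ => D a b) := by
      ext i j
      rcases i with i | i <;> rcases j with j | j <;> rfl
    rw [heq]
    have : Invertible A := inferInstance
    refine (det_fromBlocks₁₁ _ _ _ _).trans ?_
    congr 1
    rw [det_unique]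
    simp only [Matrix.sub_apply, hS]
    congr 1
    simp [Matrix.mul_apply, Finset.mul_sum, Finset.sum_mul]
    show D a b - ∑ j, (∑ i, C a i * A⁻¹ i j) * B j b = _
    simp [Finset.sum_mul]
  have hdetS : S.det = S false false * S true true - S false true * S true false := by
    rw [← det_submatrix_equiv_self finTwoEquiv S, det_fin_two]
    rfl
  rw [hdetM, hN, hN, hN, hN, hdetS]
  ring

open Polynomial in
lemma dj (M : Matrix (m ⊕ Bool) (m ⊕ Bool) ℂ) :
    M.det * (M.submatrix Sum.inl Sum.inl).det =
      (M.submatrix (gmap false) (gmap false)).det * (M.submatrix (gmap true) (gmap true)).det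
      - (M.submatrix (gmap false) (gmap true)).det * (M.submatrix (gmap true) (gmap false)).det := by
  classical
  set M' : Matrix (m ⊕ Bool) (m ⊕ Bool) ℂ[X] :=
    M.map (Polynomial.C : ℂ →+* ℂ[X]) + (X : ℂ[X]) • (1 : Matrix (m ⊕ Bool) (m ⊕ Bool) ℂ[X]) with hM'
  -- the polynomial identity candidate
  set P : ℂ[X] :=
    (M'.det * (M'.submatrix Sum.inl Sum.inl).det) -
      ((M'.submatrix (gmap false) (gmap false)).det * (M'.submatrix (gmap true) (gmap true)).det
      - (M'.submatrix (gmap false) (gmap true)).det * (M'.submatrix (gmap true) (gmap false)).det)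
    with hP
  -- evaluation of M' at t
  have hev : ∀ t : ℂ, (evalRingHom t).mapMatrix M' = M + t • (1 : Matrix (m ⊕ Bool) (m ⊕ Bool) ℂ) := by
    intro t
    ext i j
    simp [hM', Matrix.one_apply, apply_ite (eval t)]
  -- q : determinant of the A-block of M', a monic polynomial
  have hsub1 : (1 : Matrix (m ⊕ Bool) (m ⊕ Bool) ℂ[X]).submatrix
      (Sum.inl : m → m ⊕ Bool) Sum.inl = 1 := by
    ext i j
    simp [Matrix.one_apply]
  set q : ℂ[X] := (M'.submatrix Sum.inl Sum.inl).det with hq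
  have hqc : q = (-(M.submatrix Sum.inl Sum.inl)).charpoly := by
    rw [hq, Matrix.charpoly]
    congr 1
    ext i j
    by_cases h : i = j
    · subst h
      simp [hM', Matrix.charmatrix_apply_eq, Matrix.one_apply]
      ring
    · simp [hM', Matrix.charmatrix_apply_ne _ _ _ h, Matrix.one_apply, h]
  have hqne : q ≠ 0 := by
    rw [hqc]; exact (Matrix.charpoly_monic _).ne_zero
  -- the set of good evaluation points is infinite
  have hroots : ({t : ℂ | q.IsRoot t}).Finite := q.finite_setOf_isRoot hqne
  have hinf : ({t : ℂ | q.IsRoot t}ᶜ : Set ℂ).Infinite := hroots.infinite_compl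
  -- commuting evaluation with det/submatrix
  have hcomm : ∀ (t : ℂ) (f g : (m ⊕ Unit) → (m ⊕ Bool)),
      eval t ((M'.submatrix f g).det) = (((evalRingHom t).mapMatrix M').submatrix f g).det := by
    intro t f g
    rw [RingHom.mapMatrix_apply, Matrix.submatrix_map, ← RingHom.mapMatrix_apply,
      ← RingHom.map_det]
    rfl
  have hcomm' : ∀ (t : ℂ) (f g : m → (m ⊕ Bool)),
      eval t ((M'.submatrix f g).det) = (((evalRingHom t).mapMatrix M').submatrix f g).det := by
    intro t f g
    rw [RingHom.mapMatrix_apply, Matrix.submatrix_map, ← RingHom.mapMatrix_apply,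
      ← RingHom.map_det]
    rfl
  have hcommM : ∀ t : ℂ, eval t M'.det = ((evalRingHom t).mapMatrix M').det := by
    intro t; rw [← RingHom.map_det]; rfl
  -- every good point is a root of P
  have hPt : ∀ t ∈ ({t : ℂ | q.IsRoot t}ᶜ : Set ℂ), P.IsRoot t := by
    intro t ht
    have hAdet : (((evalRingHom t).mapMatrix M').submatrix Sum.inl Sum.inl).det ≠ 0 := by
      rw [← hcomm' t]
      exact ht
    have : Invertible (((evalRingHom t).mapMatrix M').submatrix
        (Sum.inl : m → m ⊕ Bool) Sum.inl) :=
      Matrix.invertibleOfIsUnitDet _ (isUnit_iff_ne_zero.2 hAdet)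
    have hdj := dj_inv ((evalRingHom t).mapMatrix M')
    show eval t P = 0
    rw [hP]
    simp only [eval_sub, eval_mul, eval_add]
    rw [hcommM, hcomm' t, hcomm t, hcomm t, hcomm t, hcomm t]
    rw [hdj]
    ring
  have hP0 : P = 0 := Polynomial.eq_zero_of_infinite_isRoot P (Set.Infinite.mono (fun t ht => hPt t ht) hinf)
  -- evaluate at 0
  have h0 : (evalRingHom 0).mapMatrix M' = M := by
    rw [hev 0]
    simp
  have := congrArg (eval 0) hP0
  rw [hP] at this
  simp only [eval_sub, eval_mul, eval_zero] at this
  rw [hcommM, hcomm' 0, hcomm 0, hcomm 0, hcomm 0, hcomm 0, h0] at this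
  exact sub_eq_zero.mp this

lemma pminor_eq {n : ℕ} {I : Type*} [Fintype I] [DecidableEq I]
    (B : Matrix (Fin n) (Fin n) ℂ) (f : I → Fin n) (hf : Function.Injective f) :
    (B.submatrix f f).det = pminor B (Finset.univ.image f) := by
  set α := Finset.univ.image f with hα
  have hmem : ∀ i : I, f i ∈ α := fun i => Finset.mem_image_of_mem f (Finset.mem_univ i)
  set f' : I → {x // x ∈ α} := fun i => ⟨f i, hmem i⟩ with hf'
  have hbij : Function.Bijective f' := by
    constructor
    · intro a b hab
      exact hf (congrArg Subtype.val hab)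
    · rintro ⟨x, hx⟩
      rw [hα, Finset.mem_image] at hx
      obtain ⟨i, _, hi⟩ := hx
      exact ⟨i, Subtype.ext hi⟩
  set e := Equiv.ofBijective f' hbij
  have : B.submatrix f f = (B.submatrix (fun i : α => (i : Fin n)) (fun i : α => (i : Fin n))).submatrix e e := by
    ext i j
    rfl
  rw [this, pminor]
  exact det_submatrix_equiv_self e _

lemma pminor_real {n : ℕ} (B : Matrix (Fin n) (Fin n) ℂ) (hB : B.IsHermitian)
    (α : Finset (Fin n)) : pminor B α = ((pminor B α).re : ℂ) := by
  have h1 : (B.submatrix (fun i : α => (i : Fin n)) (fun i : α => (i : Fin n))).IsHermitian :=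
    hB.submatrix _
  have h2 : (starRingEnd ℂ) (pminor B α) = pminor B α := by
    calc (starRingEnd ℂ) (pminor B α)
        = (B.submatrix (fun i : α => (i : Fin n)) (fun i : α => (i : Fin n)))ᴴ.det := by
          rw [det_conjTranspose]; rfl
      _ = pminor B α := by rw [h1]; rfl
  exact (Complex.conj_eq_iff_re.mp h2).symm

lemma swap_key {n : ℕ} (B : Matrix (Fin n) (Fin n) ℂ) (hB : B.IsHermitian)
    (δ : Finset (Fin n)) (i j : Fin n) (hi : i ∉ δ) (hj : j ∉ δ) (hij : i ≠ j)
    (h0 : pminor B δ = 0) :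
    0 ≤ (pminor B (insert i δ)).re * (pminor B (insert j δ)).re := by
  classical
  set h : {x // x ∈ δ} ⊕ Bool → Fin n := Sum.elim Subtype.val (fun b => cond b j i) with hh
  have hinj : Function.Injective h := by
    rintro (a | a) (b | b) hab
    · exact congrArg Sum.inl (Subtype.ext hab)
    · exfalso; cases b <;> simp [hh] at hab <;> [exact hi (hab ▸ a.2); exact hj (hab ▸ a.2)]
    · exfalso; cases a <;> simp [hh] at hab <;> [exact hi (hab ▸ b.2); exact hj (hab ▸ b.2)]
    · cases a <;> cases b <;> simp [hh] at hab ⊢ <;> exact absurd hab (by simp [hij, hij.symm])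
  set M : Matrix ({x // x ∈ δ} ⊕ Bool) ({x // x ∈ δ} ⊕ Bool) ℂ := B.submatrix h h with hM
  have hMherm : M.IsHermitian := hB.submatrix h
  -- identify the four submatrices
  have hinl : M.submatrix (Sum.inl : {x // x ∈ δ} → _) Sum.inl = B.submatrix (Subtype.val) Subtype.val := by
    ext a b; rfl
  have hδ : (M.submatrix (Sum.inl : {x // x ∈ δ} → _) Sum.inl).det = pminor B δ := by
    rw [hinl, pminor_eq B Subtype.val Subtype.coe_injective]
    congr 1
    rw [Finset.univ_eq_attach, Finset.attach_image_val]
  have himg : ∀ a : Bool, Finset.univ.image (h ∘ gmap a) = insert (cond a j i) δ := by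
    intro a
    ext x
    simp only [Finset.mem_image, Finset.mem_univ, true_and, Finset.mem_insert]
    constructor
    · rintro ⟨b | b, rfl⟩
      · exact Or.inr b.2
      · exact Or.inl rfl
    · rintro (rfl | hx)
      · exact ⟨Sum.inr (), rfl⟩
      · exact ⟨Sum.inl ⟨x, hx⟩, rfl⟩
  have hinj' : ∀ a : Bool, Function.Injective (h ∘ gmap a) := by
    intro a
    have : Function.Injective (gmap a : {x // x ∈ δ} ⊕ Unit → _) := by
      rintro (u | u) (v | v) huv <;> simp [gmap] at huv <;> simp [huv]
    exact hinj.comp this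
  have hNaa : ∀ a : Bool, (M.submatrix (gmap a) (gmap a)).det = pminor B (insert (cond a j i) δ) := by
    intro a
    have : M.submatrix (gmap a) (gmap a) = B.submatrix (h ∘ gmap a) (h ∘ gmap a) := by
      ext u v; rfl
    rw [this, pminor_eq B _ (hinj' a), himg a]
  -- conjugate symmetry of the cross terms
  have hcross : (M.submatrix (gmap true) (gmap false)).det
      = (starRingEnd ℂ) (M.submatrix (gmap false) (gmap true)).det := by
    have : (M.submatrix (gmap false) (gmap true))ᴴ = M.submatrix (gmap true) (gmap false) := by
      rw [conjTranspose_submatrix, hMherm]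
    rw [← this, det_conjTranspose]; rfl
  have hdj := dj M
  rw [hδ, h0, mul_zero, hNaa, hNaa, hcross] at hdj
  set z := (M.submatrix (gmap false) (gmap true)).det with hz
  have key : pminor B (insert i δ) * pminor B (insert j δ) = ((Complex.normSq z : ℝ) : ℂ) := by
    have := Complex.mul_conj z
    simp only [cond] at hdj
    linear_combination -hdj + this
  rw [pminor_real B hB (insert i δ), pminor_real B hB (insert j δ), ← Complex.ofReal_mul] at key
  have := Complex.ofReal_inj.mp key
  rw [this]
  exact Complex.normSq_nonneg z

/-- The sequence NA* is forbidden for Hermitian matrices. -/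
theorem forbidden_NAstar {n : ℕ} (B : Matrix (Fin n) (Fin n) ℂ) (hB : B.IsHermitian)
    (k : ℕ) (hk1 : 1 ≤ k) (hkn : k ≤ n - 1)
    (hN : ∀ α : Finset (Fin n), α.card = k → pminor B α = 0)
    (hne : ∀ α : Finset (Fin n), α.card = k + 1 → pminor B α ≠ 0)
    (hpos : ∃ α : Finset (Fin n), α.card = k + 1 ∧ 0 < pminor B α)
    (hneg : ∃ α : Finset (Fin n), α.card = k + 1 ∧ pminor B α < 0) :
    False := by
  classical
  obtain ⟨αp, hcp, hpp⟩ := hpos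
  obtain ⟨αm, hcm, hmm⟩ := hneg
  have hPne : ∀ α : Finset (Fin n), α.card = k + 1 → (pminor B α).re ≠ 0 := by
    intro α hα h
    apply hne α hα
    rw [pminor_real B hB α, h, Complex.ofReal_zero]
  have claim : ∀ d (α β : Finset (Fin n)), α.card = k + 1 → β.card = k + 1 →
      (α \ β).card = d → 0 < (pminor B α).re * (pminor B β).re := by
    intro d
    induction d with
    | zero =>
      intro α β hα hβ hd
      have : α = β := by
        apply Finset.eq_of_subset_of_card_le
        · exact (Finset.sdiff_eq_empty_iff_subset).1 (Finset.card_eq_zero.1 hd)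
        · rw [hα, hβ]
      subst this
      exact mul_self_pos.2 (hPne α hα)
    | succ d ih =>
      intro α β hα hβ hd
      have ha : (α \ β).Nonempty := by
        rw [← Finset.card_pos, hd]; omega
      obtain ⟨a, haa⟩ := ha
      have hb : (β \ α).Nonempty := by
        rw [← Finset.card_pos, Finset.card_sdiff_comm (by omega : β.card = α.card), hd]; omega
      obtain ⟨b, hbb⟩ := hb
      have haα : a ∈ α := (Finset.mem_sdiff.1 haa).1
      have haβ : a ∉ β := (Finset.mem_sdiff.1 haa).2
      have hbβ : b ∈ β := (Finset.mem_sdiff.1 hbb).1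
      have hbα : b ∉ α := (Finset.mem_sdiff.1 hbb).2
      have hab : a ≠ b := fun h => hbα (h ▸ haα)
      set α' := insert b (α.erase a) with hα'
      have hbe : b ∉ α.erase a := fun h => hbα (Finset.mem_of_mem_erase h)
      have hcard' : α'.card = k + 1 := by
        rw [hα', Finset.card_insert_of_notMem hbe, Finset.card_erase_of_mem haα, hα]
        omega
      have hsd : (α' \ β).card = d := by
        rw [hα', Finset.insert_sdiff_of_mem _ hbβ, Finset.erase_sdiff_comm,
          Finset.card_erase_of_mem haa, hd]
        omega
      have h1 : 0 < (pminor B α').re * (pminor B β).re := ih α' β hcard' hβ hsd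
      have hδ : (α.erase a).card = k := by rw [Finset.card_erase_of_mem haα, hα]; omega
      have h2 : 0 ≤ (pminor B α).re * (pminor B α').re := by
        have := swap_key B hB (α.erase a) a b (Finset.notMem_erase a α) hbe hab
          (hN _ hδ)
        rwa [Finset.insert_erase haα] at this
      have h2' : 0 < (pminor B α).re * (pminor B α').re :=
        lt_of_le_of_ne h2 (Ne.symm (mul_ne_zero (hPne α hα) (hPne α' hcard')))
      nlinarith [mul_pos h2' h1, sq_nonneg ((pminor B α').re)]
  have hfinal := claim (αp \ αm).card αp αm hcp hcm rfl
  have hp : 0 < (pminor B αp).re := (Complex.lt_def.1 hpp).1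
  have hm : (pminor B αm).re < 0 := (Complex.lt_def.1 hmm).1
  nlinarith
end

section
/- There is no n×n complex Hermitian matrix B and index k with 2 ≤ k ≤ n−1 such that simultaneously: (i) all order-(k−1) principal minors of B are positive, (ii) among the order-k principal minors there is a positive one, a negative one, and a zero one, and (iii) all order-(k+1) principal minors are nonnegative with at least one zero and at least one positive. (The sequence A⁺S*S⁺ is forbidden.) -/
open ComplexOrder

namespace Forbidden
open Matrix

variable {N : Type*} [DecidableEq N] [Fintype N] {R : Type*} [CommRing R]

lemma det_submatrix_eq_pminor {ι : Type*} [DecidableEq ι] [Fintype ι]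
    (B : Matrix N N R) (f : ι → N) (hf : Function.Injective f) (α : Finset N)
    (hα : ∀ x, x ∈ α ↔ ∃ i, f i = x) :
    (B.submatrix f f).det = pminor B α := by
  have hg : Function.Bijective (fun i => (⟨f i, (hα _).2 ⟨i, rfl⟩⟩ : {x // x ∈ α})) := by
    constructor
    · exact fun a b h => hf (by simpa using h)
    · rintro ⟨x, hx⟩
      obtain ⟨i, hi⟩ := (hα x).1 hx
      exact ⟨i, by simp [hi]⟩
  have he : B.submatrix f f =
      (B.submatrix (fun i : α => (i : N)) (fun i : α => (i : N))).submatrix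
        (Equiv.ofBijective _ hg) (Equiv.ofBijective _ hg) := by
    ext i j
    simp [Matrix.submatrix_apply, Equiv.ofBijective_apply]
  rw [pminor, he, Matrix.det_submatrix_equiv_self]

variable {m : Type*} [DecidableEq m] [Fintype m]

def g (t : Fin 2) : m ⊕ Unit → m ⊕ Fin 2 := Sum.map id (fun _ => t)

omit [DecidableEq m] [Fintype m] in
lemma g_inj (t : Fin 2) : Function.Injective (g (m := m) t) := by
  rintro (x|x) (y|y) h <;> simp [g] at h <;> simp [h]

lemma core (M : Matrix (m ⊕ Fin 2) (m ⊕ Fin 2) ℂ) (hM : M.IsHermitian)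
    (hA : 0 < M.toBlocks₁₁.det) (hd : 0 ≤ M.det) :
    0 ≤ (M.submatrix (g 0) (g 0)).det * (M.submatrix (g 1) (g 1)).det ∧
    ((M.submatrix (g 0) (g 0)).det = 0 →
      ∃ w : m ⊕ Fin 2 → ℂ, M.mulVec w = 0 ∧ w (Sum.inr 0) = 1 ∧ w (Sum.inr 1) = 0) := by
  set A := M.toBlocks₁₁ with hAdef
  set Bb := M.toBlocks₁₂ with hBdef
  set C := M.toBlocks₂₁ with hCdef
  set D := M.toBlocks₂₂ with hDdef
  haveI : Invertible A := M.toBlocks₁₁.invertibleOfIsUnitDet (isUnit_iff_ne_zero.2 hA.ne')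
  set S : Matrix (Fin 2) (Fin 2) ℂ := D - C * ⅟A * Bb with hSdef
  have hMe : ∀ i j, M i j = star (M j i) := by
    intro i j
    conv_lhs => rw [← hM]
    rfl
  have hdet : M.det = A.det * S.det := by
    conv_lhs => rw [← Matrix.fromBlocks_toBlocks M]
    rw [Matrix.det_fromBlocks₁₁]
  have hdel : ∀ t, (M.submatrix (g t) (g t)).det = A.det * S t t := by
    intro t
    have hblock : M.submatrix (g t) (g t) =
        Matrix.fromBlocks A (Matrix.of fun x (_ : Unit) => Bb x t)
          (Matrix.of fun (_ : Unit) y => C t y) (Matrix.of fun (_ : Unit) (_ : Unit) => D t t) := by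
      ext (x|x) (y|y) <;> rfl
    rw [hblock, Matrix.det_fromBlocks₁₁]
    congr 1
    rw [Matrix.det_unique]
    simp [hSdef, Matrix.mul_apply, Matrix.sub_apply]
  have hAh : Aᴴ = A := by
    ext i j
    simp only [Matrix.conjTranspose_apply, hAdef, Matrix.toBlocks₁₁, Matrix.of_apply]
    exact (hMe _ _).symm
  have hCh : Cᴴ = Bb := by
    ext i j
    simp only [Matrix.conjTranspose_apply, hCdef, hBdef, Matrix.toBlocks₂₁, Matrix.toBlocks₁₂,
      Matrix.of_apply]
    exact (hMe _ _).symm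
  have hBh : Bbᴴ = C := by
    ext i j
    simp only [Matrix.conjTranspose_apply, hCdef, hBdef, Matrix.toBlocks₂₁, Matrix.toBlocks₁₂,
      Matrix.of_apply]
    exact (hMe _ _).symm
  have hDh : Dᴴ = D := by
    ext i j
    simp only [Matrix.conjTranspose_apply, hDdef, Matrix.toBlocks₂₂, Matrix.of_apply]
    exact (hMe _ _).symm
  have hIh : (⅟A)ᴴ = ⅟A := by
    rw [Matrix.invOf_eq_nonsing_inv, Matrix.conjTranspose_nonsing_inv, hAh]
  have hSh : Sᴴ = S := by
    rw [hSdef, Matrix.conjTranspose_sub, hDh, Matrix.conjTranspose_mul, Matrix.conjTranspose_mul,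
      hBh, hIh, hCh, ← Matrix.mul_assoc]
  have hS10 : S 1 0 = star (S 0 1) := by
    conv_lhs => rw [← hSh]
    rfl
  constructor
  · rw [hdel 0, hdel 1]
    have hkey : A.det * S 0 0 * (A.det * S 1 1) =
        A.det * M.det + A.det * A.det * (S 0 1 * star (S 0 1)) := by
      rw [hdet, Matrix.det_fin_two, hS10]; ring
    rw [hkey]
    exact add_nonneg (mul_nonneg hA.le hd)
      (mul_nonneg (mul_nonneg hA.le hA.le) (mul_star_self_nonneg _))
  · intro h0
    rw [hdel 0] at h0
    have hS00 : S 0 0 = 0 := (mul_eq_zero.1 h0).resolve_left hA.ne'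
    have hMdet : M.det = -(A.det * (S 0 1 * star (S 0 1))) := by
      rw [hdet, Matrix.det_fin_two, hS00, hS10]; ring
    have hprod : S 0 1 * star (S 0 1) = 0 := by
      have h1 : 0 ≤ A.det * (S 0 1 * star (S 0 1)) :=
        mul_nonneg hA.le (mul_star_self_nonneg _)
      have h2 : A.det * (S 0 1 * star (S 0 1)) ≤ 0 := by
        rw [hMdet] at hd; exact neg_nonneg.1 hd
      exact (mul_eq_zero.1 (le_antisymm h2 h1)).resolve_left hA.ne'
    have hS01 : S 0 1 = 0 := by
      rcases mul_eq_zero.1 hprod with h | h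
      · exact h
      · exact star_eq_zero.1 h
    have hS10' : S 1 0 = 0 := by rw [hS10, hS01, star_zero]
    set P := ⅟A * Bb with hPdef
    have hAB : A * P = Bb := by
      rw [hPdef, ← Matrix.mul_assoc, mul_invOf_self, Matrix.one_mul]
    have hAP : ∀ x : m, ∑ y, M (Sum.inl x) (Sum.inl y) * P y 0 = M (Sum.inl x) (Sum.inr 0) := by
      intro x
      have h := congrFun (congrFun hAB x) (0 : Fin 2)
      rw [Matrix.mul_apply] at h
      exact h
    have hCP : ∀ t, S t 0 = M (Sum.inr t) (Sum.inr 0) - ∑ y, M (Sum.inr t) (Sum.inl y) * P y 0 := by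
      intro t
      have h : S t 0 = D t 0 - (C * P) t 0 := by
        rw [hSdef, hPdef, ← Matrix.mul_assoc]
        rfl
      rw [Matrix.mul_apply] at h
      exact h
    refine ⟨Sum.elim (fun y => -(P y 0)) ![1, 0], ?_, by simp, by simp⟩
    funext x
    have hmv : M.mulVec (Sum.elim (fun y => -(P y 0)) ![1, 0]) x
        = ∑ y : m ⊕ Fin 2, M x y * Sum.elim (fun y => -(P y 0)) ![1, 0] y := rfl
    rw [Pi.zero_apply, hmv, Fintype.sum_sum_type]
    simp only [Sum.elim_inl, Sum.elim_inr, Fin.sum_univ_two, Matrix.cons_val_zero,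
      Matrix.cons_val_one, Matrix.head_cons, mul_one, mul_zero, add_zero, mul_neg]
    cases x with
    | inl x =>
      have h := hAP x
      rw [Finset.sum_neg_distrib]
      linear_combination -h
    | inr t =>
      rw [Finset.sum_neg_distrib]
      have hScol : S t 0 = 0 := by fin_cases t; exacts [hS00, hS10']
      have h2 : (0:ℂ) = M (Sum.inr t) (Sum.inr 0) - ∑ y : m, M (Sum.inr t) (Sum.inl y) * P y 0 := by
        rw [← hScol]; exact hCP t
      linear_combination -h2

variable {ι : Type*} [DecidableEq ι] [Fintype ι]

omit [DecidableEq ι] in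
lemma sum_subtype_eq (f : ι → ℂ) (p : ι → Prop) [DecidablePred p]
    (hf : ∀ x, ¬ p x → f x = 0) :
    ∑ y : {x // p x}, f y.val = ∑ y : ι, f y := by
  rw [← Finset.sum_filter_add_sum_filter_not Finset.univ p]
  have h1 : ∑ y : {x // p x}, f y.val = ∑ y ∈ Finset.univ.filter p, f y :=
    (Finset.sum_subtype _ (by simp) f).symm
  have h2 : ∑ y ∈ Finset.univ.filter (fun x => ¬ p x), f y = 0 :=
    Finset.sum_eq_zero (fun y hy => hf y (Finset.mem_filter.1 hy).2)
  rw [h1, h2, add_zero]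

omit [DecidableEq ι] in
lemma mulVec_restrict (M : Matrix ι ι ℂ) {z : ι → ℂ} (h : M.mulVec z = 0)
    (p : ι → Prop) [DecidablePred p] (hz : ∀ x, ¬ p x → z x = 0) :
    (M.submatrix (fun y : {x // p x} => y.val) (fun y : {x // p x} => y.val)).mulVec
      (fun y : {x // p x} => z y.val) = 0 := by
  funext x
  have h0 : ∑ y : ι, M x.val y * z y = 0 := by
    have := congrFun h x.val
    rwa [Matrix.mulVec, dotProduct, Pi.zero_apply] at this
  show (∑ y : {x // p x}, M x.val y.val * z y.val) = 0
  exact (sum_subtype_eq (fun y => M x.val y * z y) p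
    (fun y hy => by simp [hz y hy])).trans h0

omit [DecidableEq ι] in
lemma mulVec_extend (M : Matrix ι ι ℂ) (p : ι → Prop) [DecidablePred p]
    (u : {x // p x} → ℂ)
    (h : (M.submatrix (fun y : {x // p x} => y.val) (fun y : {x // p x} => y.val)).mulVec u = 0)
    (x : ι) (hx : p x) :
    M.mulVec (fun y => if h : p y then u ⟨y, h⟩ else 0) x = 0 := by
  have h0 : ∑ y : {x // p x}, M x y.val * u y = 0 := by
    have := congrFun h ⟨x, hx⟩
    rwa [Matrix.mulVec, dotProduct, Pi.zero_apply] at this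
  have hs := sum_subtype_eq (fun y => M x y * if h : p y then u ⟨y, h⟩ else 0) p
    (fun y hy => by simp [dif_neg hy])
  have hs2 : ∑ y : {x // p x}, M x y.val * (if h : p y.val then u ⟨y.val, h⟩ else 0)
      = ∑ y : {x // p x}, M x y.val * u y :=
    Finset.sum_congr rfl (fun y _ => by rw [dif_pos y.prop])
  show (∑ y : ι, M x y * if h : p y then u ⟨y, h⟩ else 0) = 0
  exact (hs.symm.trans hs2).trans h0

lemma eq_zero_of_mulVec_of_det_ne (M : Matrix ι ι ℂ) (hdet : M.det ≠ 0) {z : ι → ℂ}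
    (h : M.mulVec z = 0) : z = 0 := by
  by_contra hz
  exact hdet (Matrix.exists_mulVec_eq_zero_iff.1 ⟨z, hz, h⟩)


variable {n : ℕ}

/-- Embedding of `W ⊕ Fin 2` into `Fin n`, sending `inr 0` to `i` and `inr 1` to `a`. -/
def emb (W : Finset (Fin n)) (i a : Fin n) : ({x // x ∈ W} ⊕ Fin 2) → Fin n :=
  Sum.elim Subtype.val ![i, a]

lemma emb_inj {W : Finset (Fin n)} {i a : Fin n} (hi : i ∉ W) (ha : a ∉ W) (hia : i ≠ a) :
    Function.Injective (emb W i a) := by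
  have hv : ∀ t : Fin 2, ![i, a] t ∉ W := by
    intro t; fin_cases t <;> simpa using by assumption
  rintro (x | t) (y | s) h
  · exact congrArg Sum.inl (Subtype.ext h)
  · simp only [emb, Sum.elim_inl, Sum.elim_inr] at h
    exact absurd (h ▸ x.prop) (hv s)
  · simp only [emb, Sum.elim_inl, Sum.elim_inr] at h
    exact absurd (h.symm ▸ y.prop) (hv t)
  · fin_cases t <;> fin_cases s <;> simp [emb] at h ⊢ <;>
      exact absurd h (by first | exact hia | exact hia.symm)


section Bridges
variable {n : ℕ} (B : Matrix (Fin n) (Fin n) ℂ)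

lemma det_blocks (W : Finset (Fin n)) (i a : Fin n) :
    ((B.submatrix (emb W i a) (emb W i a)).toBlocks₁₁).det = pminor B W := by
  have h : (B.submatrix (emb W i a) (emb W i a)).toBlocks₁₁
      = B.submatrix (fun x : {x // x ∈ W} => (x : Fin n)) (fun x : {x // x ∈ W} => (x : Fin n)) := by
    ext x y; rfl
  rw [h]; rfl

lemma det_emb (W : Finset (Fin n)) (i a : Fin n) (hi : i ∉ W) (ha : a ∉ W) (hia : i ≠ a) :
    (B.submatrix (emb W i a) (emb W i a)).det = pminor B (insert i (insert a W)) := by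
  apply det_submatrix_eq_pminor B _ (emb_inj hi ha hia)
  intro x
  constructor
  · intro hx
    rcases Finset.mem_insert.1 hx with rfl | hx
    · exact ⟨Sum.inr 0, rfl⟩
    rcases Finset.mem_insert.1 hx with rfl | hx
    · exact ⟨Sum.inr 1, rfl⟩
    · exact ⟨Sum.inl ⟨x, hx⟩, rfl⟩
  · rintro ⟨(y | t), rfl⟩
    · simp [emb, y.prop]
    · fin_cases t <;> simp [emb]

lemma det_emb_del (W : Finset (Fin n)) (i a : Fin n) (hi : i ∉ W) (ha : a ∉ W) (hia : i ≠ a) :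
    ((B.submatrix (emb W i a) (emb W i a)).submatrix (g 0) (g 0)).det = pminor B (insert i W)
    ∧ ((B.submatrix (emb W i a) (emb W i a)).submatrix (g 1) (g 1)).det = pminor B (insert a W) := by
  constructor
  · rw [Matrix.submatrix_submatrix]
    apply det_submatrix_eq_pminor B _ ((emb_inj hi ha hia).comp (g_inj 0))
    intro x
    constructor
    · intro hx
      rcases Finset.mem_insert.1 hx with rfl | hx
      · exact ⟨Sum.inr (), rfl⟩
      · exact ⟨Sum.inl ⟨x, hx⟩, rfl⟩
    · rintro ⟨(y | t), rfl⟩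
      · simp [emb, g, y.prop]
      · simp [emb, g]
  · rw [Matrix.submatrix_submatrix]
    apply det_submatrix_eq_pminor B _ ((emb_inj hi ha hia).comp (g_inj 1))
    intro x
    constructor
    · intro hx
      rcases Finset.mem_insert.1 hx with rfl | hx
      · exact ⟨Sum.inr (), rfl⟩
      · exact ⟨Sum.inl ⟨x, hx⟩, rfl⟩
    · rintro ⟨(y | t), rfl⟩
      · simp [emb, g, y.prop]
      · simp [emb, g]

end Bridges


section Bridges2
variable {n : ℕ} (B : Matrix (Fin n) (Fin n) ℂ)

/-- delete `inl j'` and `inr 1` from the `(k+1)`-block: principal minor on `insert i (W.erase j')`. -/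
lemma det_emb_del2 (W : Finset (Fin n)) (i a : Fin n) (hi : i ∉ W) (ha : a ∉ W) (hia : i ≠ a)
    (j' : {x // x ∈ W}) :
    ((B.submatrix (emb W i a) (emb W i a)).submatrix
      (fun y : {x : {x // x ∈ W} ⊕ Fin 2 // x ≠ Sum.inl j' ∧ x ≠ Sum.inr 1} => y.val)
      (fun y => y.val)).det = pminor B (insert i (W.erase j'.val)) := by
  rw [Matrix.submatrix_submatrix]
  apply det_submatrix_eq_pminor B _
    ((emb_inj hi ha hia).comp (fun u v huv => Subtype.ext huv))
  intro x
  constructor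
  · intro hx
    rcases Finset.mem_insert.1 hx with rfl | hx
    · exact ⟨⟨Sum.inr 0, by simp, by simp⟩, rfl⟩
    · obtain ⟨hxj, hxW⟩ := Finset.mem_erase.1 hx
      exact ⟨⟨Sum.inl ⟨x, hxW⟩, by simp [Subtype.ext_iff, hxj], by simp⟩, rfl⟩
  · rintro ⟨⟨(y | t), hp⟩, rfl⟩
    · have hyj : y ≠ j' := fun h => hp.1 (by rw [h])
      simp only [Function.comp_apply, emb, Sum.elim_inl]
      exact Finset.mem_insert_of_mem (Finset.mem_erase.2 ⟨fun h => hyj (Subtype.ext h), y.prop⟩)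
    · fin_cases t
      · simp [emb]
      · exact absurd rfl hp.2

/-- delete `inl j'` only: principal minor on `insert i (insert a (W.erase j'))`. -/
lemma det_emb_del1l (W : Finset (Fin n)) (i a : Fin n) (hi : i ∉ W) (ha : a ∉ W) (hia : i ≠ a)
    (j' : {x // x ∈ W}) :
    ((B.submatrix (emb W i a) (emb W i a)).submatrix
      (fun y : {x : {x // x ∈ W} ⊕ Fin 2 // x ≠ Sum.inl j'} => y.val)
      (fun y => y.val)).det = pminor B (insert i (insert a (W.erase j'.val))) := by
  rw [Matrix.submatrix_submatrix]
  apply det_submatrix_eq_pminor B _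
    ((emb_inj hi ha hia).comp (fun u v huv => Subtype.ext huv))
  intro x
  constructor
  · intro hx
    rcases Finset.mem_insert.1 hx with rfl | hx
    · exact ⟨⟨Sum.inr 0, by simp⟩, rfl⟩
    rcases Finset.mem_insert.1 hx with rfl | hx
    · exact ⟨⟨Sum.inr 1, by simp⟩, rfl⟩
    · obtain ⟨hxj, hxW⟩ := Finset.mem_erase.1 hx
      exact ⟨⟨Sum.inl ⟨x, hxW⟩, by simp [Subtype.ext_iff, hxj]⟩, rfl⟩
  · rintro ⟨⟨(y | t), hp⟩, rfl⟩
    · have hyj : y ≠ j' := fun h => hp (by rw [h])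
      simp only [Function.comp_apply, emb, Sum.elim_inl]
      exact Finset.mem_insert_of_mem (Finset.mem_insert_of_mem
        (Finset.mem_erase.2 ⟨fun h => hyj (Subtype.ext h), y.prop⟩))
    · fin_cases t <;> simp [emb]

/-- delete `inr 0`: principal minor on `insert a W`. -/
lemma det_emb_del1r (W : Finset (Fin n)) (i a : Fin n) (hi : i ∉ W) (ha : a ∉ W) (hia : i ≠ a) :
    ((B.submatrix (emb W i a) (emb W i a)).submatrix
      (fun y : {x : {x // x ∈ W} ⊕ Fin 2 // x ≠ Sum.inr 0} => y.val)
      (fun y => y.val)).det = pminor B (insert a W) := by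
  rw [Matrix.submatrix_submatrix]
  apply det_submatrix_eq_pminor B _
    ((emb_inj hi ha hia).comp (fun u v huv => Subtype.ext huv))
  intro x
  constructor
  · intro hx
    rcases Finset.mem_insert.1 hx with rfl | hx
    · exact ⟨⟨Sum.inr 1, by simp⟩, rfl⟩
    · exact ⟨⟨Sum.inl ⟨x, hx⟩, by simp⟩, rfl⟩
  · rintro ⟨⟨(y | t), hp⟩, rfl⟩
    · simp [emb, y.prop]
    · fin_cases t
      · exact absurd rfl hp
      · simp [emb]

end Bridges2


section Main
variable {n : ℕ} (B : Matrix (Fin n) (Fin n) ℂ)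

lemma L1 (hB : B.IsHermitian) {k : ℕ} (hk : 1 ≤ k)
    (hAplus : ∀ α : Finset (Fin n), α.card = k - 1 → 0 < pminor B α)
    (hnonneg' : ∀ α : Finset (Fin n), α.card = k + 1 → 0 ≤ pminor B α)
    (W : Finset (Fin n)) (hW : W.card = k - 1)
    (i a : Fin n) (hi : i ∉ W) (ha : a ∉ W) (hia : i ≠ a) :
    0 ≤ pminor B (insert i W) * pminor B (insert a W) := by
  have hM : (B.submatrix (emb W i a) (emb W i a)).IsHermitian := hB.submatrix _
  have hA : 0 < (B.submatrix (emb W i a) (emb W i a)).toBlocks₁₁.det := by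
    rw [det_blocks]; exact hAplus W hW
  have hcard : (insert i (insert a W)).card = k + 1 := by
    rw [Finset.card_insert_of_notMem (by simp [Finset.mem_insert, hia, hi]),
      Finset.card_insert_of_notMem ha, hW]
    omega
  have hd : 0 ≤ (B.submatrix (emb W i a) (emb W i a)).det := by
    rw [det_emb B W i a hi ha hia]; exact hnonneg' _ hcard
  obtain ⟨h1, -⟩ := core _ hM hA hd
  rwa [(det_emb_del B W i a hi ha hia).1, (det_emb_del B W i a hi ha hia).2] at h1

lemma C1 (hB : B.IsHermitian) {k : ℕ}
    (hAplus : ∀ α : Finset (Fin n), α.card = k - 1 → 0 < pminor B α)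
    (hnonneg' : ∀ α : Finset (Fin n), α.card = k + 1 → 0 ≤ pminor B α)
    (T : Finset (Fin n)) (hT : T.card = k) (hT0 : pminor B T = 0)
    (a : Fin n) (ha : a ∉ T) {i j : Fin n} (hiT : i ∈ T) (hjT : j ∈ T)
    (hne : pminor B (insert a (T.erase i)) ≠ 0) :
    pminor B (insert a (T.erase j)) ≠ 0 := by
  by_cases hij : j = i
  · rwa [hij]
  set W := T.erase i with hWdef
  have hiW : i ∉ W := Finset.notMem_erase i T
  have haW : a ∉ W := fun h => ha (Finset.mem_of_mem_erase h)
  have hia : i ≠ a := fun h => ha (h ▸ hiT)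
  have hWcard : W.card = k - 1 := by rw [hWdef, Finset.card_erase_of_mem hiT, hT]
  have hjW : j ∈ W := Finset.mem_erase.2 ⟨hij, hjT⟩
  have hWpos : 1 ≤ k - 1 := by
    have := Finset.card_pos.2 ⟨j, hjW⟩
    omega
  set M := B.submatrix (emb W i a) (emb W i a) with hMdef
  have hM : M.IsHermitian := hB.submatrix _
  have hA : 0 < M.toBlocks₁₁.det := by rw [hMdef, det_blocks]; exact hAplus W hWcard
  have hiaW : insert i (insert a W) = insert a T := by
    rw [Finset.insert_comm, hWdef, Finset.insert_erase hiT]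
  have hUcard : (insert a T).card = k + 1 := by
    rw [Finset.card_insert_of_notMem ha, hT]
  have hd : 0 ≤ M.det := by
    rw [hMdef, det_emb B W i a hiW haW hia, hiaW]; exact hnonneg' _ hUcard
  have hdel0 : (M.submatrix (g 0) (g 0)).det = 0 := by
    rw [hMdef, (det_emb_del B W i a hiW haW hia).1, hWdef, Finset.insert_erase hiT]
    exact hT0
  obtain ⟨-, h2⟩ := core M hM hA hd
  obtain ⟨w, hwM, hw1, hw0⟩ := h2 hdel0
  set j' : {x // x ∈ W} := ⟨j, hjW⟩ with hj'def
  have hj'v : (j' : Fin n) = j := rfl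
  -- the distinguished coordinate of the kernel vector is nonzero
  have hwj : w (Sum.inl j') ≠ 0 := by
    intro hwj0
    have hz : ∀ x, ¬ (x ≠ Sum.inl j' ∧ x ≠ Sum.inr 1) → w x = 0 := by
      intro x hx
      rcases not_and_or.1 hx with h | h
      · rw [not_not] at h; rw [h]; exact hwj0
      · rw [not_not] at h; rw [h]; exact hw0
    have hres := mulVec_restrict M hwM (fun x => x ≠ Sum.inl j' ∧ x ≠ Sum.inr 1) hz
    have hnz : (fun y : {x // x ≠ Sum.inl j' ∧ x ≠ Sum.inr 1} => w y.val) ≠ 0 := by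
      intro h0
      have h00 := congrFun h0 ⟨Sum.inr 0, by simp, by simp⟩
      rw [Pi.zero_apply] at h00
      exact one_ne_zero (hw1 ▸ h00)
    have hdd := Matrix.exists_mulVec_eq_zero_iff.1 ⟨_, hnz, hres⟩
    rw [hMdef, det_emb_del2 B W i a hiW haW hia j'] at hdd
    have hcc : (insert i (W.erase (j' : Fin n))).card = k - 1 := by
      rw [hj'v, Finset.card_insert_of_notMem (fun h => hiW (Finset.mem_of_mem_erase h)),
        Finset.card_erase_of_mem hjW, hWcard]
      omega
    have hpos := hAplus _ hcc
    rw [hdd] at hpos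
    exact lt_irrefl 0 hpos
  -- main argument
  intro hj0
  have hset1 : insert i (insert a (W.erase (j' : Fin n))) = insert a (T.erase j) := by
    rw [hj'v, Finset.insert_comm]
    congr 1
    rw [hWdef, Finset.erase_right_comm, Finset.insert_erase
      (Finset.mem_erase.2 ⟨fun h => hij h.symm, hiT⟩)]
  have hdet1 : ((M.submatrix
      (fun y : {x : {x // x ∈ W} ⊕ Fin 2 // x ≠ Sum.inl j'} => y.val)
      (fun y => y.val))).det = 0 := by
    rw [hMdef, det_emb_del1l B W i a hiW haW hia j', hset1]
    exact hj0
  obtain ⟨u, hu0, huk⟩ := Matrix.exists_mulVec_eq_zero_iff.2 hdet1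
  set uu : ({x // x ∈ W} ⊕ Fin 2) → ℂ :=
    fun y => if h : y ≠ Sum.inl j' then u ⟨y, h⟩ else 0 with huudef
  have hext : ∀ x, x ≠ Sum.inl j' → M.mulVec uu x = 0 :=
    fun x hx => mulVec_extend M (fun y => y ≠ Sum.inl j') u huk x hx
  have hvm : Matrix.vecMul (star w) M = 0 := by
    have h := Matrix.star_mulVec M w
    rw [hwM, star_zero, show Mᴴ = M from hM] at h
    exact h.symm
  have hsum : ∑ x, star (w x) * (M.mulVec uu) x = 0 := by
    have h := Matrix.dotProduct_mulVec (star w) M uu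
    rw [hvm, zero_dotProduct] at h
    exact h
  have hs0 : (M.mulVec uu) (Sum.inl j') = 0 := by
    have hsingle : ∑ x, star (w x) * (M.mulVec uu) x
        = star (w (Sum.inl j')) * (M.mulVec uu) (Sum.inl j') :=
      Finset.sum_eq_single _ (fun b _ hb => by rw [hext b hb, mul_zero])
        (fun h => absurd (Finset.mem_univ _) h)
    rw [hsingle] at hsum
    rcases mul_eq_zero.1 hsum with h | h
    · exact absurd (star_eq_zero.1 h) hwj
    · exact h
  have huuk : M.mulVec uu = 0 := by
    funext x
    rw [Pi.zero_apply]
    by_cases hx : x = Sum.inl j'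
    · rw [hx]; exact hs0
    · exact hext x hx
  set z : ({x // x ∈ W} ⊕ Fin 2) → ℂ := uu - uu (Sum.inr 0) • w with hzdef
  have hz0 : M.mulVec z = 0 := by
    rw [hzdef, Matrix.mulVec_sub, Matrix.mulVec_smul, huuk, hwM, smul_zero, sub_zero]
  have hzi : z (Sum.inr 0) = 0 := by
    rw [hzdef]
    simp only [Pi.sub_apply, Pi.smul_apply, smul_eq_mul, hw1, mul_one, sub_self]
  have hres2 := mulVec_restrict M hz0 (fun x => x ≠ Sum.inr 0)
    (fun x hx => by rw [not_not] at hx; rw [hx]; exact hzi)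
  have hdne : ((M.submatrix (fun y : {x : {x // x ∈ W} ⊕ Fin 2 // x ≠ Sum.inr 0} => y.val)
      (fun y => y.val))).det ≠ 0 := by
    rw [hMdef, det_emb_del1r B W i a hiW haW hia]
    exact hne
  have hzrest := eq_zero_of_mulVec_of_det_ne _ hdne hres2
  have hzall : ∀ x, z x = 0 := by
    intro x
    by_cases hx : x = Sum.inr 0
    · rw [hx]; exact hzi
    · exact congrFun hzrest ⟨x, hx⟩
  have huuj : uu (Sum.inl j') = 0 := by
    rw [huudef]
    exact dif_neg (by simp)
  have hu00 : uu (Sum.inr 0) = 0 := by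
    have h := hzall (Sum.inl j')
    rw [hzdef] at h
    simp only [Pi.sub_apply, Pi.smul_apply, smul_eq_mul, huuj, zero_sub, neg_eq_zero] at h
    exact (mul_eq_zero.1 h).resolve_right hwj
  apply hu0
  funext y
  have h := hzall y.val
  rw [hzdef] at h
  simp only [Pi.sub_apply, Pi.smul_apply, smul_eq_mul, hu00, zero_mul, sub_zero] at h
  simp only [huudef] at h
  rw [dif_pos y.prop] at h
  rw [Pi.zero_apply]
  simpa using h

end Main


section Endgame
variable {n : ℕ} (B : Matrix (Fin n) (Fin n) ℂ)

lemma real_trichotomy (z : ℂ) (hz : star z = z) : z < 0 ∨ z = 0 ∨ 0 < z := by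
  have him : z.im = 0 := by
    have h := congrArg Complex.im hz
    simp only [Complex.star_def, Complex.conj_im] at h
    linarith
  rcases lt_trichotomy z.re 0 with h | h | h
  · left
    rw [Complex.lt_def]
    exact ⟨by simpa using h, by simpa using him⟩
  · right; left
    exact Complex.ext (by simpa using h) (by simpa using him)
  · right; right
    rw [Complex.lt_def]
    exact ⟨by simpa using h, by simpa using him.symm⟩

lemma pminor_real (hB : B.IsHermitian) (α : Finset (Fin n)) :
    star (pminor B α) = pminor B α := by
  have hN : (B.submatrix (fun i : α => (i : Fin n)) (fun i : α => (i : Fin n))).IsHermitian :=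
    hB.submatrix _
  rw [pminor, ← Matrix.det_conjTranspose, show _ᴴ = _ from hN]

/-- The invariant carried along paths in the Johnson graph. -/
def Inv {n : ℕ} (B : Matrix (Fin n) (Fin n) ℂ) (T : Finset (Fin n)) : Prop :=
  0 < pminor B T ∨ (pminor B T = 0 ∧
    ∃ i ∈ T, ∃ b, b ∉ T ∧ 0 < pminor B (insert b (T.erase i)))

lemma step (hB : B.IsHermitian) {k : ℕ} (hk2 : 2 ≤ k)
    (hAplus : ∀ α : Finset (Fin n), α.card = k - 1 → 0 < pminor B α)
    (hnonneg' : ∀ α : Finset (Fin n), α.card = k + 1 → 0 ≤ pminor B α)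
    (T : Finset (Fin n)) (hT : T.card = k) (hInv : Inv B T)
    (i : Fin n) (hiT : i ∈ T) (a : Fin n) (haT : a ∉ T) :
    Inv B (insert a (T.erase i)) := by
  have hk1 : 1 ≤ k := by omega
  set T' := insert a (T.erase i) with hT'def
  have hia : i ≠ a := fun h => haT (h ▸ hiT)
  have haE : a ∉ T.erase i := fun h => haT (Finset.mem_of_mem_erase h)
  have hiE : i ∉ T.erase i := Finset.notMem_erase i T
  have hWcard : (T.erase i).card = k - 1 := by rw [Finset.card_erase_of_mem hiT, hT]
  have hprod : 0 ≤ pminor B T * pminor B T' := by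
    have h := L1 B hB hk1 hAplus hnonneg' (T.erase i) hWcard i a hiE haE hia
    rwa [Finset.insert_erase hiT] at h
  have htri := real_trichotomy (pminor B T') (pminor_real B hB T')
  have haT' : a ∈ T' := Finset.mem_insert_self a _
  have hiT' : i ∉ T' := by
    rw [hT'def]
    simp [Finset.mem_insert, hia, Finset.notMem_erase]
  have hT'a : T'.erase a = T.erase i := by
    rw [hT'def, Finset.erase_insert haE]
  rcases hInv with hpos | ⟨hzero, i0, hi0, b, hbT, hposn⟩
  · rcases htri with hneg | hz | hp
    · exact absurd hprod (by
        have h := mul_neg_of_pos_of_neg hpos hneg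
        exact fun hh => lt_irrefl 0 (hh.trans_lt h))
    · exact Or.inr ⟨hz, a, haT', i, hiT', by
        rw [hT'a, Finset.insert_erase hiT]; exact hpos⟩
    · exact Or.inl hp
  · -- `pminor B T = 0` with positive neighbour `insert b (T.erase i0)`; transfer `i0 → i`
    have hbi : 0 < pminor B (insert b (T.erase i)) := by
      by_cases hii0 : i = i0
      · rwa [hii0]
      have hi0i : i0 ≠ i := fun h => hii0 h.symm
      have hne0 : pminor B (insert b (T.erase i)) ≠ 0 :=
        C1 B hB hAplus hnonneg' T hT hzero b hbT hi0 hiT (ne_of_gt hposn)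
      have hi0Ei : i0 ∈ T.erase i := Finset.mem_erase.2 ⟨hi0i, hi0⟩
      have hiEi0 : i ∈ T.erase i0 := Finset.mem_erase.2 ⟨hii0, hiT⟩
      set W2 := insert b ((T.erase i).erase i0) with hW2def
      have hbE2 : b ∉ (T.erase i).erase i0 := fun h => hbT
        (Finset.mem_of_mem_erase (Finset.mem_of_mem_erase h))
      have hW2card : W2.card = k - 1 := by
        rw [hW2def, Finset.card_insert_of_notMem hbE2,
          Finset.card_erase_of_mem hi0Ei, hWcard]
        have h2 : 2 ≤ T.card := by omega
        omega
      have hi0W2 : i0 ∉ W2 := by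
        rw [hW2def, Finset.mem_insert]
        push_neg
        exact ⟨fun h => hbT (h ▸ hi0), Finset.notMem_erase i0 _⟩
      have hiW2 : i ∉ W2 := by
        rw [hW2def, Finset.mem_insert]
        push_neg
        refine ⟨fun h => hbT (h ▸ hiT), fun h => hiE (Finset.mem_of_mem_erase h)⟩
      have hL2 := L1 B hB hk1 hAplus hnonneg' W2 hW2card i0 i hi0W2 hiW2 hi0i
      have hins1 : insert i0 W2 = insert b (T.erase i) := by
        rw [hW2def, Finset.insert_comm, Finset.insert_erase hi0Ei]
      have hins2 : insert i W2 = insert b (T.erase i0) := by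
        rw [hW2def, Finset.insert_comm, Finset.erase_right_comm,
          Finset.insert_erase hiEi0]
      rw [hins1, hins2] at hL2
      rcases real_trichotomy (pminor B (insert b (T.erase i)))
        (pminor_real B hB _) with hneg | hz | hp
      · exfalso
        have h := mul_neg_of_neg_of_pos hneg hposn
        exact lt_irrefl 0 (hL2.trans_lt h)
      · exact absurd hz hne0
      · exact hp
    by_cases hab : b = a
    · left
      rw [hT'def, ← hab]
      exact hbi
    · rcases htri with hneg | hz | hp
      · exfalso
        have hbE : b ∉ T.erase i := fun h => hbT (Finset.mem_of_mem_erase h)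
        have hL := L1 B hB hk1 hAplus hnonneg' (T.erase i) hWcard b a hbE haE hab
        rw [← hT'def] at hL
        have h := mul_neg_of_pos_of_neg hbi hneg
        exact lt_irrefl 0 (hL.trans_lt h)
      · refine Or.inr ⟨hz, a, haT', b, ?_, ?_⟩
        · rw [hT'def, Finset.mem_insert]
          push_neg
          exact ⟨hab, fun h => hbT (Finset.mem_of_mem_erase h)⟩
        · rw [hT'a]
          exact hbi
      · exact Or.inl hp

lemma reach (hB : B.IsHermitian) {k : ℕ} (hk2 : 2 ≤ k)
    (hAplus : ∀ α : Finset (Fin n), α.card = k - 1 → 0 < pminor B α)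
    (hnonneg' : ∀ α : Finset (Fin n), α.card = k + 1 → 0 ≤ pminor B α) :
    ∀ (r : ℕ) (T T' : Finset (Fin n)), T.card = k → Inv B T → T'.card = k →
      (T' \ T).card ≤ r → Inv B T' := by
  intro r
  induction r with
  | zero =>
    intro T T' hT hInv hT' hcard
    have h0 : T' \ T = ∅ := Finset.card_eq_zero.1 (Nat.le_zero.1 hcard)
    have hsub : T' ⊆ T := by
      intro x hx
      by_contra hxT
      exact absurd (Finset.mem_sdiff.2 ⟨hx, hxT⟩) (by rw [h0]; exact Finset.notMem_empty x)
    have : T' = T := Finset.eq_of_subset_of_card_le hsub (by omega)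
    rwa [this]
  | succ r ih =>
    intro T T' hT hInv hT' hcard
    by_cases hle : (T' \ T).card ≤ r
    · exact ih T T' hT hInv hT' hle
    obtain ⟨a, haTT⟩ : (T' \ T).Nonempty := Finset.card_pos.1 (by omega)
    obtain ⟨ha1, ha2⟩ := Finset.mem_sdiff.1 haTT
    have hTT' : (T \ T').Nonempty := by
      rcases Finset.eq_empty_or_nonempty (T \ T') with h | h
      · exfalso
        have hsub : T ⊆ T' := by
          intro x hx
          by_contra hxT
          exact absurd (Finset.mem_sdiff.2 ⟨hx, hxT⟩) (by rw [h]; exact Finset.notMem_empty x)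
        have hTeq : T = T' := Finset.eq_of_subset_of_card_le hsub (by omega)
        have h0 : (T' \ T).card = 0 := by
          rw [hTeq, Finset.sdiff_self, Finset.card_empty]
        omega
      · exact h
    obtain ⟨i, hiTT⟩ := hTT'
    obtain ⟨hi1, hi2⟩ := Finset.mem_sdiff.1 hiTT
    have hmidInv := step B hB hk2 hAplus hnonneg' T hT hInv i hi1 a ha2
    have hmidcard : (insert a (T.erase i)).card = k := by
      rw [Finset.card_insert_of_notMem (fun h => ha2 (Finset.mem_of_mem_erase h)),
        Finset.card_erase_of_mem hi1, hT]
      omega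
    apply ih _ T' hmidcard hmidInv hT'
    have hsub : T' \ insert a (T.erase i) ⊆ (T' \ T).erase a := by
      intro x hx
      obtain ⟨hx1, hx2⟩ := Finset.mem_sdiff.1 hx
      rw [Finset.mem_insert] at hx2
      push_neg at hx2
      obtain ⟨hxa, hxE⟩ := hx2
      refine Finset.mem_erase.2 ⟨hxa, Finset.mem_sdiff.2 ⟨hx1, fun hxT => ?_⟩⟩
      have : x = i := by
        by_contra hxi
        exact hxE (Finset.mem_erase.2 ⟨hxi, hxT⟩)
      exact hi2 (this ▸ hx1)
    have := Finset.card_le_card hsub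
    have hae := Finset.card_erase_of_mem haTT
    omega

end Endgame

end Forbidden

/-- The sequence A⁺S*S⁺ is forbidden for Hermitian matrices. -/
theorem forbidden_AplusSstarSplus {n : ℕ} (B : Matrix (Fin n) (Fin n) ℂ) (hB : B.IsHermitian)
    (k : ℕ) (hk2 : 2 ≤ k) (hkn : k ≤ n - 1)
    (hAplus : ∀ α : Finset (Fin n), α.card = k - 1 → 0 < pminor B α)
    (hpos : ∃ α : Finset (Fin n), α.card = k ∧ 0 < pminor B α)
    (hneg : ∃ α : Finset (Fin n), α.card = k ∧ pminor B α < 0)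
    (hzero : ∃ α : Finset (Fin n), α.card = k ∧ pminor B α = 0)
    (hnonneg' : ∀ α : Finset (Fin n), α.card = k + 1 → 0 ≤ pminor B α)
    (hzero' : ∃ α : Finset (Fin n), α.card = k + 1 ∧ pminor B α = 0)
    (hpos' : ∃ α : Finset (Fin n), α.card = k + 1 ∧ 0 < pminor B α) :
    False := by
  obtain ⟨P, hPcard, hPpos⟩ := hpos
  obtain ⟨Q, hQcard, hQneg⟩ := hneg
  have hInvP : Forbidden.Inv B P := Or.inl hPpos
  have hInvQ : Forbidden.Inv B Q :=
    Forbidden.reach B hB hk2 hAplus hnonneg' ((Q \ P).card) P Q hPcard hInvP hQcard le_rfl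
  rcases hInvQ with h | ⟨h, -⟩
  · exact lt_irrefl _ (h.trans hQneg)
  · rw [h] at hQneg
    exact lt_irrefl _ hQneg
end

section
/- There is no n×n complex Hermitian matrix B and index k with 2 ≤ k ≤ n−1 such that simultaneously: (i) the order-(k−1) principal minors of B are all nonnegative with at least one zero and at least one positive, (ii) among the order-k principal minors positive, negative, and zero values all occur, and (iii) the order-(k+1) principal minors are all nonnegative with at least one zero and at least one positive. (The sequence S⁺S*S⁺ is forbidden.) -/
open ComplexOrder

namespace Forbidden

open Matrix Finset

variable {m : Type*} [DecidableEq m] [Fintype m] {R : Type*} [CommRing R]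

lemma pminor_reindex (A : Matrix m m R) (s : Finset m) {ι : Type*} [Fintype ι] [DecidableEq ι]
    (e : ι ≃ ↥s) :
    (A.submatrix (fun i => ((e i : ↥s) : m)) (fun i => ((e i : ↥s) : m))).det = pminor A s := by
  have : (A.submatrix (fun i => ((e i : ↥s) : m)) (fun i => ((e i : ↥s) : m)))
      = (A.submatrix (fun i : ↥s => (i : m)) (fun i : ↥s => (i : m))).submatrix e e := rfl
  rw [this, Matrix.det_submatrix_equiv_self]
  rfl

lemma pminor_singleton (A : Matrix m m R) (i : m) : pminor A {i} = A i i := by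
  letI : Unique ↥({i} : Finset m) :=
    ⟨⟨⟨i, Finset.mem_singleton_self i⟩⟩, by
      rintro ⟨a, ha⟩
      simp only [Finset.mem_singleton] at ha
      subst ha; rfl⟩
  rw [pminor, Matrix.det_unique]
  show A _ _ = A i i
  congr 1

lemma pminor_pair (A : Matrix m m R) {i j : m} (hij : i ≠ j) :
    pminor A {i, j} = A i i * A j j - A i j * A j i := by
  have hi : i ∈ ({i, j} : Finset m) := by simp
  have hj : j ∈ ({i, j} : Finset m) := by simp
  let e : Fin 2 ≃ ↥({i, j} : Finset m) :=
    { toFun := ![⟨i, hi⟩, ⟨j, hj⟩]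
      invFun := fun a => if (a : m) = i then 0 else 1
      left_inv := by
        intro a
        fin_cases a <;> simp [hij.symm, hij]
      right_inv := by
        rintro ⟨a, ha⟩
        simp only [Finset.mem_insert, Finset.mem_singleton] at ha
        rcases ha with rfl | rfl
        · simp
        · simp [hij.symm, Ne.symm hij, hij] }
  rw [← pminor_reindex A _ e, Matrix.det_fin_two]
  simp [e, Matrix.submatrix_apply]

/-- Equivalence between a disjoint union of finsets and their union. -/
def unionEquiv {s t : Finset m} (h : Disjoint s t) : ↥s ⊕ ↥t ≃ ↥(s ∪ t) where
  toFun := fun x => match x with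
    | Sum.inl a => ⟨a, Finset.mem_union_left _ a.2⟩
    | Sum.inr b => ⟨b, Finset.mem_union_right _ b.2⟩
  invFun := fun a =>
    if h' : (a : m) ∈ s then Sum.inl ⟨a, h'⟩ else
      Sum.inr ⟨a, by
        rcases Finset.mem_union.1 a.2 with hs | ht
        · exact absurd hs h'
        · exact ht⟩
  left_inv := by
    rintro (⟨a, ha⟩ | ⟨b, hb⟩)
    · simp [ha]
    · have : b ∉ s := fun hbs => (Finset.disjoint_left.1 h) hbs hb
      simp [this]
  right_inv := by
    rintro ⟨a, ha⟩
    by_cases h' : a ∈ s <;> simp [h']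

@[simp] lemma unionEquiv_inl {s t : Finset m} (h : Disjoint s t) (a : ↥s) :
    ((unionEquiv h (Sum.inl a) : ↥(s ∪ t)) : m) = (a : m) := rfl

@[simp] lemma unionEquiv_inr {s t : Finset m} (h : Disjoint s t) (b : ↥t) :
    ((unionEquiv h (Sum.inr b) : ↥(s ∪ t)) : m) = (b : m) := rfl

lemma sum_W_plus (B : Matrix m m R) (W : Finset m) {a : m} (ha : a ∉ W) (v : m → R)
    (hva : v a = 1) (hv0 : ∀ c, c ∉ W → c ≠ a → v c = 0) (r : m) :
    (∑ w : ↥W, B r ↑w * v ↑w) + B r a = B.mulVec v r := by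
  have h1 : B.mulVec v r = ∑ j : m, B r j * v j := rfl
  have h2 : ∑ j ∈ (W ∪ {a}), B r j * v j = ∑ j : m, B r j * v j := by
    apply Finset.sum_subset (Finset.subset_univ _)
    intro x _ hx
    rw [Finset.mem_union, Finset.mem_singleton] at hx
    push_neg at hx
    rw [hv0 x hx.1 hx.2, mul_zero]
  have hd : Disjoint W ({a} : Finset m) := by simp [ha]
  rw [h1, ← h2, Finset.sum_union hd, Finset.sum_singleton, hva, mul_one]
  congr 1
  exact Finset.sum_coe_sort W (fun w => B r w * v w)

lemma star_dot_eq [StarRing R] (B : Matrix m m R) (W : Finset m) {a : m} (ha : a ∉ W)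
    (va vb : m → R) (hva1 : va a = 1) (hva0 : ∀ c, c ∉ W → c ≠ a → va c = 0)
    (hbW : ∀ r ∈ W, B.mulVec vb r = 0) :
    star va ⬝ᵥ B.mulVec vb = B.mulVec vb a := by
  have h2 : ∑ j ∈ (W ∪ {a}), star (va j) * B.mulVec vb j
      = ∑ j : m, star (va j) * B.mulVec vb j := by
    apply Finset.sum_subset (Finset.subset_univ _)
    intro x _ hx
    rw [Finset.mem_union, Finset.mem_singleton] at hx
    push_neg at hx
    rw [hva0 x hx.1 hx.2, star_zero, zero_mul]
  have hd : Disjoint W ({a} : Finset m) := by simp [ha]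
  have h3 : ∑ j ∈ W, star (va j) * B.mulVec vb j = 0 := by
    apply Finset.sum_eq_zero
    intro w hw
    rw [hbW w hw, mul_zero]
  have : star va ⬝ᵥ B.mulVec vb = ∑ j : m, star (va j) * B.mulVec vb j := rfl
  rw [this, ← h2, Finset.sum_union hd, h3, Finset.sum_singleton, hva1, star_one, one_mul, zero_add]

lemma pminor_congruence [StarRing R] (B : Matrix m m R) (W S : Finset m) (hdisj : Disjoint W S)
    (v : m → m → R)
    (hv1 : ∀ a ∈ S, v a a = 1)
    (hv0 : ∀ a ∈ S, ∀ c, c ∉ W → c ≠ a → v a c = 0)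
    (hvW : ∀ a ∈ S, ∀ r ∈ W, B.mulVec (v a) r = 0) :
    pminor B (W ∪ S)
      = pminor B W * pminor (Matrix.of fun a b : m => star (v a) ⬝ᵥ B.mulVec (v b)) S := by
  classical
  have hmem : ∀ a ∈ S, a ∉ W := fun a haS => (Finset.disjoint_right.1 hdisj) haS
  set H : Matrix m m R := Matrix.of fun a b : m => star (v a) ⬝ᵥ B.mulVec (v b) with hH
  rw [← pminor_reindex B (W ∪ S) (unionEquiv hdisj)]
  set f : ↥W ⊕ ↥S → m := fun i => ((unionEquiv hdisj i : ↥(W ∪ S)) : m) with hf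
  set A' : Matrix (↥W ⊕ ↥S) (↥W ⊕ ↥S) R := B.submatrix f f with hA'
  set C : Matrix ↥W ↥S R := Matrix.of fun w a => v ↑a ↑w with hC
  set P : Matrix (↥W ⊕ ↥S) (↥W ⊕ ↥S) R :=
    Matrix.fromBlocks (1 : Matrix ↥W ↥W R) C 0 (1 : Matrix ↥S ↥S R) with hP
  have hdetP : P.det = 1 := by
    rw [hP, Matrix.det_fromBlocks_zero₂₁]; simp
  have key : A' * P = Matrix.fromBlocks
      (B.submatrix (fun i : ↥W => (i : m)) (fun i : ↥W => (i : m))) 0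
      (B.submatrix (fun i : ↥S => (i : m)) (fun i : ↥W => (i : m)))
      (H.submatrix (fun i : ↥S => (i : m)) (fun i : ↥S => (i : m))) := by
    ext x y
    rw [Matrix.mul_apply, Fintype.sum_sum_type]
    cases y with
    | inl w =>
      have : ∀ c : ↥S, A' x (Sum.inr c) * P (Sum.inr c) (Sum.inl w) = 0 := by
        intro c; simp [hP, Matrix.fromBlocks]
      rw [Finset.sum_congr rfl (fun c _ => this c), Finset.sum_const_zero, add_zero]
      have : ∀ c : ↥W, A' x (Sum.inl c) * P (Sum.inl c) (Sum.inl w)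
          = A' x (Sum.inl c) * (if c = w then 1 else 0) := by
        intro c; simp [hP, Matrix.fromBlocks, Matrix.one_apply]
      rw [Finset.sum_congr rfl (fun c _ => this c)]
      simp only [mul_ite, mul_one, mul_zero, Finset.sum_ite_eq', Finset.mem_univ, if_true]
      cases x with
      | inl w' => simp [hA', Matrix.fromBlocks, hf, unionEquiv]
      | inr b => simp [hA', Matrix.fromBlocks, hf, unionEquiv]
    | inr a =>
      have e1 : ∀ c : ↥S, A' x (Sum.inr c) * P (Sum.inr c) (Sum.inr a)
          = A' x (Sum.inr c) * (if c = a then 1 else 0) := by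
        intro c; simp [hP, Matrix.fromBlocks, Matrix.one_apply]
      have e2 : ∀ c : ↥W, A' x (Sum.inl c) * P (Sum.inl c) (Sum.inr a)
          = B (f x) ↑c * v ↑a ↑c := by
        intro c; simp [hP, hC, Matrix.fromBlocks, hA', hf, unionEquiv]
      rw [Finset.sum_congr rfl (fun c _ => e1 c), Finset.sum_congr rfl (fun c _ => e2 c)]
      simp only [mul_ite, mul_one, mul_zero, Finset.sum_ite_eq', Finset.mem_univ, if_true]
      have hxa : A' x (Sum.inr a) = B (f x) ↑a := rfl
      rw [hxa, sum_W_plus B W (hmem ↑a a.2) (v ↑a) (hv1 ↑a a.2) (hv0 ↑a a.2) (f x)]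
      cases x with
      | inl w' =>
        have : f (Sum.inl w') = (w' : m) := rfl
        rw [this, hvW ↑a a.2 ↑w' w'.2]
        simp [Matrix.fromBlocks]
      | inr b =>
        have hfb : f (Sum.inr b) = (b : m) := rfl
        rw [hfb]
        have : H ↑b ↑a = B.mulVec (v ↑a) ↑b :=
          star_dot_eq B W (hmem ↑b b.2) (v ↑b) (v ↑a) (hv1 ↑b b.2) (hv0 ↑b b.2)
            (hvW ↑a a.2)
        simp [Matrix.fromBlocks, this]
  have hch : A'.det = (A' * P).det := by rw [Matrix.det_mul, hdetP, mul_one]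
  show A'.det = _
  rw [hch, key, Matrix.det_fromBlocks_zero₁₂]
  rfl


section Corner

variable {p q : Type*} [Fintype p] [Fintype q] [DecidableEq p] [DecidableEq q]

lemma corner (A Bi : Matrix (p ⊕ q) (p ⊕ q) R) (h : A * Bi = 1) :
    A.det * (Bi.toBlocks₂₂).det = (A.toBlocks₁₁).det := by
  set a := A.toBlocks₁₁ with ha
  set b := A.toBlocks₁₂ with hb
  set c := A.toBlocks₂₁ with hc
  set d := A.toBlocks₂₂ with hd
  set e := Bi.toBlocks₁₁ with he
  set f' := Bi.toBlocks₁₂ with hf'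
  set g := Bi.toBlocks₂₁ with hg
  set h' := Bi.toBlocks₂₂ with hh'
  have hA : A = Matrix.fromBlocks a b c d := (Matrix.fromBlocks_toBlocks A).symm
  have hB : Bi = Matrix.fromBlocks e f' g h' := (Matrix.fromBlocks_toBlocks Bi).symm
  rw [hA, hB, Matrix.fromBlocks_multiply, ← Matrix.fromBlocks_one] at h
  have h12 : a * f' + b * h' = 0 := by
    ext i j
    have := congrFun (congrFun (congrArg (fun M => M) h) (Sum.inl i)) (Sum.inr j)
    simpa [Matrix.fromBlocks] using this
  have h22 : c * f' + d * h' = 1 := by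
    ext i j
    have := congrFun (congrFun (congrArg (fun M => M) h) (Sum.inr i)) (Sum.inr j)
    simpa [Matrix.fromBlocks] using this
  have key : (Matrix.fromBlocks a b c d) * (Matrix.fromBlocks 1 f' 0 h')
      = Matrix.fromBlocks a 0 c (1 : Matrix q q R) := by
    rw [Matrix.fromBlocks_multiply, h12, h22, Matrix.mul_one, Matrix.mul_zero, add_zero,
      Matrix.mul_one, Matrix.mul_zero, add_zero]
  have hdet := congrArg Matrix.det key
  rw [Matrix.det_mul, Matrix.det_fromBlocks_zero₂₁, Matrix.det_fromBlocks_zero₁₂] at hdet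
  simpa [hA] using hdet

end Corner

section Jacobi

variable {K : Type*} [Field K]

lemma jacobi_aux (A : Matrix m m K) (hA : IsUnit A.det) (t : Finset m) :
    A.det * pminor A⁻¹ t = pminor A tᶜ := by
  classical
  let e := Equiv.sumCompl (fun x => x ∈ tᶜ)
  have hmul : (A.submatrix e e) * (A⁻¹.submatrix e e) = 1 := by
    rw [Matrix.submatrix_mul_equiv, Matrix.mul_nonsing_inv _ hA, Matrix.submatrix_one_equiv]
  have hc := corner (A.submatrix e e) (A⁻¹.submatrix e e) hmul
  rw [Matrix.det_submatrix_equiv_self] at hc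
  have h11 : ((A.submatrix e e).toBlocks₁₁).det = pminor A tᶜ := by
    have : (A.submatrix e e).toBlocks₁₁
        = A.submatrix (fun i : ↥tᶜ => (i : m)) (fun i : ↥tᶜ => (i : m)) := by
      ext i j; simp [Matrix.toBlocks₁₁, e]
    rw [this]; rfl
  have h22 : ((A⁻¹.submatrix e e).toBlocks₂₂).det = pminor A⁻¹ t := by
    let e₂ : {x // ¬ x ∈ tᶜ} ≃ ↥t := Equiv.subtypeEquivRight (by intro x; simp)
    have : (A⁻¹.submatrix e e).toBlocks₂₂
        = A⁻¹.submatrix (fun i => ((e₂ i : ↥t) : m)) (fun i => ((e₂ i : ↥t) : m)) := by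
      ext i j; simp [Matrix.toBlocks₂₂, e, e₂]
    rw [this, pminor_reindex]
  rw [h11, h22] at hc
  exact hc

lemma jacobi_unit (A : Matrix m m K) (hA : IsUnit A.det) (t : Finset m) (ht : t.Nonempty) :
    pminor (A.adjugate) t = A.det ^ (t.card - 1) * pminor A tᶜ := by
  classical
  have hadj : A.adjugate = A.det • A⁻¹ := by
    rw [Matrix.inv_def, smul_smul, Ring.mul_inverse_cancel _ hA, one_smul]
  have hps : pminor (A.det • A⁻¹) t = A.det ^ t.card * pminor A⁻¹ t := by
    unfold pminor
    have : (A.det • A⁻¹).submatrix (fun i : ↥t => (i : m)) (fun i : ↥t => (i : m))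
        = A.det • (A⁻¹.submatrix (fun i : ↥t => (i : m)) (fun i : ↥t => (i : m))) := rfl
    rw [this, Matrix.det_smul, Fintype.card_coe]
  rw [hadj, hps]
  have hc1 : 1 ≤ t.card := Finset.Nonempty.card_pos ht
  have hd : A.det ^ t.card = A.det ^ (t.card - 1) * A.det := by
    conv_lhs => rw [show t.card = (t.card - 1) + 1 by omega]
    rw [pow_succ]
  rw [hd, mul_assoc, jacobi_aux A hA t]

lemma det_map' {S : Type*} [CommRing S] (f : R →+* S) (A : Matrix m m R) :
    (A.map f).det = f A.det := by
  rw [← RingHom.mapMatrix_apply, ← RingHom.map_det]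

lemma pminor_map {S : Type*} [CommRing S] (f : R →+* S) (A : Matrix m m R) (s : Finset m) :
    pminor (A.map f) s = f (pminor A s) := by
  unfold pminor
  have : (A.map f).submatrix (fun i : ↥s => (i : m)) (fun i : ↥s => (i : m))
      = (A.submatrix (fun i : ↥s => (i : m)) (fun i : ↥s => (i : m))).map f := rfl
  rw [this, det_map']

lemma adjugate_map' {S : Type*} [CommRing S] (f : R →+* S) (A : Matrix m m R) :
    (A.map f).adjugate = (A.adjugate).map f := by
  rw [← RingHom.mapMatrix_apply, ← RingHom.map_adjugate, RingHom.mapMatrix_apply]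

lemma jacobi (A : Matrix m m ℂ) (t : Finset m) (ht : t.Nonempty) :
    pminor (A.adjugate) t = A.det ^ (t.card - 1) * pminor A tᶜ := by
  classical
  set N : Matrix m m (Polynomial ℂ) := (-A).charmatrix with hN
  have hNdet : N.det ≠ 0 := (Matrix.charpoly_monic (-A)).ne_zero
  set φ : Polynomial ℂ →+* RatFunc ℂ := algebraMap (Polynomial ℂ) (RatFunc ℂ) with hφ
  have hinj : Function.Injective φ := IsFractionRing.injective (Polynomial ℂ) (RatFunc ℂ)
  have hunit : IsUnit (N.map φ).det := by
    rw [det_map']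
    exact isUnit_iff_ne_zero.2 (fun h => hNdet (hinj (by rw [h, map_zero])))
  have hK := jacobi_unit (N.map φ) hunit t ht
  rw [adjugate_map', pminor_map, det_map', pminor_map, ← _root_.map_pow, ← _root_.map_mul] at hK
  have hpoly := hinj hK
  have := congrArg (Polynomial.evalRingHom 0) hpoly
  rw [_root_.map_mul, _root_.map_pow, ← pminor_map, ← pminor_map, ← det_map', ← adjugate_map'] at this
  have hNA : N.map (Polynomial.evalRingHom 0) = A := by
    ext i j
    by_cases hij : i = j
    · subst hij
      simp [hN, Matrix.charmatrix_apply_eq]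
    · simp [hN, Matrix.charmatrix_apply_ne _ _ _ hij]
  rwa [hNA] at this

lemma adjugate_diag (A : Matrix m m ℂ) (i : m) :
    A.adjugate i i = pminor A ({i}ᶜ) := by
  have := jacobi A {i} (Finset.singleton_nonempty i)
  rwa [pminor_singleton, Finset.card_singleton, pow_zero, one_mul] at this

lemma adjugate_pair (A : Matrix m m ℂ) {i j : m} (hij : i ≠ j) :
    A.adjugate i i * A.adjugate j j - A.adjugate i j * A.adjugate j i
      = A.det * pminor A ({i, j}ᶜ) := by
  have h2 : ({i, j} : Finset m).card = 2 := Finset.card_pair hij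
  have := jacobi A {i, j} ⟨i, by simp⟩
  rwa [pminor_pair _ hij, h2, pow_one] at this

end Jacobi

lemma pminor_subtype (A : Matrix m m R) (s : Finset m) (t : Finset ↥s) :
    pminor (A.submatrix (fun i : ↥s => (i : m)) (fun i : ↥s => (i : m))) t
      = pminor A (t.image (fun a : ↥s => (a : m))) := by
  have hmem : ∀ y : m, y ∈ t.image (fun a : ↥s => (a : m)) → y ∈ s := by
    intro y hy
    obtain ⟨a, _, rfl⟩ := Finset.mem_image.1 hy
    exact a.2
  have hmem2 : ∀ (y : m) (hy : y ∈ t.image (fun a : ↥s => (a : m))),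
      (⟨y, hmem y hy⟩ : ↥s) ∈ t := by
    intro y hy
    obtain ⟨a, hat, rfl⟩ := Finset.mem_image.1 hy
    convert hat
  let e : ↥t ≃ ↥(t.image (fun a : ↥s => (a : m))) :=
    { toFun := fun x => ⟨(x : ↥s), Finset.mem_image_of_mem _ x.2⟩
      invFun := fun y => ⟨⟨(y : m), hmem _ y.2⟩, hmem2 _ y.2⟩
      left_inv := fun x => Subtype.ext (Subtype.ext rfl)
      right_inv := fun y => Subtype.ext rfl }
  rw [← pminor_reindex A _ e]
  rfl

lemma image_compl_singleton (s : Finset m) (a : ↥s) :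
    (({a}ᶜ : Finset ↥s)).image (fun x : ↥s => (x : m)) = s.erase ↑a := by
  ext c
  simp only [Finset.mem_image, Finset.mem_compl, Finset.mem_singleton, Finset.mem_erase]
  constructor
  · rintro ⟨⟨x, hxs⟩, hxa, rfl⟩
    exact ⟨fun h => hxa (Subtype.ext h), hxs⟩
  · rintro ⟨hca, hcs⟩
    exact ⟨⟨c, hcs⟩, fun h => hca (congrArg Subtype.val h), rfl⟩

lemma image_compl_pair (s : Finset m) (a b : ↥s) :
    (({a, b}ᶜ : Finset ↥s)).image (fun x : ↥s => (x : m)) = (s.erase ↑a).erase ↑b := by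
  ext c
  simp only [Finset.mem_image, Finset.mem_compl, Finset.mem_insert, Finset.mem_singleton,
    Finset.mem_erase, not_or]
  constructor
  · rintro ⟨⟨x, hxs⟩, ⟨hxa, hxb⟩, rfl⟩
    exact ⟨fun h => hxb (Subtype.ext h), fun h => hxa (Subtype.ext h), hxs⟩
  · rintro ⟨hcb, hca, hcs⟩
    exact ⟨⟨c, hcs⟩, ⟨fun h => hca (congrArg Subtype.val h),
      fun h => hcb (congrArg Subtype.val h)⟩, rfl⟩

lemma pminor_union_mul (A : Matrix m m R) {s t : Finset m} (h : Disjoint s t)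
    (hz : ∀ b ∈ t, ∀ a ∈ s, A b a = 0) :
    pminor A (s ∪ t) = pminor A s * pminor A t := by
  rw [← pminor_reindex A _ (unionEquiv h)]
  have hblock : A.submatrix (fun i => (((unionEquiv h) i : ↥(s ∪ t)) : m))
        (fun i => (((unionEquiv h) i : ↥(s ∪ t)) : m))
      = Matrix.fromBlocks (A.submatrix (fun i : ↥s => (i : m)) (fun i : ↥s => (i : m)))
          (A.submatrix (fun i : ↥s => (i : m)) (fun i : ↥t => (i : m))) 0
          (A.submatrix (fun i : ↥t => (i : m)) (fun i : ↥t => (i : m))) := by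
    ext x y
    cases x with
    | inl a => cases y with
      | inl a' => rfl
      | inr b' => rfl
    | inr b => cases y with
      | inl a' =>
        show A ↑b ↑a' = (0 : Matrix ↥t ↥s R) b a'
        rw [hz ↑b b.2 ↑a' a'.2]
        rfl
      | inr b' => rfl
  rw [hblock, Matrix.det_fromBlocks_zero₂₁]
  rfl

section Herm

lemma herm_det_star {p : Type*} [Fintype p] [DecidableEq p] {A : Matrix p p ℂ}
    (hA : A.IsHermitian) : (starRingEnd ℂ) A.det = A.det := by
  have := Matrix.det_conjTranspose A
  rw [hA.eq] at this
  exact this.symm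

lemma pminor_star {B : Matrix m m ℂ} (hB : B.IsHermitian) (s : Finset m) :
    (starRingEnd ℂ) (pminor B s) = pminor B s :=
  herm_det_star (hB.submatrix _)

lemma adjugate_herm {p : Type*} [Fintype p] [DecidableEq p] {A : Matrix p p ℂ}
    (hA : A.IsHermitian) : A.adjugate.IsHermitian := by
  show A.adjugateᴴ = A.adjugate
  rw [Matrix.adjugate_conjTranspose, hA.eq]

lemma real_tri {z : ℂ} (hz : (starRingEnd ℂ) z = z) : z < 0 ∨ z = 0 ∨ 0 < z := by
  have him : z.im = 0 := by
    have := congrArg Complex.im hz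
    simp only [Complex.conj_im] at this
    linarith
  rcases lt_trichotomy z.re 0 with h | h | h
  · exact Or.inl (Complex.neg_iff.2 ⟨h, him⟩)
  · exact Or.inr (Or.inl (Complex.ext h him))
  · exact Or.inr (Or.inr (Complex.pos_iff.2 ⟨h, him.symm⟩))

end Herm

section Core

lemma erase_erase_comm (s : Finset m) (a b : m) :
    (s.erase a).erase b = (s.erase b).erase a := by
  ext c
  simp only [Finset.mem_erase]
  tauto

lemma kernel_core {B : Matrix m m ℂ} (hB : B.IsHermitian) (γ : Finset m) {x : m} (hx : x ∉ γ)
    (T : Finset m) (hT : T.Nonempty) (hTγ : T ⊆ γ)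
    (hγ0 : pminor B γ ≠ 0)
    (hβ : 0 ≤ pminor B (insert x γ))
    (hprod : ∀ y ∈ T, pminor B γ * pminor B ((insert x γ).erase y) ≤ 0)
    (hm1 : ∀ y ∈ T, ∀ j ∈ insert x γ, j ≠ y → 0 ≤ pminor B (((insert x γ).erase y).erase j)) :
    pminor B (insert x γ) = 0 ∧
    ∃ v : m → ℂ, v x = 1 ∧ (∀ c ∈ T, v c = 0) ∧ (∀ c, c ∉ insert x γ → v c = 0) ∧
      ∀ r ∈ insert x γ, B.mulVec v r = 0 := by
  classical
  set β := insert x γ with hβdef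
  set M : Matrix ↥β ↥β ℂ :=
    B.submatrix (fun i : ↥β => (i : m)) (fun i : ↥β => (i : m)) with hMdef
  have hM : M.IsHermitian := hB.submatrix _
  have hdetM : M.det = pminor B β := rfl
  have hadjH := adjugate_herm hM
  have hconj : ∀ a b : ↥β, M.adjugate a b = (starRingEnd ℂ) (M.adjugate b a) := by
    intro a b
    have h1 := congrFun (congrFun hadjH a) b
    rw [Matrix.conjTranspose_apply] at h1
    exact h1.symm
  have hdiag : ∀ a : ↥β, M.adjugate a a = pminor B (β.erase ↑a) := by
    intro a
    rw [adjugate_diag, pminor_subtype, image_compl_singleton]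
  have hpair : ∀ a b : ↥β, a ≠ b →
      M.adjugate a a * M.adjugate b b - M.adjugate a b * M.adjugate b a
        = pminor B β * pminor B ((β.erase ↑a).erase ↑b) := by
    intro a b hab
    rw [adjugate_pair _ hab, pminor_subtype, image_compl_pair, hdetM]
  set x' : ↥β := ⟨x, Finset.mem_insert_self x γ⟩ with hx'def
  have hβx : β.erase x = γ := Finset.erase_insert hx
  have hax : M.adjugate x' x' = pminor B γ := by rw [hdiag x', hβx]
  have hmemT : ∀ y ∈ T, y ∈ β := fun y hy => Finset.mem_insert_of_mem (hTγ hy)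
  have hxneT : ∀ y ∈ T, x ≠ y := fun y hy h => hx (h ▸ hTγ hy)
  have hPnn : ∀ a b : ↥β, 0 ≤ M.adjugate a b * M.adjugate b a := by
    intro a b
    rw [hconj a b, mul_comm, Complex.mul_conj]
    exact Complex.zero_le_real.2 (Complex.normSq_nonneg _)
  have hPzero : ∀ a b : ↥β, M.adjugate a b * M.adjugate b a = 0 → M.adjugate a b = 0 := by
    intro a b h
    rcases mul_eq_zero.1 h with h' | h'
    · exact h'
    · rw [hconj a b, h', map_zero]
  -- Step 1 : the (k+1)-minor vanishes
  have hβ0 : pminor B β = 0 := by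
    rcases real_tri (pminor_star hB β) with hlt | h0 | hgt
    · exact absurd (lt_of_le_of_lt hβ hlt) (lt_irrefl 0)
    · exact h0
    · exfalso
      obtain ⟨y, hyT⟩ := hT
      set yb : ↥β := ⟨y, hmemT y hyT⟩ with hybdef
      have hxy : x' ≠ yb := fun h => hxneT y hyT (congrArg Subtype.val h)
      have e1 := hpair x' yb hxy
      have hq1 : 0 ≤ pminor B ((β.erase ↑x').erase ↑yb) := by
        have h2 := hm1 y hyT x (Finset.mem_insert_self x γ) (hxneT y hyT)
        rwa [erase_erase_comm] at h2
      have hrhs : 0 ≤ pminor B β * pminor B ((β.erase ↑x').erase ↑yb) := mul_nonneg hgt.le hq1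
      have hle : M.adjugate x' x' * M.adjugate yb yb ≤ 0 := by
        rw [hax, hdiag yb]
        exact hprod y hyT
      have hsum : M.adjugate x' x' * M.adjugate yb yb
          = pminor B β * pminor B ((β.erase ↑x').erase ↑yb)
            + M.adjugate x' yb * M.adjugate yb x' := by
        rw [← e1]; ring
      have hzero : M.adjugate x' x' * M.adjugate yb yb = 0 :=
        le_antisymm hle (hsum ▸ add_nonneg hrhs (hPnn x' yb))
      have hayb : M.adjugate yb yb = 0 := by
        rcases mul_eq_zero.1 hzero with h' | h'
        · exact absurd (hax ▸ h') hγ0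
        · exact h'
      have hrow : ∀ j : ↥β, M.adjugate yb j = 0 := by
        intro j
        by_cases hj : j = yb
        · rw [hj]; exact hayb
        · have hne : yb ≠ j := fun h => hj h.symm
          have e2 := hpair yb j hne
          have hq2 : 0 ≤ pminor B ((β.erase ↑yb).erase ↑j) := by
            apply hm1 y hyT ↑j j.2
            intro h
            exact hj (Subtype.ext h)
          have hrhs2 : 0 ≤ pminor B β * pminor B ((β.erase ↑yb).erase ↑j) :=
            mul_nonneg hgt.le hq2
          have : M.adjugate yb j * M.adjugate j yb
              = M.adjugate yb yb * M.adjugate j j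
                - pminor B β * pminor B ((β.erase ↑yb).erase ↑j) := by
            rw [← e2]; ring
          rw [hayb, zero_mul, zero_sub] at this
          have h0' : M.adjugate yb j * M.adjugate j yb = 0 :=
            le_antisymm (this ▸ neg_nonpos.2 hrhs2) (hPnn yb j)
          exact hPzero yb j h0'
      have hdetadj : (M.adjugate).det = 0 := Matrix.det_eq_zero_of_row_eq_zero yb hrow
      rw [Matrix.det_adjugate, hdetM] at hdetadj
      exact pow_ne_zero _ (ne_of_gt hgt) hdetadj
  have hdet0 : M.det = 0 := by rw [hdetM, hβ0]
  -- Step 2 : adjugate column entries vanish on T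
  have hTzero : ∀ (y : m) (hy : y ∈ T), M.adjugate (⟨y, hmemT y hy⟩ : ↥β) x' = 0 := by
    intro y hy
    set yb : ↥β := ⟨y, hmemT y hy⟩ with hybdef
    have hxy : x' ≠ yb := fun h => hxneT y hy (congrArg Subtype.val h)
    have e1 := hpair x' yb hxy
    rw [hβ0, zero_mul] at e1
    have hsum : M.adjugate x' x' * M.adjugate yb yb = M.adjugate x' yb * M.adjugate yb x' :=
      sub_eq_zero.1 e1
    have hle : M.adjugate x' x' * M.adjugate yb yb ≤ 0 := by
      rw [hax, hdiag yb]
      exact hprod y hy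
    have hzero : M.adjugate x' yb * M.adjugate yb x' = 0 :=
      le_antisymm (hsum ▸ hle) (hPnn x' yb)
    have h5 := hPzero x' yb hzero
    rw [hconj yb x', h5]
    exact map_zero _
  refine ⟨hβ0, ?_⟩
  set w : ↥β → ℂ := fun r => (pminor B γ)⁻¹ * M.adjugate r x' with hw
  have hMadj : M * M.adjugate = 0 := by
    rw [Matrix.mul_adjugate, hdet0, zero_smul]
  have hMw : ∀ r : ↥β, M.mulVec w r = 0 := by
    intro r
    have h1 : M.mulVec w r = (pminor B γ)⁻¹ * ((M * M.adjugate) r x') := by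
      rw [Matrix.mulVec, dotProduct, Matrix.mul_apply, Finset.mul_sum]
      congr 1
      ext c
      rw [hw]
      ring
    rw [h1, hMadj]
    simp
  set v : m → ℂ := fun c => if h : c ∈ β then w ⟨c, h⟩ else 0 with hv
  have hvβ : ∀ (c : m) (hc : c ∈ β), v c = w ⟨c, hc⟩ := by
    intro c hc
    rw [hv]
    exact dif_pos hc
  refine ⟨v, ?_, ?_, ?_, ?_⟩
  · rw [hvβ x (Finset.mem_insert_self x γ)]
    show (pminor B γ)⁻¹ * M.adjugate x' x' = 1
    rw [hax]
    exact inv_mul_cancel₀ hγ0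
  · intro c hc
    rw [hvβ c (hmemT c hc)]
    show (pminor B γ)⁻¹ * M.adjugate ⟨c, hmemT c hc⟩ x' = 0
    rw [hTzero c hc, mul_zero]
  · intro c hc
    show (if h : c ∈ β then w ⟨c, h⟩ else 0) = 0
    exact dif_neg hc
  · intro r hr
    have h1 : ∑ c : m, B r c * v c = ∑ c ∈ β, B r c * v c := by
      symm
      apply Finset.sum_subset (Finset.subset_univ β)
      intro c _ hcβ
      have : v c = 0 := dif_neg hcβ
      rw [this, mul_zero]
    have h2 : ∑ c ∈ β, B r c * v c = ∑ cb : ↥β, B r ↑cb * v ↑cb :=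
      (Finset.sum_coe_sort β _).symm
    have h3 : ∀ cb : ↥β, B r ↑cb * v ↑cb = M ⟨r, hr⟩ cb * w cb := by
      intro cb
      rw [hvβ ↑cb cb.2]
      rfl
    have : B.mulVec v r = M.mulVec w ⟨r, hr⟩ := by
      rw [Matrix.mulVec, dotProduct, Matrix.mulVec, dotProduct, h1, h2]
      exact Finset.sum_congr rfl (fun cb _ => h3 cb)
    rw [this]
    exact hMw _

end Core

section Helpers

lemma hmatrix_herm {B : Matrix m m ℂ} (hB : B.IsHermitian) (v : m → m → ℂ) :
    (Matrix.of fun a b : m => star (v a) ⬝ᵥ B.mulVec (v b)).IsHermitian := by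
  show _ᴴ = _
  ext a b
  rw [Matrix.conjTranspose_apply]
  show star (star (v b) ⬝ᵥ B.mulVec (v a)) = star (v a) ⬝ᵥ B.mulVec (v b)
  rw [Matrix.star_dotProduct, star_star, Matrix.star_mulVec, hB.eq,
    ← Matrix.dotProduct_mulVec]

lemma cmul_nonpos_left {a b : ℂ} (ha : a ≤ 0) (hb : 0 ≤ b) : a * b ≤ 0 := by
  have h := mul_nonneg (neg_nonneg.2 ha) hb
  rw [neg_mul] at h
  exact neg_nonneg.1 h

lemma cmul_nonpos_right {a b : ℂ} (ha : 0 ≤ a) (hb : b ≤ 0) : a * b ≤ 0 := by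
  rw [mul_comm]
  exact cmul_nonpos_left hb ha

lemma star_self_nonneg (z : ℂ) : 0 ≤ z * (starRingEnd ℂ) z := by
  rw [Complex.mul_conj]
  exact Complex.zero_le_real.2 (Complex.normSq_nonneg _)

lemma star_self_ne_zero {z : ℂ} (hz : z ≠ 0) : z * (starRingEnd ℂ) z ≠ 0 :=
  mul_ne_zero hz (fun h => hz (by simpa using congrArg (starRingEnd ℂ) h))

end Helpers

section Main

theorem main_aux {B : Matrix m m ℂ} (hB : B.IsHermitian) {k : ℕ}
    (Hm1 : ∀ α : Finset m, α.card = k - 1 → 0 ≤ pminor B α)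
    (Hm3 : ∀ α : Finset m, α.card = k + 1 → 0 ≤ pminor B α)
    (hk1 : 1 ≤ k)
    (hpos : ∃ σ : Finset m, σ.card = k ∧ 0 < pminor B σ)
    (hneg : ∃ τ : Finset m, τ.card = k ∧ pminor B τ < 0) : False := by
  classical
  obtain ⟨σ₀, hσ₀c, hσ₀⟩ := hpos
  obtain ⟨τ₀, hτ₀c, hτ₀⟩ := hneg
  set Pset : Finset (Finset m × Finset m) :=
    Finset.univ.filter (fun q => q.1.card = k ∧ q.2.card = k ∧
      0 < pminor B q.1 ∧ pminor B q.2 < 0) with hPset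
  have hPne : Pset.Nonempty := ⟨(σ₀, τ₀), by
    rw [hPset, Finset.mem_filter]
    exact ⟨Finset.mem_univ _, hσ₀c, hτ₀c, hσ₀, hτ₀⟩⟩
  obtain ⟨p, hpP, hpmax⟩ := Finset.exists_max_image Pset (fun q => (q.1 ∩ q.2).card) hPne
  rw [hPset, Finset.mem_filter] at hpP
  obtain ⟨-, hσc, hτc, hσpos, hτneg⟩ := hpP
  set σ := p.1 with hσdef
  set τ := p.2 with hτdef
  have hMIN : ∀ ρ ρ' : Finset m, ρ.card = k → ρ'.card = k → 0 < pminor B ρ →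
      pminor B ρ' < 0 → (ρ ∩ ρ').card ≤ (σ ∩ τ).card := by
    intro ρ ρ' h1 h2 h3 h4
    exact hpmax (ρ, ρ') (by
      rw [hPset, Finset.mem_filter]
      exact ⟨Finset.mem_univ _, h1, h2, h3, h4⟩)
  set W := σ ∩ τ with hWdef
  set X := σ \ τ with hXdef
  set Y := τ \ σ with hYdef
  have hWXσ : W ∪ X = σ := by
    rw [hWdef, hXdef, Finset.union_comm]
    exact Finset.sdiff_union_inter σ τ
  have hWYτ : W ∪ Y = τ := by
    rw [hWdef, hYdef, Finset.union_comm, Finset.inter_comm]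
    exact Finset.sdiff_union_inter τ σ
  have hXτ : ∀ x ∈ X, x ∉ τ := fun x hx => (Finset.mem_sdiff.1 hx).2
  have hXσ : ∀ x ∈ X, x ∈ σ := fun x hx => (Finset.mem_sdiff.1 hx).1
  have hYσ : ∀ y ∈ Y, y ∉ σ := fun y hy => (Finset.mem_sdiff.1 hy).2
  have hYτ : ∀ y ∈ Y, y ∈ τ := fun y hy => (Finset.mem_sdiff.1 hy).1
  have hWσ : ∀ w ∈ W, w ∈ σ := fun w hw => (Finset.mem_inter.1 hw).1
  have hWτ : ∀ w ∈ W, w ∈ τ := fun w hw => (Finset.mem_inter.1 hw).2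
  have hdisjWX : Disjoint W X := by
    rw [Finset.disjoint_left]
    intro a haW haX
    exact hXτ a haX (hWτ a haW)
  have hdisjWY : Disjoint W Y := by
    rw [Finset.disjoint_left]
    intro a haW haY
    exact hYσ a haY (hWσ a haW)
  have hdisjXY : Disjoint X Y := by
    rw [Finset.disjoint_left]
    intro a haX haY
    exact hYσ a haY (hXσ a haX)
  have hcardWX : W.card + X.card = k := by
    rw [← Finset.card_union_of_disjoint hdisjWX, hWXσ, hσc]
  have hcardWY : W.card + Y.card = k := by
    rw [← Finset.card_union_of_disjoint hdisjWY, hWYτ, hτc]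
  have hστ : σ ≠ τ := by
    intro h
    rw [h] at hσpos
    exact absurd (lt_trans hσpos hτneg) (lt_irrefl 0)
  have hXne : X.Nonempty := by
    rw [Finset.nonempty_iff_ne_empty]
    intro h
    apply hστ
    have hsub : σ ⊆ τ := by
      intro a ha
      by_contra hat
      exact (Finset.notMem_empty a) (h ▸ Finset.mem_sdiff.2 ⟨ha, hat⟩)
    exact Finset.eq_of_subset_of_card_le hsub (le_of_eq (hτc.trans hσc.symm))
  have hYne : Y.Nonempty := by
    have hXpos := Finset.card_pos.2 hXne
    apply Finset.card_pos.1
    omega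
  -- kernel vectors for x ∈ X
  have stepX : ∀ x ∈ X, ∃ v : m → ℂ, v x = 1 ∧ (∀ c ∈ Y, v c = 0) ∧
      (∀ c, c ∉ insert x τ → v c = 0) ∧ ∀ r ∈ insert x τ, B.mulVec v r = 0 := by
    intro x hx
    have hxτ : x ∉ τ := hXτ x hx
    have hcard : (insert x τ).card = k + 1 := by
      rw [Finset.card_insert_of_notMem hxτ, hτc]
    refine (kernel_core hB τ hxτ Y hYne (fun y hy => hYτ y hy) (ne_of_lt hτneg)
      (Hm3 _ hcard) ?_ ?_).2
    · intro y hy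
      apply cmul_nonpos_left hτneg.le
      have hxy : x ≠ y := fun h => hxτ (h ▸ hYτ y hy)
      have hρc : ((insert x τ).erase y).card = k := by
        rw [Finset.card_erase_of_mem (Finset.mem_insert_of_mem (hYτ y hy)), hcard]
        omega
      have hnotneg : ¬ pminor B ((insert x τ).erase y) < 0 := by
        intro hneg'
        have hsub : insert x W ⊆ σ ∩ ((insert x τ).erase y) := by
          intro a ha
          rcases Finset.mem_insert.1 ha with rfl | haW
          · exact Finset.mem_inter.2 ⟨hXσ a hx,
              Finset.mem_erase.2 ⟨hxy, Finset.mem_insert_self _ _⟩⟩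
          · refine Finset.mem_inter.2 ⟨hWσ a haW, Finset.mem_erase.2
              ⟨fun h => hYσ y hy (h ▸ hWσ a haW), Finset.mem_insert_of_mem (hWτ a haW)⟩⟩
        have hxW : x ∉ W := fun h => hxτ (hWτ x h)
        have hcardins : W.card + 1 ≤ (σ ∩ ((insert x τ).erase y)).card := by
          rw [← Finset.card_insert_of_notMem hxW]
          exact Finset.card_le_card hsub
        have := hMIN σ _ hσc hρc hσpos hneg'
        omega
      rcases real_tri (pminor_star hB ((insert x τ).erase y)) with h | h | h
      · exact absurd h hnotneg
      · exact le_of_eq h.symm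
      · exact h.le
    · intro y hy j hj hjy
      apply Hm1
      rw [Finset.card_erase_of_mem (Finset.mem_erase.2 ⟨hjy, hj⟩),
        Finset.card_erase_of_mem (Finset.mem_insert_of_mem (hYτ y hy)), hcard]
      omega
  have stepY : ∀ y ∈ Y, ∃ v : m → ℂ, v y = 1 ∧ (∀ c ∈ X, v c = 0) ∧
      (∀ c, c ∉ insert y σ → v c = 0) ∧ ∀ r ∈ insert y σ, B.mulVec v r = 0 := by
    intro y hy
    have hyσ : y ∉ σ := hYσ y hy
    have hcard : (insert y σ).card = k + 1 := by
      rw [Finset.card_insert_of_notMem hyσ, hσc]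
    refine (kernel_core hB σ hyσ X hXne (fun x hx => hXσ x hx) (ne_of_gt hσpos)
      (Hm3 _ hcard) ?_ ?_).2
    · intro x hx
      apply cmul_nonpos_right hσpos.le
      have hyx : y ≠ x := fun h => hyσ (h ▸ hXσ x hx)
      have hρc : ((insert y σ).erase x).card = k := by
        rw [Finset.card_erase_of_mem (Finset.mem_insert_of_mem (hXσ x hx)), hcard]
        omega
      have hnotpos : ¬ 0 < pminor B ((insert y σ).erase x) := by
        intro hpos'
        have hsub : insert y W ⊆ ((insert y σ).erase x) ∩ τ := by
          intro a ha
          rcases Finset.mem_insert.1 ha with rfl | haW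
          · exact Finset.mem_inter.2 ⟨Finset.mem_erase.2 ⟨hyx, Finset.mem_insert_self _ _⟩,
              hYτ a hy⟩
          · refine Finset.mem_inter.2 ⟨Finset.mem_erase.2
              ⟨fun h => hXτ x hx (h ▸ hWτ a haW), Finset.mem_insert_of_mem (hWσ a haW)⟩,
              hWτ a haW⟩
        have hyW : y ∉ W := fun h => hyσ (hWσ y h)
        have hcardins : W.card + 1 ≤ (((insert y σ).erase x) ∩ τ).card := by
          rw [← Finset.card_insert_of_notMem hyW]
          exact Finset.card_le_card hsub
        have := hMIN _ τ hρc hτc hpos' hτneg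
        omega
      rcases real_tri (pminor_star hB ((insert y σ).erase x)) with h | h | h
      · exact h.le
      · exact le_of_eq h
      · exact absurd h hnotpos
    · intro x hx j hj hjx
      apply Hm1
      rw [Finset.card_erase_of_mem (Finset.mem_erase.2 ⟨hjx, hj⟩),
        Finset.card_erase_of_mem (Finset.mem_insert_of_mem (hXσ x hx)), hcard]
      omega
  choose vX hvX1 hvX2 hvX3 hvX4 using stepX
  choose vY hvY1 hvY2 hvY3 hvY4 using stepY
  set wfam : m → m → ℂ := fun a =>
    if h : a ∈ X then vX a h else if h' : a ∈ Y then vY a h' else 0 with hwfam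
  have hwfeq : ∀ a : m, wfam a
      = if h : a ∈ X then vX a h else if h' : a ∈ Y then vY a h' else 0 := fun a => rfl
  have hwfX : ∀ (a : m) (h : a ∈ X), wfam a = vX a h := by
    intro a h
    rw [hwfeq a]
    exact dif_pos h
  have hwfY : ∀ (a : m) (h : a ∈ Y), wfam a = vY a h := by
    intro a h
    rw [hwfeq a, dif_neg (Finset.disjoint_right.1 hdisjXY h)]
    exact dif_pos h
  set HM : Matrix m m ℂ := Matrix.of fun a b : m => star (wfam a) ⬝ᵥ B.mulVec (wfam b)
    with hHM
  have hHMherm : HM.IsHermitian := hmatrix_herm hB wfam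
  have hHMstar : ∀ a b : m, HM b a = (starRingEnd ℂ) (HM a b) := by
    intro a b
    have h1 := congrFun (congrFun hHMherm b) a
    rw [Matrix.conjTranspose_apply] at h1
    exact h1.symm
  -- support and kernel properties of the combined family
  have hP1 : ∀ a ∈ X ∪ Y, wfam a a = 1 := by
    intro a ha
    rcases Finset.mem_union.1 ha with h | h
    · rw [hwfX a h]; exact hvX1 a h
    · rw [hwfY a h]; exact hvY1 a h
  have hP0 : ∀ a ∈ X ∪ Y, ∀ c, c ∉ W → c ≠ a → wfam a c = 0 := by
    intro a ha c hcW hca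
    rcases Finset.mem_union.1 ha with h | h
    · rw [hwfX a h]
      by_cases hcY : c ∈ Y
      · exact hvX2 a h c hcY
      by_cases hcβ : c ∈ insert a τ
      · exfalso
        rcases Finset.mem_insert.1 hcβ with rfl | hcτ
        · exact hca rfl
        have hcσ : c ∈ σ := by
          by_contra hcσ
          exact hcY (Finset.mem_sdiff.2 ⟨hcτ, hcσ⟩)
        exact hcW (Finset.mem_inter.2 ⟨hcσ, hcτ⟩)
      · exact hvX3 a h c hcβ
    · rw [hwfY a h]
      by_cases hcX : c ∈ X
      · exact hvY2 a h c hcX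
      by_cases hcβ : c ∈ insert a σ
      · exfalso
        rcases Finset.mem_insert.1 hcβ with rfl | hcσ
        · exact hca rfl
        have hcτ : c ∈ τ := by
          by_contra hcτ
          exact hcX (Finset.mem_sdiff.2 ⟨hcσ, hcτ⟩)
        exact hcW (Finset.mem_inter.2 ⟨hcσ, hcτ⟩)
      · exact hvY3 a h c hcβ
  have hPW : ∀ a ∈ X ∪ Y, ∀ r ∈ W, B.mulVec (wfam a) r = 0 := by
    intro a ha r hr
    rcases Finset.mem_union.1 ha with h | h
    · rw [hwfX a h]
      exact hvX4 a h r (Finset.mem_insert_of_mem (hWτ r hr))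
    · rw [hwfY a h]
      exact hvY4 a h r (Finset.mem_insert_of_mem (hWσ r hr))
  have hnW : ∀ a ∈ X ∪ Y, a ∉ W := by
    intro a ha
    rcases Finset.mem_union.1 ha with h | h
    · exact Finset.disjoint_right.1 hdisjWX h
    · exact Finset.disjoint_right.1 hdisjWY h
  -- entries of HM
  have hHMeval : ∀ a ∈ X ∪ Y, ∀ b ∈ X ∪ Y, HM a b = B.mulVec (wfam b) a := by
    intro a ha b hb
    show star (wfam a) ⬝ᵥ B.mulVec (wfam b) = B.mulVec (wfam b) a
    exact star_dot_eq B W (hnW a ha) (wfam a) (wfam b) (hP1 a ha) (hP0 a ha) (hPW b hb)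
  have hdiagH : ∀ a ∈ X ∪ Y, HM a a = 0 := by
    intro a ha
    rw [hHMeval a ha a ha]
    rcases Finset.mem_union.1 ha with h | h
    · rw [hwfX a h]
      exact hvX4 a h a (Finset.mem_insert_self _ _)
    · rw [hwfY a h]
      exact hvY4 a h a (Finset.mem_insert_self _ _)
  have hmixXY : ∀ a ∈ X, ∀ b ∈ Y, HM a b = 0 := by
    intro a ha b hb
    rw [hHMeval a (Finset.mem_union_left _ ha) b (Finset.mem_union_right _ hb), hwfY b hb]
    exact hvY4 b hb a (Finset.mem_insert_of_mem (hXσ a ha))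
  have hmixYX : ∀ a ∈ Y, ∀ b ∈ X, HM a b = 0 := by
    intro a ha b hb
    rw [hHMeval a (Finset.mem_union_right _ ha) b (Finset.mem_union_left _ hb), hwfX b hb]
    exact hvX4 b hb a (Finset.mem_insert_of_mem (hYτ a ha))
  -- congruence
  have hcong : ∀ S : Finset m, S ⊆ X ∪ Y → pminor B (W ∪ S) = pminor B W * pminor HM S := by
    intro S hS
    have hdisj : Disjoint W S := by
      rw [Finset.disjoint_right]
      intro a haS
      exact hnW a (hS haS)
    exact pminor_congruence B W S hdisj wfam
      (fun a ha => hP1 a (hS ha))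
      (fun a ha c hc hca => hP0 a (hS ha) c hc hca)
      (fun a ha r hr => hPW a (hS ha) r hr)
  have hσeq : pminor B σ = pminor B W * pminor HM X := by
    rw [← hWXσ]
    exact hcong X Finset.subset_union_left
  have hτeq : pminor B τ = pminor B W * pminor HM Y := by
    rw [← hWYτ]
    exact hcong Y Finset.subset_union_right
  have hc0 : pminor B W ≠ 0 := by
    intro h
    rw [h, zero_mul] at hσeq
    exact absurd hσeq (ne_of_gt hσpos)
  have hF0 : pminor HM X ≠ 0 := by
    intro h
    rw [h, mul_zero] at hσeq
    exact absurd hσeq (ne_of_gt hσpos)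
  have hG0 : pminor HM Y ≠ 0 := by
    intro h
    rw [h, mul_zero] at hτeq
    exact absurd hτeq (ne_of_lt hτneg)
  -- a nonzero off-diagonal entry of HM over X
  have hxx' : ∃ x, ∃ (hx : x ∈ X), ∃ x', ∃ (hx' : x' ∈ X), x ≠ x' ∧ HM x x' ≠ 0 := by
    by_contra hcon
    push_neg at hcon
    apply hF0
    obtain ⟨x₀, hx₀⟩ := hXne
    refine Matrix.det_eq_zero_of_row_eq_zero ⟨x₀, hx₀⟩ ?_
    intro j
    show HM x₀ ↑j = 0
    by_cases hj : x₀ = ↑j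
    · rw [← hj]
      exact hdiagH x₀ (Finset.mem_union_left _ hx₀)
    · exact hcon x₀ hx₀ ↑j j.2 hj
  obtain ⟨x, hxX, x', hx'X, hxne, hFent⟩ := hxx'
  have hxXY : x ∈ X ∪ Y := Finset.mem_union_left _ hxX
  have hx'XY : x' ∈ X ∪ Y := Finset.mem_union_left _ hx'X
  set z := HM x x' with hzdef
  have htpos : 0 ≤ z * (starRingEnd ℂ) z := star_self_nonneg z
  have htne : z * (starRingEnd ℂ) z ≠ 0 := star_self_ne_zero hFent
  have hpairX : pminor HM {x, x'} = -(z * (starRingEnd ℂ) z) := by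
    rw [pminor_pair HM hxne, hdiagH x hxXY, hdiagH x' hx'XY, zero_mul, zero_sub,
      ← hHMstar x x']
  have hxxX : ({x, x'} : Finset m) ⊆ X := by
    intro a ha
    rcases Finset.mem_insert.1 ha with rfl | ha'
    · exact hxX
    · rw [Finset.mem_singleton.1 ha']
      exact hx'X
  have hdisjWxx : Disjoint W ({x, x'} : Finset m) := hdisjWX.mono_right hxxX
  have hcardxx : ({x, x'} : Finset m).card = 2 := Finset.card_pair hxne
  -- Step (a): all (d-1)-subsets of Y give vanishing minors of HM
  have hstepA : ∀ Bs ⊆ Y, Bs.card + 1 = Y.card → pminor HM Bs = 0 := by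
    intro Bs hBsY hBsc
    have hdisjxxBs : Disjoint ({x, x'} : Finset m) Bs :=
      (hdisjXY.mono_left hxxX).mono_right hBsY
    have hdisjWBs : Disjoint W Bs := hdisjWY.mono_right hBsY
    have hsub1 : Bs ⊆ X ∪ Y := fun a ha => Finset.mem_union_right _ (hBsY ha)
    have hsub2 : ({x, x'} ∪ Bs) ⊆ X ∪ Y := by
      intro a ha
      rcases Finset.mem_union.1 ha with h | h
      · exact Finset.mem_union_left _ (hxxX h)
      · exact Finset.mem_union_right _ (hBsY h)
    have hcard1 : (W ∪ Bs).card = k - 1 := by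
      rw [Finset.card_union_of_disjoint hdisjWBs]
      omega
    have h1 : 0 ≤ pminor B W * pminor HM Bs := by
      rw [← hcong Bs hsub1]
      exact Hm1 _ hcard1
    have hdisjW2 : Disjoint W ({x, x'} ∪ Bs) := Finset.disjoint_union_right.2 ⟨hdisjWxx, hdisjWBs⟩
    have hcard2 : (W ∪ ({x, x'} ∪ Bs)).card = k + 1 := by
      rw [Finset.card_union_of_disjoint hdisjW2, Finset.card_union_of_disjoint hdisjxxBs,
        hcardxx]
      omega
    have h2 : 0 ≤ pminor B W * pminor HM ({x, x'} ∪ Bs) := by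
      rw [← hcong _ hsub2]
      exact Hm3 _ hcard2
    have hsplit : pminor HM ({x, x'} ∪ Bs) = pminor HM {x, x'} * pminor HM Bs :=
      pminor_union_mul HM hdisjxxBs (fun b hb a ha => hmixYX b (hBsY hb) a (hxxX ha))
    rw [hsplit, hpairX] at h2
    have h3 : pminor B W * (-(z * (starRingEnd ℂ) z) * pminor HM Bs)
        = -(z * (starRingEnd ℂ) z * (pminor B W * pminor HM Bs)) := by ring
    rw [h3] at h2
    have h4 : z * (starRingEnd ℂ) z * (pminor B W * pminor HM Bs) ≤ 0 := neg_nonneg.1 h2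
    have h5 : 0 ≤ z * (starRingEnd ℂ) z * (pminor B W * pminor HM Bs) :=
      mul_nonneg htpos h1
    have h6 := le_antisymm h4 h5
    rcases mul_eq_zero.1 h6 with h | h
    · exact absurd h htne
    · rcases mul_eq_zero.1 h with h | h
      · exact absurd h hc0
      · exact h
  -- Step (b): for Y.card ≥ 3, all (d-2)-subsets of Y give vanishing minors
  have hstepB : 3 ≤ Y.card → ∀ Bs ⊆ Y, Bs.card + 2 = Y.card → pminor HM Bs = 0 := by
    intro hd3 Bs hBsY hBsc
    have hdisjxxBs : Disjoint ({x, x'} : Finset m) Bs :=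
      (hdisjXY.mono_left hxxX).mono_right hBsY
    have hdisjWBs : Disjoint W Bs := hdisjWY.mono_right hBsY
    have hdisjW2 : Disjoint W ({x, x'} ∪ Bs) := Finset.disjoint_union_right.2 ⟨hdisjWxx, hdisjWBs⟩
    have hsub2 : ({x, x'} ∪ Bs) ⊆ X ∪ Y := by
      intro a ha
      rcases Finset.mem_union.1 ha with h | h
      · exact Finset.mem_union_left _ (hxxX h)
      · exact Finset.mem_union_right _ (hBsY h)
    set ρ := W ∪ ({x, x'} ∪ Bs) with hρdef
    have hρc : ρ.card = k := by
      rw [hρdef, Finset.card_union_of_disjoint hdisjW2, Finset.card_union_of_disjoint hdisjxxBs,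
        hcardxx]
      omega
    have hρval : pminor B ρ = pminor B W *
        (-(z * (starRingEnd ℂ) z) * pminor HM Bs) := by
      rw [hρdef, hcong _ hsub2,
        pminor_union_mul HM hdisjxxBs (fun b hb a ha => hmixYX b (hBsY hb) a (hxxX ha)),
        hpairX]
    have hnotpos : ¬ 0 < pminor B ρ := by
      intro hpos'
      have hsub : W ∪ Bs ⊆ ρ ∩ τ := by
        intro a ha
        rcases Finset.mem_union.1 ha with h | h
        · exact Finset.mem_inter.2 ⟨Finset.mem_union_left _ h, hWτ a h⟩
        · exact Finset.mem_inter.2 ⟨Finset.mem_union_right _ (Finset.mem_union_right _ h),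
            hYτ a (hBsY h)⟩
      have hcardsub : W.card + Bs.card ≤ (ρ ∩ τ).card := by
        rw [← Finset.card_union_of_disjoint hdisjWBs]
        exact Finset.card_le_card hsub
      have := hMIN ρ τ hρc hτc hpos' hτneg
      omega
    have hnotneg : ¬ pminor B ρ < 0 := by
      intro hneg'
      have hsub : W ∪ {x, x'} ⊆ σ ∩ ρ := by
        intro a ha
        rcases Finset.mem_union.1 ha with h | h
        · exact Finset.mem_inter.2 ⟨hWσ a h, Finset.mem_union_left _ h⟩
        · exact Finset.mem_inter.2 ⟨hXσ a (hxxX h),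
            Finset.mem_union_right _ (Finset.mem_union_left _ h)⟩
      have hcardsub : W.card + 2 ≤ (σ ∩ ρ).card := by
        rw [← hcardxx, ← Finset.card_union_of_disjoint hdisjWxx]
        exact Finset.card_le_card hsub
      have := hMIN σ ρ hσc hρc hσpos hneg'
      omega
    have hρ0 : pminor B ρ = 0 := by
      rcases real_tri (pminor_star hB ρ) with h | h | h
      · exact absurd h hnotneg
      · exact h
      · exact absurd h hnotpos
    rw [hρ0] at hρval
    rcases mul_eq_zero.1 hρval.symm with h | h
    · exact absurd h hc0
    · rw [neg_mul] at h
      rcases mul_eq_zero.1 (neg_eq_zero.1 h) with h' | h'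
      · exact absurd h' htne
      · exact h'
  -- d ≥ 2
  have hX2 : 2 ≤ X.card := by
    have : ({x, x'} : Finset m).card ≤ X.card := Finset.card_le_card hxxX
    omega
  have hY2 : 2 ≤ Y.card := by omega
  rcases eq_or_lt_of_le hY2 with hd2 | hd3
  · -- Y.card = 2
    obtain ⟨y, y', hyy', hYeq⟩ := Finset.card_eq_two.1 hd2.symm
    have hyY : y ∈ Y := by rw [hYeq]; exact Finset.mem_insert_self _ _
    have hy'Y : y' ∈ Y := by rw [hYeq]; simp
    have hpairY : pminor HM Y
        = -(HM y y' * (starRingEnd ℂ) (HM y y')) := by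
      rw [hYeq, pminor_pair HM hyy', hdiagH y (Finset.mem_union_right _ hyY),
        hdiagH y' (Finset.mem_union_right _ hy'Y), zero_mul, zero_sub, ← hHMstar y y']
    have hXeq : X = {x, x'} := by
      symm
      apply Finset.eq_of_subset_of_card_le hxxX
      omega
    rcases real_tri (pminor_star hB W) with hc | hc | hc
    · -- c < 0 : pm τ = c * (-(tG)) ≥ 0, contradiction
      have h1 : 0 ≤ pminor B τ := by
        rw [hτeq, hpairY]
        have : pminor B W * -(HM y y' * (starRingEnd ℂ) (HM y y'))
            = (-(pminor B W)) * (HM y y' * (starRingEnd ℂ) (HM y y')) := by ring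
        rw [this]
        exact mul_nonneg (neg_nonneg.2 hc.le) (star_self_nonneg _)
      exact absurd (lt_of_le_of_lt h1 hτneg) (lt_irrefl 0)
    · exact hc0 hc
    · -- c > 0 : pm σ = c * (-(tF)) ≤ 0, contradiction
      have h1 : pminor B σ ≤ 0 := by
        rw [hσeq, hXeq, hpairX]
        exact cmul_nonpos_right hc.le (neg_nonpos.2 htpos)
      exact absurd (lt_of_lt_of_le hσpos h1) (lt_irrefl 0)
  · -- Y.card ≥ 3
    have hd3' : 3 ≤ Y.card := hd3
    set G : Matrix ↥Y ↥Y ℂ :=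
      HM.submatrix (fun i : ↥Y => (i : m)) (fun i : ↥Y => (i : m)) with hGdef
    have hGherm : G.IsHermitian := hHMherm.submatrix _
    have hGdet : G.det = pminor HM Y := rfl
    have hdiagG : ∀ a : ↥Y, G.adjugate a a = 0 := by
      intro a
      rw [adjugate_diag, pminor_subtype, image_compl_singleton]
      exact hstepA (Y.erase ↑a) (Finset.erase_subset _ _) (Finset.card_erase_add_one a.2)
    have hoffG : ∀ a b : ↥Y, G.adjugate a b = 0 := by
      intro a b
      by_cases hab : a = b
      · rw [hab]
        exact hdiagG b
      have hp := adjugate_pair G hab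
      rw [pminor_subtype, image_compl_pair] at hp
      have hbmem : (b : m) ∈ Y.erase ↑a :=
        Finset.mem_erase.2 ⟨fun h => hab (Subtype.ext h).symm, b.2⟩
      have h0 : pminor HM ((Y.erase ↑a).erase ↑b) = 0 := by
        apply hstepB hd3' _ ((Finset.erase_subset _ _).trans (Finset.erase_subset _ _))
        rw [Finset.card_erase_of_mem hbmem, Finset.card_erase_of_mem a.2]
        omega
      rw [h0, mul_zero, hdiagG a, hdiagG b, zero_mul, zero_sub] at hp
      have hprod0 : G.adjugate a b * G.adjugate b a = 0 := by
        have := hp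
        rwa [neg_eq_zero] at this
      have hadjGh := adjugate_herm hGherm
      rcases mul_eq_zero.1 hprod0 with h | h
      · exact h
      · have h1 := congrFun (congrFun hadjGh b) a
        rw [Matrix.conjTranspose_apply] at h1
        have h2 : (starRingEnd ℂ) (G.adjugate a b) = 0 := h1.trans h
        simpa using congrArg (starRingEnd ℂ) h2
    obtain ⟨y₀, hy₀⟩ := hYne
    have hadj0 : (G.adjugate).det = 0 :=
      Matrix.det_eq_zero_of_row_eq_zero ⟨y₀, hy₀⟩ (fun j => hoffG _ j)
    rw [Matrix.det_adjugate] at hadj0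
    exact pow_ne_zero _ (hGdet ▸ hG0) hadj0

end Main

end Forbidden

/-- The sequence S⁺S*S⁺ is forbidden for Hermitian matrices. -/
theorem forbidden_SplusSstarSplus {n : ℕ} (B : Matrix (Fin n) (Fin n) ℂ) (hB : B.IsHermitian)
    (k : ℕ) (hk2 : 2 ≤ k) (hkn : k ≤ n - 1)
    (hnonneg : ∀ α : Finset (Fin n), α.card = k - 1 → 0 ≤ pminor B α)
    (hzero : ∃ α : Finset (Fin n), α.card = k - 1 ∧ pminor B α = 0)
    (hpos : ∃ α : Finset (Fin n), α.card = k - 1 ∧ 0 < pminor B α)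
    (hposk : ∃ α : Finset (Fin n), α.card = k ∧ 0 < pminor B α)
    (hnegk : ∃ α : Finset (Fin n), α.card = k ∧ pminor B α < 0)
    (hzerok : ∃ α : Finset (Fin n), α.card = k ∧ pminor B α = 0)
    (hnonneg' : ∀ α : Finset (Fin n), α.card = k + 1 → 0 ≤ pminor B α)
    (hzero' : ∃ α : Finset (Fin n), α.card = k + 1 ∧ pminor B α = 0)
    (hpos' : ∃ α : Finset (Fin n), α.card = k + 1 ∧ 0 < pminor B α) :
    False :=
  Forbidden.main_aux hB hnonneg hnonneg' (by omega) hposk hnegk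
end

section
/- There is no n×n complex Hermitian matrix B and index k with 2 ≤ k ≤ n−1 such that simultaneously: (i) all order-(k−1) principal minors of B are negative, (ii) among the order-k principal minors positive, negative, and zero values all occur, and (iii) all order-(k+1) principal minors are nonpositive with at least one zero and at least one negative. (The sequence A⁻S*S⁻ is forbidden.) -/
open ComplexOrder

namespace ForbiddenSepr

open Matrix

variable {n : ℕ} (B : Matrix (Fin n) (Fin n) ℂ)

lemma cancel_pos_mul (p q : ℂ) (hp : 0 < p) (h : 0 ≤ p * q) : 0 ≤ q := by
  rw [Complex.lt_def] at hp
  rw [Complex.le_def] at h ⊢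
  simp only [Complex.mul_re, Complex.mul_im, Complex.zero_re, Complex.zero_im] at *
  obtain ⟨hp1, hp2⟩ := hp
  obtain ⟨h1, h2⟩ := h
  rw [← hp2] at h1 h2
  constructor
  · nlinarith
  · nlinarith

lemma pminor_submatrix {ι : Type} [Fintype ι] [DecidableEq ι] (f : ι → Fin n)
    (hf : Function.Injective f) :
    (B.submatrix f f).det = pminor B (Finset.univ.image f) := by
  set α := Finset.univ.image f with hα
  have hmem : ∀ i : ι, f i ∈ α := fun i => Finset.mem_image.2 ⟨i, Finset.mem_univ i, rfl⟩
  have hsurj : ∀ b : α, ∃ i : ι, f i = (b : Fin n) := by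
    rintro ⟨b, hb⟩
    obtain ⟨i, -, hi⟩ := Finset.mem_image.1 hb
    exact ⟨i, hi⟩
  let e : ι ≃ α := Equiv.ofBijective (fun i => ⟨f i, hmem i⟩)
    ⟨fun i j hij => hf (Subtype.mk_eq_mk.1 hij),
     fun b => by obtain ⟨i, hi⟩ := hsurj b; exact ⟨i, Subtype.ext hi⟩⟩
  have h2 : B.submatrix f f =
      (B.submatrix (fun i : α => (i : Fin n)) (fun i : α => (i : Fin n))).submatrix e e := by
    ext i j; rfl
  rw [h2, Matrix.det_submatrix_equiv_self]
  rfl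

/-- Entries of the Schur complement of the principal block selected by `e`. -/
noncomputable def schurc {ι : Type} [Fintype ι] [DecidableEq ι] (e : ι → Fin n) :
    Fin n → Fin n → ℂ :=
  fun t u => B t u -
    dotProduct (fun i => B t (e i)) ((B.submatrix e e)⁻¹ *ᵥ fun j => B (e j) u)

lemma det_schur_ext {ι : Type} [Fintype ι] [DecidableEq ι] (e : ι → Fin n)
    (he : IsUnit (B.submatrix e e).det)
    {ρ : Type} [Fintype ρ] [DecidableEq ρ] (f : ρ → Fin n) :
    (B.submatrix (Sum.elim e f) (Sum.elim e f)).det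
      = (B.submatrix e e).det * (Matrix.of fun u w : ρ => schurc B e (f u) (f w)).det := by
  have hinv : Invertible (B.submatrix e e) := (B.submatrix e e).invertibleOfIsUnitDet he
  have hblock : B.submatrix (Sum.elim e f) (Sum.elim e f) =
      Matrix.fromBlocks (B.submatrix e e) (B.submatrix e f) (B.submatrix f e)
        (B.submatrix f f) := by
    ext (i | i) (j | j) <;> rfl
  have hschur : B.submatrix f f - B.submatrix f e * ⅟(B.submatrix e e) * B.submatrix e f
      = Matrix.of fun u w : ρ => schurc B e (f u) (f w) := by
    ext u w
    simp only [Matrix.sub_apply, Matrix.of_apply, schurc, Matrix.invOf_eq_nonsing_inv,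
      Matrix.mul_apply, Matrix.submatrix_apply, dotProduct, Matrix.mulVec, dotProduct,
      Finset.sum_mul, Finset.mul_sum]
    congr 1
    rw [Finset.sum_comm]
    congr 1; ext i; congr 1; ext j; ring
  rw [hblock, Matrix.det_fromBlocks₁₁, hschur]

lemma submatrix_isHermitian (hB : B.IsHermitian) {ι : Type} (e : ι → Fin n) :
    (B.submatrix e e).IsHermitian := by
  unfold Matrix.IsHermitian
  rw [Matrix.conjTranspose_submatrix, hB.eq]

lemma schurc_star (hB : B.IsHermitian) {ι : Type} [Fintype ι] [DecidableEq ι]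
    (e : ι → Fin n) (t u : Fin n) :
    star (schurc B e t u) = schurc B e u t := by
  have hAinv : ((B.submatrix e e)⁻¹).IsHermitian := (submatrix_isHermitian B hB e).inv
  simp only [schurc, dotProduct, Matrix.mulVec, dotProduct, star_sub, star_sum, star_mul',
    Finset.mul_sum]
  congr 1
  · exact hB.apply u t
  rw [Finset.sum_comm]
  apply Finset.sum_congr rfl
  intro j _
  apply Finset.sum_congr rfl
  intro i _
  rw [← hB.apply (e i) t, ← hB.apply u (e j), ← hAinv.apply j i]
  ring

lemma image_coe (δ : Finset (Fin n)) :
    Finset.univ.image (fun i : δ => (i : Fin n)) = δ := by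
  simp [Finset.univ_eq_attach, Finset.attach_image_val]

lemma image_sum_elim {ι ρ : Type} [Fintype ι] [Fintype ρ] [DecidableEq ι] [DecidableEq ρ]
    (e : ι → Fin n) (f : ρ → Fin n) :
    Finset.univ.image (Sum.elim e f) = Finset.univ.image e ∪ Finset.univ.image f := by
  ext a
  simp [Sum.exists]

lemma sum_elim_inj {ι ρ : Type} (e : ι → Fin n) (f : ρ → Fin n)
    (he : Function.Injective e) (hf : Function.Injective f)
    (hd : ∀ i j, e i ≠ f j) : Function.Injective (Sum.elim e f) := by
  rintro (i | i) (j | j) h <;> simp only [Sum.elim_inl, Sum.elim_inr] at h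
  · rw [he h]
  · exact absurd h (hd i j)
  · exact absurd h.symm (hd j i)
  · rw [hf h]

lemma coe_inj (δ : Finset (Fin n)) : Function.Injective (fun i : δ => (i : Fin n)) :=
  fun i j h => Subtype.ext h

lemma union_single (s : Finset (Fin n)) (a : Fin n) : s ∪ {a} = insert a s := by
  ext x; simp [or_comm]

lemma union_pair (a b : Fin n) : ({a} : Finset (Fin n)) ∪ {b} = {a, b} := by
  ext x; simp

lemma union_triple (a b c : Fin n) : ({a} : Finset (Fin n)) ∪ {b, c} = {a, b, c} := by
  ext x; simp; tauto

lemma KL1 (δ : Finset (Fin n)) (hd : IsUnit (pminor B δ)) {t : Fin n} (ht : t ∉ δ) :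
    pminor B (δ ∪ {t}) = pminor B δ * schurc B (fun i : δ => (i : Fin n)) t t := by
  classical
  set e := fun i : δ => (i : Fin n) with he
  have hinj : Function.Injective (Sum.elim e (fun _ : Unit => t)) := by
    apply sum_elim_inj _ _ (coe_inj δ) (fun a b _ => Subsingleton.elim a b)
    intro i _
    exact fun h => ht (h ▸ i.2)
  have h1 := det_schur_ext B e hd (fun _ : Unit => t)
  rw [pminor_submatrix B _ hinj, image_sum_elim, image_coe] at h1
  have himg : Finset.univ.image (fun _ : Unit => t) = {t} := by
    ext a; simp [eq_comm]
  rw [himg] at h1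
  rw [h1, show (Matrix.of fun _ _ : Unit => schurc B e t t).det = schurc B e t t from
    Matrix.det_unique _]
  rfl

lemma KL2 (δ : Finset (Fin n)) (hd : IsUnit (pminor B δ)) {t u : Fin n} (ht : t ∉ δ)
    (hu : u ∉ δ) (htu : t ≠ u) :
    pminor B (δ ∪ {t, u}) = pminor B δ *
      (schurc B (fun i : δ => (i : Fin n)) t t * schurc B (fun i : δ => (i : Fin n)) u u
        - schurc B (fun i : δ => (i : Fin n)) t u * schurc B (fun i : δ => (i : Fin n)) u t) := by
  classical
  set e := fun i : δ => (i : Fin n) with he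
  have hf : Function.Injective ![t, u] := by
    intro a b hab
    fin_cases a <;> fin_cases b <;> simp_all
  have hinj : Function.Injective (Sum.elim e ![t, u]) := by
    apply sum_elim_inj _ _ (coe_inj δ) hf
    intro i j
    fin_cases j <;> simp <;> intro h <;> [exact ht (h ▸ i.2); exact hu (h ▸ i.2)]
  have h1 := det_schur_ext B e hd ![t, u]
  rw [pminor_submatrix B _ hinj, image_sum_elim, image_coe] at h1
  have himg : Finset.univ.image ![t, u] = {t, u} := by
    ext a; simp [Fin.exists_fin_two, eq_comm]
  rw [himg] at h1
  rw [h1, Matrix.det_fin_two]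
  rfl

lemma KL3 (δ : Finset (Fin n)) (hd : IsUnit (pminor B δ)) {t u w : Fin n} (ht : t ∉ δ)
    (hu : u ∉ δ) (hw : w ∉ δ) (htu : t ≠ u) (htw : t ≠ w) (huw : u ≠ w) :
    pminor B (δ ∪ {t, u, w}) = pminor B δ *
      (Matrix.of fun i j : Fin 3 =>
        schurc B (fun i : δ => (i : Fin n)) (![t, u, w] i) (![t, u, w] j)).det := by
  classical
  set e := fun i : δ => (i : Fin n) with he
  have hf : Function.Injective ![t, u, w] := by
    intro a b hab
    fin_cases a <;> fin_cases b <;> simp_all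
  have hinj : Function.Injective (Sum.elim e ![t, u, w]) := by
    apply sum_elim_inj _ _ (coe_inj δ) hf
    intro i j
    fin_cases j <;> simp <;> intro h <;>
      [exact ht (h ▸ i.2); exact hu (h ▸ i.2); exact hw (h ▸ i.2)]
  have h1 := det_schur_ext B e hd ![t, u, w]
  rw [pminor_submatrix B _ hinj, image_sum_elim, image_coe] at h1
  have himg : Finset.univ.image ![t, u, w] = {t, u, w} := by
    ext a
    simp [Fin.exists_fin_succ, Fin.exists_fin_one, eq_comm]
  rw [himg] at h1
  exact h1

lemma KEY (hB : B.IsHermitian) (δ : Finset (Fin n)) (hd : pminor B δ < 0)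
    {t u : Fin n} (ht : t ∉ δ) (hu : u ∉ δ) (htu : t ≠ u)
    (hP : pminor B (δ ∪ {t, u}) ≤ 0) :
    0 ≤ pminor B (δ ∪ {t}) * pminor B (δ ∪ {u}) ∧
    (pminor B (δ ∪ {u}) = 0 →
      pminor B (δ ∪ {t, u}) = 0 ∧ schurc B (fun i : δ => (i : Fin n)) t u = 0) := by
  have hdne : pminor B δ ≠ 0 := ne_of_lt hd
  have hunit : IsUnit (pminor B δ) := isUnit_iff_ne_zero.2 hdne
  set e := fun i : δ => (i : Fin n) with he
  set x := schurc B e t u with hx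
  have hstar : schurc B e u t = star x := (schurc_star B hB e t u).symm
  have key : pminor B (δ ∪ {t}) * pminor B (δ ∪ {u})
      = pminor B δ * pminor B (δ ∪ {t, u}) + (pminor B δ * pminor B δ) * (x * star x) := by
    rw [KL1 B δ hunit ht, KL1 B δ hunit hu, KL2 B δ hunit ht hu htu, hstar]
    ring
  have t1 : 0 ≤ pminor B δ * pminor B (δ ∪ {t, u}) := by
    have := mul_nonneg (neg_nonneg.2 hd.le) (neg_nonneg.2 hP)
    rwa [neg_mul_neg] at this
  have t2 : 0 ≤ (pminor B δ * pminor B δ) * (x * star x) :=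
    mul_nonneg (mul_pos_of_neg_of_neg hd hd).le (mul_star_self_nonneg x)
  refine ⟨key ▸ add_nonneg t1 t2, fun h0 => ?_⟩
  rw [h0, mul_zero] at key
  obtain ⟨e1, e2⟩ := (add_eq_zero_iff_of_nonneg t1 t2).1 key.symm
  constructor
  · exact (mul_eq_zero.1 e1).resolve_left hdne
  · have hxx : x * star x = 0 :=
      (mul_eq_zero.1 e2).resolve_left (mul_ne_zero hdne hdne)
    simpa using hxx

lemma endgame (hB : B.IsHermitian) (α β : Finset (Fin n)) (hcard : α.card = β.card)
    (hp : 0 < pminor B α)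
    (hT : ∀ u w : Fin n, u ∈ β \ α → w ∈ β \ α →
      schurc B (fun i : α => (i : Fin n)) u w = 0) :
    0 ≤ pminor B β := by
  classical
  set U : Finset (Fin n) := β \ α with hU
  set cα : α → Fin n := fun i => (i : Fin n) with hcα
  set cU : U → Fin n := fun i => (i : Fin n) with hcU
  set A : Matrix α α ℂ := B.submatrix cα cα with hA
  have hdetA : A.det = pminor B α := rfl
  have hAunit : IsUnit A.det := by rw [hdetA]; exact isUnit_iff_ne_zero.2 (ne_of_gt hp)
  have hAherm : A.IsHermitian := by
    unfold Matrix.IsHermitian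
    rw [Matrix.conjTranspose_submatrix, hB.eq]
  set Cm : Matrix α U ℂ := B.submatrix cα cU with hCm
  have hCmH : Cmᴴ = B.submatrix cU cα := by
    rw [hCm, Matrix.conjTranspose_submatrix, hB.eq]
  set P : Matrix α (α ⊕ U) ℂ := fromCols 1 (A⁻¹ * Cm) with hP
  set h : α ⊕ U → Fin n := Sum.elim cα cU with hh
  have hfact : Pᴴ * (A * P) = B.submatrix h h := by
    have hAP : A * P = fromCols A Cm := by
      rw [hP, mul_fromCols, mul_one, Matrix.mul_nonsing_inv_cancel_left _ _ hAunit]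
    have hPH : Pᴴ = fromRows 1 (A⁻¹ * Cm)ᴴ := by
      rw [hP, conjTranspose_fromCols_eq_fromRows_conjTranspose, conjTranspose_one]
    have hX21 : (A⁻¹ * Cm)ᴴ * A = B.submatrix cU cα := by
      rw [Matrix.conjTranspose_mul, hAherm.inv.eq, Matrix.mul_assoc,
        Matrix.nonsing_inv_mul _ hAunit, Matrix.mul_one, hCmH]
    have hX22 : (A⁻¹ * Cm)ᴴ * Cm = B.submatrix cU cU := by
      rw [Matrix.conjTranspose_mul, hAherm.inv.eq]
      ext u w
      have hT0 := hT (cU u) (cU w) u.2 w.2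
      simp only [schurc] at hT0
      rw [← hA, sub_eq_zero] at hT0
      have hrhs : B.submatrix cU cU u w = B (cU u) (cU w) := rfl
      rw [hrhs, hT0, hCmH]
      simp only [Matrix.mul_apply, Matrix.submatrix_apply, dotProduct, Matrix.mulVec,
        dotProduct, Finset.sum_mul, Finset.mul_sum]
      rw [Finset.sum_comm]
      apply Finset.sum_congr rfl
      intro i _
      apply Finset.sum_congr rfl
      intro j _
      rw [show Cm j w = B (cα j) (cU w) from rfl]
      ring
    have hblock : B.submatrix h h
        = fromBlocks A Cm (B.submatrix cU cα) (B.submatrix cU cU) := by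
      ext (i | i) (j | j) <;> rfl
    rw [hAP, hPH, fromRows_mul, mul_fromCols, mul_fromCols, Matrix.one_mul,
      Matrix.one_mul, fromRows_fromCols_eq_fromBlocks, hX21, hX22, hblock]
  have eqv : (α : Type) ≃ (β : Type) :=
    Fintype.equivOfCardEq (by rw [Fintype.card_coe, Fintype.card_coe, hcard])
  set g : β → α ⊕ U := fun b =>
    if hb : (b : Fin n) ∈ α then Sum.inl ⟨b, hb⟩
    else Sum.inr ⟨b, Finset.mem_sdiff.2 ⟨b.2, hb⟩⟩ with hg
  have hgh : ∀ b : β, h (g b) = (b : Fin n) := by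
    intro b
    by_cases hb : (b : Fin n) ∈ α <;> simp [hg, hb, hh, hcα, hcU]
  set f : α → α ⊕ U := fun i => g (eqv i) with hf
  set Q : Matrix α α ℂ := P.submatrix id f with hQ
  have hsub : B.submatrix (fun b : β => (b : Fin n)) (fun b : β => (b : Fin n)) =
      ((B.submatrix h h).submatrix f f).submatrix eqv.symm eqv.symm := by
    ext i j
    simp [Matrix.submatrix_apply, hf, hgh]
  have hdet1 : pminor B β = ((B.submatrix h h).submatrix f f).det := by
    show (B.submatrix _ _).det = _
    rw [hsub, Matrix.det_submatrix_equiv_self]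
  have hdet2 : ((B.submatrix h h).submatrix f f).det
      = star Q.det * (A.det * Q.det) := by
    rw [← hfact]
    have e1 : (Pᴴ * (A * P)).submatrix f f
        = Pᴴ.submatrix f (id : α → α) * ((A * P).submatrix (id : α → α) f) := by
      rw [← Matrix.submatrix_mul_equiv (Pᴴ) (A * P) f (Equiv.refl α) f]
      rfl
    have e2 : (A * P).submatrix (id : α → α) f = A * Q := by
      rw [← Matrix.submatrix_mul_equiv A P (id : α → α) (Equiv.refl α) f]
      rfl
    have e3 : Pᴴ.submatrix f (id : α → α) = Qᴴ := by
      rw [hQ, ← Matrix.conjTranspose_submatrix]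
    rw [e1, e2, e3, Matrix.det_mul, Matrix.det_mul, Matrix.det_conjTranspose]
  rw [hdet1, hdet2, hdetA]
  have hfin : star Q.det * (pminor B α * Q.det) = pminor B α * (star Q.det * Q.det) := by ring
  rw [hfin]
  exact mul_nonneg hp.le (star_mul_self_nonneg Q.det)

end ForbiddenSepr

open ForbiddenSepr Matrix in
/-- The sequence A⁻S*S⁻ is forbidden for Hermitian matrices. -/
theorem forbidden_AminusSstarSminus {n : ℕ} (B : Matrix (Fin n) (Fin n) ℂ) (hB : B.IsHermitian)
    (k : ℕ) (hk2 : 2 ≤ k) (hkn : k ≤ n - 1)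
    (hAminus : ∀ α : Finset (Fin n), α.card = k - 1 → pminor B α < 0)
    (hpos : ∃ α : Finset (Fin n), α.card = k ∧ 0 < pminor B α)
    (hneg : ∃ α : Finset (Fin n), α.card = k ∧ pminor B α < 0)
    (hzero : ∃ α : Finset (Fin n), α.card = k ∧ pminor B α = 0)
    (hnonpos' : ∀ α : Finset (Fin n), α.card = k + 1 → pminor B α ≤ 0)
    (hzero' : ∃ α : Finset (Fin n), α.card = k + 1 ∧ pminor B α = 0)
    (hneg' : ∃ α : Finset (Fin n), α.card = k + 1 ∧ pminor B α < 0) :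
    False := by
  classical
  obtain ⟨β, hβk, hβneg⟩ := hneg
  -- choose a positive k-minor at minimal distance from β
  set S : Finset (Finset (Fin n)) :=
    Finset.univ.filter (fun γ => γ.card = k ∧ 0 < pminor B γ) with hSdef
  have hSne : S.Nonempty := by
    obtain ⟨γ, hγk, hγpos⟩ := hpos
    exact ⟨γ, by simp [hSdef, hγk, hγpos]⟩
  obtain ⟨α, hαS, hmin⟩ := S.exists_min_image (fun γ => (γ \ β).card) hSne
  have hαk : α.card = k := by simpa [hSdef] using (Finset.mem_filter.1 hαS).2.1
  have hαpos : 0 < pminor B α := by simpa [hSdef] using (Finset.mem_filter.1 hαS).2.2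
  -- α ≠ β, get t₀ ∈ α \ β
  have hne : (α \ β).Nonempty := by
    rw [Finset.sdiff_nonempty]
    intro hsub
    have heq : α = β := Finset.eq_of_subset_of_card_le hsub (by omega)
    rw [heq] at hαpos
    exact absurd hβneg (lt_asymm hαpos)
  obtain ⟨t₀, ht₀⟩ := hne
  have ht₀α : t₀ ∈ α := (Finset.mem_sdiff.1 ht₀).1
  have ht₀β : t₀ ∉ β := (Finset.mem_sdiff.1 ht₀).2
  set δ : Finset (Fin n) := α.erase t₀ with hδdef
  have hδcard : δ.card = k - 1 := by rw [hδdef, Finset.card_erase_of_mem ht₀α, hαk]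
  have hδneg : pminor B δ < 0 := hAminus δ hδcard
  have hδne : pminor B δ ≠ 0 := ne_of_lt hδneg
  have hδunit : IsUnit (pminor B δ) := isUnit_iff_ne_zero.2 hδne
  have ht₀δ : t₀ ∉ δ := Finset.notMem_erase t₀ α
  have hαδ : δ ∪ {t₀} = α := by
    rw [ForbiddenSepr.union_single, hδdef, Finset.insert_erase ht₀α]
  have hsubδ : δ ⊆ α := Finset.erase_subset t₀ α
  set U : Finset (Fin n) := β \ α with hUdef
  -- membership helpers
  have hUmem : ∀ u ∈ U, u ∈ β ∧ u ∉ α ∧ u ∉ δ ∧ u ≠ t₀ := by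
    intro u hu
    obtain ⟨h1, h2⟩ := Finset.mem_sdiff.1 hu
    exact ⟨h1, h2, fun h => h2 (hsubδ h), fun h => h2 (h ▸ ht₀α)⟩
  -- card facts for (k+1)-sets of the form δ ∪ {x, y}
  have hcard2 : ∀ x y : Fin n, x ∉ δ → y ∉ δ → x ≠ y →
      (δ ∪ ({x, y} : Finset (Fin n))).card = k + 1 := by
    intro x y hx hy hxy
    have hdisj : Disjoint δ ({x, y} : Finset (Fin n)) := by
      rw [Finset.disjoint_right]
      intro a ha
      rcases Finset.mem_insert.1 ha with rfl | ha'
      · exact hx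
      · rw [Finset.mem_singleton.1 ha']; exact hy
    rw [Finset.card_union_of_disjoint hdisj, hδcard,
      Finset.card_insert_of_notMem (by simp [hxy]), Finset.card_singleton]
    omega
  -- Step 1 : all first-kind hybrids vanish
  have hq : ∀ u ∈ U, pminor B (δ ∪ {u}) = 0 := by
    intro u hu
    obtain ⟨huβ, huα, huδ, hut₀⟩ := hUmem u hu
    have hP : pminor B (δ ∪ {t₀, u}) ≤ 0 :=
      hnonpos' _ (hcard2 t₀ u ht₀δ huδ (Ne.symm hut₀))
    obtain ⟨hprod, -⟩ := KEY B hB δ hδneg ht₀δ huδ (Ne.symm hut₀) hP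
    rw [hαδ] at hprod
    have hq0 : 0 ≤ pminor B (δ ∪ {u}) := cancel_pos_mul _ _ hαpos hprod
    rcases lt_or_eq_of_le hq0 with hlt | heq
    · exfalso
      have hmemS : (δ ∪ {u}) ∈ S := by
        have hcard1 : (δ ∪ {u}).card = k := by
          rw [ForbiddenSepr.union_single, Finset.card_insert_of_notMem huδ, hδcard]
          omega
        rw [hSdef, Finset.mem_filter]; exact ⟨Finset.mem_univ _, hcard1, hlt⟩
      have hminle := hmin _ hmemS
      have hssd : (δ ∪ {u}) \ β = (α \ β).erase t₀ := by
        rw [ForbiddenSepr.union_single, Finset.insert_sdiff_of_mem _ huβ, hδdef,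
          Finset.erase_sdiff_comm]
      have h1 : ((δ ∪ {u}) \ β).card = (α \ β).card - 1 := by
        rw [hssd, Finset.card_erase_of_mem ht₀]
      have h2 : 0 < (α \ β).card := Finset.card_pos.2 ⟨t₀, ht₀⟩
      omega
    · exact heq.symm
  -- Step 2 : schur complement entries over base δ vanish on U and towards t₀
  have hx : ∀ u ∈ U, schurc B (fun i : δ => (i : Fin n)) t₀ u = 0 ∧
      pminor B (δ ∪ {t₀, u}) = 0 := by
    intro u hu
    obtain ⟨huβ, huα, huδ, hut₀⟩ := hUmem u hu
    have hP : pminor B (δ ∪ {t₀, u}) ≤ 0 :=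
      hnonpos' _ (hcard2 t₀ u ht₀δ huδ (Ne.symm hut₀))
    obtain ⟨-, himpl⟩ := KEY B hB δ hδneg ht₀δ huδ (Ne.symm hut₀) hP
    obtain ⟨hz, hx0⟩ := himpl (hq u hu)
    exact ⟨hx0, hz⟩
  have hxuw : ∀ u ∈ U, ∀ w ∈ U, u ≠ w →
      schurc B (fun i : δ => (i : Fin n)) u w = 0 := by
    intro u hu w hw huw
    obtain ⟨-, -, huδ, -⟩ := hUmem u hu
    obtain ⟨-, -, hwδ, -⟩ := hUmem w hw
    have hP : pminor B (δ ∪ {u, w}) ≤ 0 := hnonpos' _ (hcard2 u w huδ hwδ huw)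
    obtain ⟨-, himpl⟩ := KEY B hB δ hδneg huδ hwδ huw hP
    exact (himpl (hq w hw)).2
  have hxdiag : ∀ u ∈ U, schurc B (fun i : δ => (i : Fin n)) u u = 0 := by
    intro u hu
    obtain ⟨-, -, huδ, -⟩ := hUmem u hu
    have := KL1 B δ hδunit huδ
    rw [hq u hu] at this
    exact ((mul_eq_zero.1 this.symm).resolve_left hδne)
  have hxut₀ : ∀ u ∈ U, schurc B (fun i : δ => (i : Fin n)) u t₀ = 0 := by
    intro u hu
    have := schurc_star B hB (fun i : δ => (i : Fin n)) t₀ u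
    rw [(hx u hu).1] at this
    rw [← this]
    simp
  -- Step 3 : the (k+2)-minors δ ∪ {t₀,u,w} vanish
  have h3 : ∀ u ∈ U, ∀ w ∈ U, u ≠ w → pminor B (δ ∪ {t₀, u, w}) = 0 := by
    intro u hu w hw huw
    obtain ⟨-, -, huδ, hut₀⟩ := hUmem u hu
    obtain ⟨-, -, hwδ, hwt₀⟩ := hUmem w hw
    rw [KL3 B δ hδunit ht₀δ huδ hwδ (Ne.symm hut₀) (Ne.symm hwt₀) huw]
    have hrow : (Matrix.of fun i j : Fin 3 =>
        schurc B (fun i : δ => (i : Fin n)) (![t₀, u, w] i) (![t₀, u, w] j)).det = 0 := by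
      apply Matrix.det_eq_zero_of_row_eq_zero 1
      intro j
      fin_cases j
      · simpa using hxut₀ u hu
      · simpa using hxdiag u hu
      · simpa using hxuw u hu w hw huw
    rw [hrow, mul_zero]
  -- Step 4 : schur complement over base α vanishes on U × U
  have hαne : pminor B α ≠ 0 := ne_of_gt hαpos
  have hαunit : IsUnit (pminor B α) := isUnit_iff_ne_zero.2 hαne
  have hTdiag : ∀ u ∈ U, schurc B (fun i : α => (i : Fin n)) u u = 0 := by
    intro u hu
    obtain ⟨-, huα, huδ, hut₀⟩ := hUmem u hu
    have hset : α ∪ {u} = δ ∪ {t₀, u} := by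
      rw [← hαδ, Finset.union_assoc, ForbiddenSepr.union_pair]
    have h1 := KL1 B α hαunit huα
    rw [hset, (hx u hu).2] at h1
    exact ((mul_eq_zero.1 h1.symm).resolve_left hαne)
  have hT : ∀ u w : Fin n, u ∈ U → w ∈ U →
      schurc B (fun i : α => (i : Fin n)) u w = 0 := by
    intro u w hu hw
    rcases eq_or_ne u w with rfl | huw
    · exact hTdiag u hu
    obtain ⟨-, huα, huδ, hut₀⟩ := hUmem u hu
    obtain ⟨-, hwα, hwδ, hwt₀⟩ := hUmem w hw
    have hset : α ∪ {u, w} = δ ∪ {t₀, u, w} := by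
      rw [← hαδ, Finset.union_assoc, ForbiddenSepr.union_triple]
    have h2 := KL2 B α hαunit huα hwα huw
    rw [hset, h3 u hu w hw huw, hTdiag u hu, hTdiag w hw] at h2
    have hstar : schurc B (fun i : α => (i : Fin n)) w u
        = star (schurc B (fun i : α => (i : Fin n)) u w) :=
      (schurc_star B hB _ u w).symm
    rw [hstar] at h2
    set y := schurc B (fun i : α => (i : Fin n)) u w with hy
    have h4 : pminor B α * (y * star y) = 0 := by
      rw [show pminor B α * (y * star y) = -(pminor B α * (0 * 0 - y * star y)) by ring, ← h2]
      ring
    have h5 : y * star y = 0 := (mul_eq_zero.1 h4).resolve_left hαne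
    simpa using h5
  -- Endgame : pminor β must be nonnegative, contradiction
  have hfin : 0 ≤ pminor B β :=
    endgame B hB α β (by rw [hαk, hβk]) hαpos hT
  exact absurd (lt_of_le_of_lt hfin hβneg) (lt_irrefl 0)
end
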